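/- arXiv:1202.2325 — 6 statements merged into one kernel-verified Lean document; each statement's English description precedes it below -/
import Mathlib

section
/- (Proposition 3.2: the character χ^{(2n-1,1)} occurs with multiplicity 1 in Ind_C^{S_{2n}} 1_C.) Let n ≥ 2, let σ ∈ Equiv.Perm (Fin (2*n)) be the n-cycle with σ(i) = i+1 mod n for i < n and σ(i) = i for i ≥ n, and let C = Subgroup.centralizer {σ}. Then Σ_{τ ∈ C} (number of fixed points of τ in Fin (2*n)) = 2 · n · n!. -/
open scoped Classical

open Finset Equiv

namespace Prop32Y

def elow (n : ℕ) : {i : Fin (2 * n) // (i : ℕ) < n} ≃ Fin n where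
  toFun x := ⟨(x.1 : ℕ), x.2⟩
  invFun j := ⟨⟨(j : ℕ), by have := j.isLt; omega⟩, j.isLt⟩
  left_inv x := by ext; simp
  right_inv j := by ext; simp

def eupp (n : ℕ) : {i : Fin (2 * n) // n ≤ (i : ℕ)} ≃ Fin n where
  toFun x := ⟨(x.1 : ℕ) - n, by have := x.1.isLt; have := x.2; omega⟩
  invFun j := ⟨⟨n + (j : ℕ), by have := j.isLt; omega⟩, by simp⟩
  left_inv x := by
    ext
    simp only []
    have := x.2
    omega
  right_inv j := by
    ext
    simp only []
    omega

lemma mod_eq_self_iff {n i k : ℕ} (hi : i < n) (hk : k < n) : (i + k) % n = i ↔ k = 0 := by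
  constructor
  · intro h
    rcases lt_or_ge (i + k) n with h1 | h1
    · rw [Nat.mod_eq_of_lt h1] at h; omega
    · rw [Nat.mod_eq_sub_mod h1, Nat.mod_eq_of_lt (by omega)] at h; omega
  · rintro rfl; simpa using Nat.mod_eq_of_lt hi

noncomputable def extP {n : ℕ} (π : Equiv.Perm {i : Fin (2 * n) // n ≤ (i : ℕ)}) :
    Equiv.Perm (Fin (2 * n)) :=
  π.extendDomain (Equiv.refl _)

lemma extP_low {n : ℕ} (π : Equiv.Perm {i : Fin (2 * n) // n ≤ (i : ℕ)}) {i : Fin (2 * n)}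
    (h : (i : ℕ) < n) : extP π i = i :=
  Equiv.Perm.extendDomain_apply_not_subtype _ _ (by omega)

lemma extP_high {n : ℕ} (π : Equiv.Perm {i : Fin (2 * n) // n ≤ (i : ℕ)}) {i : Fin (2 * n)}
    (h : n ≤ (i : ℕ)) : extP π i = ↑(π ⟨i, h⟩) := by
  simpa [extP] using Equiv.Perm.extendDomain_apply_subtype π (Equiv.refl _) h

lemma sum_fix_perm (γ : Type) [Fintype γ] [DecidableEq γ] [Nonempty γ] :
    ∑ π : Equiv.Perm γ, (Finset.univ.filter fun x => π x = x).card
      = Fintype.card (Equiv.Perm γ) := by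
  have hb := MulAction.sum_card_fixedBy_eq_card_orbits_mul_card_group (Equiv.Perm γ) γ
  have hΩ : Fintype.card (Quotient (MulAction.orbitRel (Equiv.Perm γ) γ)) = 1 := by
    rw [Fintype.card_eq_one_iff]
    obtain ⟨x0⟩ := ‹Nonempty γ›
    refine ⟨⟦x0⟧, fun y => ?_⟩
    induction y using Quotient.inductionOn with
    | h x => exact Quotient.sound ⟨Equiv.swap x0 x, by simp [Equiv.Perm.smul_def]⟩
  rw [hΩ, one_mul] at hb
  rw [← hb]
  refine Finset.sum_congr rfl fun π _ => ?_
  calc (Finset.univ.filter fun x => π x = x).card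
      = Fintype.card {x // π x = x} := (Fintype.card_subtype _).symm
    _ = Fintype.card (MulAction.fixedBy γ π) :=
        Fintype.card_congr (Equiv.subtypeEquivRight fun x => by
          simp [MulAction.mem_fixedBy, Equiv.Perm.smul_def])

section

variable {n : ℕ} (hn : 2 ≤ n) (σ : Equiv.Perm (Fin (2 * n)))
  (hσ : ∀ i : Fin (2 * n),
    ((σ i : ℕ) = if (i : ℕ) < n then ((i : ℕ) + 1) % n else (i : ℕ)))

include hσ

lemma sigma_fix {i : Fin (2 * n)} (h : n ≤ (i : ℕ)) : σ i = i := by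
  have := hσ i
  rw [if_neg (by omega)] at this
  exact Fin.ext this

lemma pow_fix (k : ℕ) {i : Fin (2 * n)} (h : n ≤ (i : ℕ)) : (σ ^ k) i = i := by
  induction k with
  | zero => rfl
  | succ m ih =>
    rw [pow_succ, Equiv.Perm.mul_apply, sigma_fix σ hσ h, ih]

include hn

lemma pow_lower (k : ℕ) {i : Fin (2 * n)} (h : (i : ℕ) < n) :
    (((σ ^ k) i : Fin (2 * n)) : ℕ) = ((i : ℕ) + k) % n := by
  induction k with
  | zero => simp [Nat.mod_eq_of_lt h]
  | succ m ih =>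
    have hm : (((σ ^ m) i : Fin (2 * n)) : ℕ) < n := by
      rw [ih]; exact Nat.mod_lt _ (by omega)
    rw [pow_succ', Equiv.Perm.mul_apply, hσ ((σ ^ m) i), if_pos hm, ih,
      Nat.mod_add_mod, ← add_assoc]

lemma sigma_ne {i : Fin (2 * n)} (h : (i : ℕ) < n) : σ i ≠ i := by
  intro he
  have := hσ i
  rw [if_pos h, he] at this
  have h2 := (mod_eq_self_iff h (show 1 < n by omega)).mp this.symm
  omega

lemma fix_iff {i : Fin (2 * n)} : σ i = i ↔ n ≤ (i : ℕ) := by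
  constructor
  · intro h
    by_contra hc
    exact sigma_ne hn σ hσ (by omega) h
  · exact sigma_fix σ hσ

lemma ext_comm (π : Equiv.Perm {i : Fin (2 * n) // n ≤ (i : ℕ)}) :
    σ * extP π = extP π * σ := by
  apply Equiv.ext; intro i
  rcases lt_or_ge (i : ℕ) n with h | h
  · have hσi : ((σ i : Fin (2 * n)) : ℕ) < n := by
      rw [hσ i, if_pos h]; exact Nat.mod_lt _ (by omega)
    rw [Equiv.Perm.mul_apply, Equiv.Perm.mul_apply, extP_low π h, extP_low π hσi]
  · have h1 : σ i = i := sigma_fix σ hσ h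
    rw [Equiv.Perm.mul_apply, Equiv.Perm.mul_apply, h1, extP_high π h]
    exact sigma_fix σ hσ (π ⟨i, h⟩).2

lemma F_mem (k : Fin n) (π : Equiv.Perm {i : Fin (2 * n) // n ≤ (i : ℕ)}) :
    σ ^ (k : ℕ) * extP π ∈ Subgroup.centralizer {σ} := by
  rw [Subgroup.mem_centralizer_singleton_iff]
  rw [mul_assoc, ← ext_comm hn σ hσ π, ← mul_assoc, ← pow_succ, pow_succ', mul_assoc]

lemma F_inj : Function.Injective
    (fun x : Fin n × Equiv.Perm {i : Fin (2 * n) // n ≤ (i : ℕ)} =>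
      σ ^ ((x.1 : ℕ)) * extP x.2) := by
  have i0 : Fin (2 * n) := ⟨0, by omega⟩
  rintro ⟨k, π⟩ ⟨k', π'⟩ h
  simp only [] at h
  have e0 : ∀ (k : Fin n) (π : Equiv.Perm {i : Fin (2 * n) // n ≤ (i : ℕ)}),
      (((σ ^ (k : ℕ) * extP π) (⟨0, by omega⟩ : Fin (2 * n))) : ℕ) = (k : ℕ) := by
    intro k π
    rw [Equiv.Perm.mul_apply, extP_low π (by simp; omega),
      pow_lower hn σ hσ _ (by simp; omega)]
    simp [Nat.mod_eq_of_lt k.isLt]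
  have hk : k = k' := by
    have h1 := e0 k π
    rw [h, e0 k' π'] at h1
    exact Fin.ext h1.symm
  subst hk
  have hπ : extP π = extP π' := mul_left_cancel h
  have : π = π' := by
    apply Equiv.ext
    rintro ⟨i, hi⟩
    have h1 : extP π i = extP π' i := by rw [hπ]
    rw [extP_high π hi, extP_high π' hi] at h1
    exact Subtype.ext h1
  rw [this]

lemma F_surj (τ : Equiv.Perm (Fin (2 * n))) (hτ : τ ∈ Subgroup.centralizer {σ}) :
    ∃ x : Fin n × Equiv.Perm {i : Fin (2 * n) // n ≤ (i : ℕ)},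
      σ ^ ((x.1 : ℕ)) * extP x.2 = τ := by
  have hc : τ * σ = σ * τ := Subgroup.mem_centralizer_singleton_iff.mp hτ
  have hcomm : Commute τ σ := hc
  have hswap : ∀ i, σ (τ i) = τ (σ i) := by
    intro i
    rw [← Equiv.Perm.mul_apply, ← hc, Equiv.Perm.mul_apply]
  have hup : ∀ i : Fin (2 * n), n ≤ (i : ℕ) → n ≤ ((τ i : Fin (2 * n)) : ℕ) := by
    intro i h
    rw [← fix_iff hn σ hσ, hswap i, sigma_fix σ hσ h]
  have hlo : ∀ i : Fin (2 * n), (i : ℕ) < n → ((τ i : Fin (2 * n)) : ℕ) < n := by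
    intro i h
    by_contra hc2
    have h2 : n ≤ ((τ i : Fin (2 * n)) : ℕ) := by omega
    have h3 : τ (σ i) = τ i := by rw [← hswap i, sigma_fix σ hσ h2]
    exact sigma_ne hn σ hσ h (τ.injective h3)
  have hpowswap : ∀ (m : ℕ) (j : Fin (2 * n)), τ ((σ ^ m) j) = (σ ^ m) (τ j) := by
    intro m j
    rw [← Equiv.Perm.mul_apply, (hcomm.pow_right m).eq, Equiv.Perm.mul_apply]
  set i0 : Fin (2 * n) := ⟨0, by omega⟩ with hi0def
  have h0 : (i0 : ℕ) < n := show (0 : ℕ) < n by omega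
  set k : Fin n := ⟨((τ i0 : Fin (2 * n)) : ℕ), hlo _ h0⟩ with hkdef
  have hsub : ∀ i : Fin (2 * n), n ≤ (i : ℕ) ↔ n ≤ ((τ i : Fin (2 * n)) : ℕ) := by
    intro i
    refine ⟨hup i, fun h => ?_⟩
    by_contra hc2
    have := hlo i (by omega)
    omega
  refine ⟨(k, τ.subtypePerm (fun i => (hsub i).symm)), ?_⟩
  apply Equiv.ext; intro i
  rcases lt_or_ge (i : ℕ) n with h | h
  · rw [Equiv.Perm.mul_apply, extP_low _ h]
    apply Fin.ext
    rw [pow_lower hn σ hσ _ h]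
    have hi0 : (σ ^ (i : ℕ)) i0 = i := by
      apply Fin.ext
      rw [pow_lower hn σ hσ _ h0]
      simpa [hi0def] using Nat.mod_eq_of_lt h
    have h1 : τ i = (σ ^ (i : ℕ)) (τ i0) := by
      conv_lhs => rw [← hi0]
      exact hpowswap _ _
    have h2 : ((τ i : Fin (2 * n)) : ℕ) = (((τ i0 : Fin (2 * n)) : ℕ) + (i : ℕ)) % n := by
      rw [h1]; exact pow_lower hn σ hσ _ (hlo _ h0)
    rw [h2, Nat.add_comm ((τ i0 : Fin (2 * n)) : ℕ) (i : ℕ)]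
  · rw [Equiv.Perm.mul_apply, extP_high _ h]
    have h1 : (↑((τ.subtypePerm (fun i : Fin (2 * n) => (hsub i).symm)) (⟨i, h⟩ : {i : Fin (2 * n) // n ≤ (i : ℕ)})) : Fin (2 * n)) = τ i := rfl
    rw [h1]
    exact pow_fix σ hσ _ (hup i h)

lemma fix_card (k : Fin n) (π : Equiv.Perm {i : Fin (2 * n) // n ≤ (i : ℕ)}) :
    (Finset.univ.filter fun i : Fin (2 * n) => (σ ^ (k : ℕ) * extP π) i = i).card
      = (if (k : ℕ) = 0 then n else 0)
        + (Finset.univ.filter fun j : {i : Fin (2 * n) // n ≤ (i : ℕ)} => π j = j).card := by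
  have hsplit : (Finset.univ.filter fun i : Fin (2 * n) => (σ ^ (k : ℕ) * extP π) i = i)
      = (Finset.univ.filter fun i : Fin (2 * n) =>
          ((σ ^ (k : ℕ) * extP π) i = i ∧ (i : ℕ) < n))
        ∪ (Finset.univ.filter fun i : Fin (2 * n) =>
          ((σ ^ (k : ℕ) * extP π) i = i ∧ n ≤ (i : ℕ))) := by
    ext i
    simp only [Finset.mem_filter, Finset.mem_union, Finset.mem_univ, true_and]
    constructor
    · intro hp
      rcases lt_or_ge (i : ℕ) n with h | h
      · exact Or.inl ⟨hp, h⟩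
      · exact Or.inr ⟨hp, h⟩
    · rintro (⟨hp, _⟩ | ⟨hp, _⟩) <;> exact hp
  rw [hsplit, Finset.card_union_of_disjoint]
  swap
  · rw [Finset.disjoint_left]
    intro a ha hb
    simp only [Finset.mem_filter] at ha hb
    omega
  congr 1
  · by_cases hk : (k : ℕ) = 0
    · rw [if_pos hk]
      have heq : (Finset.univ.filter fun i : Fin (2 * n) =>
            ((σ ^ (k : ℕ) * extP π) i = i ∧ (i : ℕ) < n))
          = Finset.univ.filter (fun i : Fin (2 * n) => (i : ℕ) < n) := by
        ext i
        simp only [Finset.mem_filter, Finset.mem_univ, true_and, and_iff_right_iff_imp]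
        intro h
        rw [Equiv.Perm.mul_apply, extP_low π h, hk, pow_zero]
        rfl
      rw [heq, ← Fintype.card_subtype, Fintype.card_congr (elow n), Fintype.card_fin]
    · rw [if_neg hk, Finset.card_eq_zero, Finset.filter_eq_empty_iff]
      intro i _
      rintro ⟨hp, h⟩
      rw [Equiv.Perm.mul_apply, extP_low π h] at hp
      have h2 := congrArg Fin.val hp
      rw [pow_lower hn σ hσ _ h] at h2
      exact hk ((mod_eq_self_iff h k.isLt).mp h2)
  · refine Finset.card_bij'
      (fun a ha => (⟨a, (Finset.mem_filter.mp ha).2.2⟩ : {i : Fin (2 * n) // n ≤ (i : ℕ)}))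
      (fun b _ => (b : Fin (2 * n))) ?_ ?_ ?_ ?_
    · intro a ha
      obtain ⟨-, hp, hu⟩ := Finset.mem_filter.mp ha
      simp only [Finset.mem_filter, Finset.mem_univ, true_and]
      rw [Equiv.Perm.mul_apply, extP_high π hu,
        pow_fix σ hσ _ (π ⟨a, hu⟩).2] at hp
      exact Subtype.ext hp
    · intro b hb
      simp only [Finset.mem_filter, Finset.mem_univ, true_and] at hb ⊢
      refine ⟨?_, b.2⟩
      rw [Equiv.Perm.mul_apply, extP_high π b.2]
      have hb2 : (⟨(b : Fin (2 * n)), b.2⟩ : {i : Fin (2 * n) // n ≤ (i : ℕ)}) = b :=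
        Subtype.ext rfl
      rw [hb2, hb]
      exact pow_fix σ hσ _ b.2
    · intro a ha; rfl
    · intro b hb; rfl

end

end Prop32Y

open Prop32Y in
open scoped Classical in
/-- Proposition 3.2: `χ^{(2n-1,1)}` occurs with multiplicity 1 in `Ind_C^{S_{2n}} 1_C`,
expressed as: the total number of fixed points of elements of `C` is `2 ⬝ n ⬝ n!`. -/
theorem fixed_points_sum (n : ℕ) (hn : 2 ≤ n) (σ : Equiv.Perm (Fin (2 * n)))
    (hσ : ∀ i : Fin (2 * n),
      ((σ i : ℕ) = if (i : ℕ) < n then ((i : ℕ) + 1) % n else (i : ℕ))) :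
    ∑ τ : Subgroup.centralizer {σ},
      (Finset.univ.filter
        (fun i : Fin (2 * n) => (τ : Equiv.Perm (Fin (2 * n))) i = i)).card
      = 2 * n * n.factorial := by
  haveI : NeZero n := ⟨by omega⟩
  haveI : Nonempty {i : Fin (2 * n) // n ≤ (i : ℕ)} :=
    ⟨⟨⟨n, by omega⟩, le_refl n⟩⟩
  let G : Fin n × Equiv.Perm {i : Fin (2 * n) // n ≤ (i : ℕ)} →
      Subgroup.centralizer {σ} :=
    fun x => ⟨σ ^ ((x.1 : ℕ)) * extP x.2, F_mem hn σ hσ x.1 x.2⟩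
  have hGbij : Function.Bijective G := by
    constructor
    · intro a b hab
      exact F_inj hn σ hσ (congrArg Subtype.val hab)
    · rintro ⟨τ, hτ⟩
      obtain ⟨x, hx⟩ := F_surj hn σ hσ τ hτ
      exact ⟨x, Subtype.ext hx⟩
  rw [← Fintype.sum_bijective G hGbij
    (fun x => (Finset.univ.filter
      (fun i : Fin (2 * n) => (σ ^ ((x.1 : ℕ)) * extP x.2) i = i)).card)
    (fun τ => (Finset.univ.filter
      (fun i : Fin (2 * n) => (τ : Equiv.Perm (Fin (2 * n))) i = i)).card)
    (fun x => rfl)]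
  have hS : Fintype.card {i : Fin (2 * n) // n ≤ (i : ℕ)} = n := by
    rw [Fintype.card_congr (eupp n), Fintype.card_fin]
  have hPS : Fintype.card (Equiv.Perm {i : Fin (2 * n) // n ≤ (i : ℕ)}) = n.factorial := by
    rw [Fintype.card_perm, hS]
  have hfixsum : ∑ π : Equiv.Perm {i : Fin (2 * n) // n ≤ (i : ℕ)},
      (Finset.univ.filter fun j => π j = j).card = n.factorial := by
    rw [sum_fix_perm, hPS]
  calc ∑ x : Fin n × Equiv.Perm {i : Fin (2 * n) // n ≤ (i : ℕ)},
        (Finset.univ.filter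
          (fun i : Fin (2 * n) => (σ ^ ((x.1 : ℕ)) * extP x.2) i = i)).card
      = ∑ x : Fin n × Equiv.Perm {i : Fin (2 * n) // n ≤ (i : ℕ)},
          ((if (x.1 : ℕ) = 0 then n else 0)
            + (Finset.univ.filter fun j => x.2 j = j).card) :=
        Finset.sum_congr rfl (fun x _ => fix_card hn σ hσ x.1 x.2)
    _ = ∑ k : Fin n, ∑ π : Equiv.Perm {i : Fin (2 * n) // n ≤ (i : ℕ)},
          ((if (k : ℕ) = 0 then n else 0)
            + (Finset.univ.filter fun j => π j = j).card) := by rw [Fintype.sum_prod_type]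
    _ = ∑ k : Fin n, (n.factorial * (if (k : ℕ) = 0 then n else 0) + n.factorial) := by
        refine Finset.sum_congr rfl (fun k _ => ?_)
        rw [Finset.sum_add_distrib, Finset.sum_const, hfixsum, Finset.card_univ, hPS,
          smul_eq_mul]
    _ = n.factorial * (∑ k : Fin n, (if (k : ℕ) = 0 then n else 0)) + n * n.factorial := by
        rw [Finset.sum_add_distrib, Finset.sum_const, Finset.card_univ, Fintype.card_fin,
          ← Finset.mul_sum, smul_eq_mul]
    _ = n.factorial * n + n * n.factorial := by
        congr 1
        congr 1
        have h1 : ∀ k : Fin n, (if (k : ℕ) = 0 then n else 0)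
            = (if k = 0 then n else 0) :=
          fun k => if_congr ⟨fun h => Fin.ext h, fun h => by subst h; simp⟩ rfl rfl
        rw [Finset.sum_congr rfl (fun k _ => h1 k), Finset.sum_ite_eq' Finset.univ (0 : Fin n)]
        simp
    _ = 2 * n * n.factorial := by ring
end

section
/- (Proposition 3.3: the character χ^{(n,n)} occurs with multiplicity 1 in Ind_C^{S_{2n}} 1_C.) Let n ≥ 2, let σ ∈ Equiv.Perm (Fin (2*n)) be the n-cycle with σ(i) = i+1 mod n for i < n and σ(i) = i for i ≥ n, and let C = Subgroup.centralizer {σ}. Then Σ_{τ ∈ C} (F n τ − F (n−1) τ) = n · n!. -/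
/-- `F k τ` is the number of `k`-element subsets of `Fin m` invariant under `τ`. -/
def F {m : ℕ} (k : ℕ) (τ : Equiv.Perm (Fin m)) : ℕ :=
  ((Finset.univ : Finset (Finset (Fin m))).filter
    (fun s => s.card = k ∧ s.image τ = s)).card

namespace ChiNN

open Equiv Finset

set_option linter.unusedSectionVars false

variable {α β : Type*} [Fintype α] [DecidableEq α] [Fintype β] [DecidableEq β]

/-- count of invariant `k`-subsets of `α` under `τ` -/
def cnt (k : ℕ) (τ : Equiv.Perm α) : ℕ :=
  ((Finset.univ : Finset (Finset α)).filter (fun s => s.card = k ∧ s.image τ = s)).card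

example {m k : ℕ} (τ : Equiv.Perm (Fin m)) : F k τ = cnt k τ := rfl

lemma image_eq_iff (τ : Equiv.Perm α) (t : Finset α) :
    t.image τ = t ↔ ∀ x, x ∈ t ↔ τ x ∈ t := by
  constructor
  · intro h x
    constructor
    · intro hx; rw [← h]; exact Finset.mem_image_of_mem _ hx
    · intro hx
      rw [← h] at hx
      obtain ⟨y, hy, hyx⟩ := Finset.mem_image.1 hx
      rwa [← τ.injective hyx]
  · intro h
    apply Finset.eq_of_subset_of_card_le
    · intro y hy
      obtain ⟨x, hx, rfl⟩ := Finset.mem_image.1 hy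
      exact (h x).1 hx
    · rw [Finset.card_image_of_injective _ τ.injective]

/-- permutations respecting `p` correspond to pairs -/
def stabEquiv (p : α → Prop) [DecidablePred p] :
    {π : Equiv.Perm α // ∀ x, p x ↔ p (π x)} ≃
      Equiv.Perm {x // p x} × Equiv.Perm {x // ¬ p x} where
  toFun π := (π.1.subtypePerm (fun x => (π.2 x).symm), π.1.subtypePerm (fun x => not_iff_not.2 (π.2 x).symm))
  invFun q := ⟨q.1.subtypeCongr q.2, by
    intro x
    by_cases h : p x
    · simp only [Perm.subtypeCongr.left_apply _ _ h]
      exact iff_of_true h (q.1 ⟨x, h⟩).2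
    · simp only [Perm.subtypeCongr.right_apply _ _ h]
      exact iff_of_false h (q.2 ⟨x, h⟩).2⟩
  left_inv π := by
    ext x
    by_cases h : p x
    · simp [Perm.subtypeCongr.left_apply _ _ h, Perm.subtypePerm_apply]
    · simp [Perm.subtypeCongr.right_apply _ _ h, Perm.subtypePerm_apply]
  right_inv q := by
    obtain ⟨q₁, q₂⟩ := q
    simp only [Prod.mk.injEq]
    constructor
    · ext x
      simp [Perm.subtypePerm_apply, Perm.subtypeCongr.left_apply q₁ q₂ x.2]
    · ext x
      simp [Perm.subtypePerm_apply, Perm.subtypeCongr.right_apply q₁ q₂ x.2]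

lemma card_stab (t : Finset α) :
    (Finset.univ.filter fun π : Equiv.Perm α => t.image π = t).card
      = t.card.factorial * (Fintype.card α - t.card).factorial := by
  have h1 : (Finset.univ.filter fun π : Equiv.Perm α => t.image π = t).card
      = Fintype.card {π : Equiv.Perm α // ∀ x, x ∈ t ↔ π x ∈ t} := by
    rw [Fintype.card_subtype]
    congr 1
    apply Finset.filter_congr
    intro π _
    exact image_eq_iff π t
  rw [h1, Fintype.card_congr (stabEquiv (fun x => x ∈ t)), Fintype.card_prod,
    Fintype.card_perm, Fintype.card_perm, Fintype.card_coe,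
    Fintype.card_subtype_compl, Fintype.card_coe]

lemma sum_cnt (b : ℕ) (hb : b ≤ Fintype.card α) :
    ∑ π : Equiv.Perm α, cnt b π = (Fintype.card α).factorial := by
  have step1 : ∑ π : Equiv.Perm α, cnt b π
      = ∑ t : Finset α,
          (Finset.univ.filter fun π : Equiv.Perm α => t.card = b ∧ t.image π = t).card := by
    unfold cnt
    simp_rw [Finset.card_filter]
    exact Finset.sum_comm
  have step2 : ∀ t : Finset α,
      (Finset.univ.filter fun π : Equiv.Perm α => t.card = b ∧ t.image π = t).card
        = if t.card = b then b.factorial * (Fintype.card α - b).factorial else 0 := by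
    intro t
    by_cases h : t.card = b
    · rw [if_pos h, ← h, ← card_stab t]
      congr 1
      apply Finset.filter_congr
      intro π _
      simp [h]
    · rw [if_neg h]
      rw [Finset.card_eq_zero, Finset.filter_eq_empty_iff]
      intro π _
      simp [h]
  rw [step1]
  simp_rw [step2]
  rw [← Finset.sum_filter, Finset.sum_const, smul_eq_mul]
  have h3 : (Finset.univ.filter fun t : Finset α => t.card = b)
      = (Finset.univ : Finset α).powersetCard b := by
    rw [Finset.powersetCard_eq_filter, Finset.powerset_univ]
  rw [h3, Finset.card_powersetCard, Finset.card_univ, ← mul_assoc,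
    Nat.choose_mul_factorial_mul_factorial hb]

lemma cnt_card (τ : Equiv.Perm α) : cnt (Fintype.card α) τ = 1 := by
  unfold cnt
  have : (Finset.univ.filter
      fun s : Finset α => s.card = Fintype.card α ∧ s.image τ = s) = {Finset.univ} := by
    ext s
    simp only [Finset.mem_filter, Finset.mem_univ, true_and, Finset.mem_singleton]
    constructor
    · rintro ⟨h1, _⟩; exact s.eq_univ_of_card h1
    · rintro rfl
      exact ⟨Finset.card_univ, Finset.image_univ_of_surjective τ.surjective⟩
  rw [this, Finset.card_singleton]

lemma image_sumCongr_disjSum (ρ : Equiv.Perm α) (π : Equiv.Perm β)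
    (u : Finset α) (v : Finset β) :
    (u.disjSum v).image (Equiv.sumCongr ρ π) = (u.image ρ).disjSum (v.image π) := by
  ext (x | x) <;> simp

lemma invariant_iff (ρ : Equiv.Perm α) (π : Equiv.Perm β) (s : Finset (α ⊕ β)) :
    s.image (Equiv.sumCongr ρ π) = s
      ↔ s.toLeft.image ρ = s.toLeft ∧ s.toRight.image π = s.toRight := by
  constructor
  · intro h
    have := h
    conv_lhs at this => rw [← s.toLeft_disjSum_toRight]
    rw [image_sumCongr_disjSum] at this
    conv_rhs at this => rw [← s.toLeft_disjSum_toRight]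
    exact Finset.disjSum_inj.mp this
  · rintro ⟨h1, h2⟩
    conv_lhs => rw [← s.toLeft_disjSum_toRight, image_sumCongr_disjSum, h1, h2]
    exact s.toLeft_disjSum_toRight

lemma cnt_sumCongr (ρ : Equiv.Perm α) (π : Equiv.Perm β) (k : ℕ) :
    cnt k (Equiv.sumCongr ρ π)
      = ∑ a ∈ Finset.range (k + 1), cnt a ρ * cnt (k - a) π := by
  classical
  have key : cnt k (Equiv.sumCongr ρ π)
      = ((Finset.univ ×ˢ Finset.univ).filter fun p : Finset α × Finset β =>
          (p.1.card + p.2.card = k) ∧ p.1.image ρ = p.1 ∧ p.2.image π = p.2).card := by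
    unfold cnt
    refine Finset.card_bij' (fun s _ => (s.toLeft, s.toRight))
        (fun p _ => p.1.disjSum p.2) ?_ ?_ ?_ ?_
    · intro s hs
      simp only [Finset.mem_filter, Finset.mem_univ, true_and] at hs ⊢
      rw [Finset.mem_product]
      refine ⟨⟨Finset.mem_univ _, Finset.mem_univ _⟩, ?_, ?_, ?_⟩
      · rw [Finset.card_toLeft_add_card_toRight, hs.1]
      · exact ((invariant_iff ρ π s).mp hs.2).1
      · exact ((invariant_iff ρ π s).mp hs.2).2
    · intro p hp
      simp only [Finset.mem_filter, Finset.mem_product] at hp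
      simp only [Finset.mem_filter, Finset.mem_univ, true_and]
      constructor
      · rw [Finset.card_disjSum]; exact hp.2.1
      · rw [image_sumCongr_disjSum, hp.2.2.1, hp.2.2.2]
    · intro s _; exact s.toLeft_disjSum_toRight
    · intro p _; simp
  rw [key,
    Finset.card_eq_sum_card_fiberwise
      (f := fun p : Finset α × Finset β => p.1.card) (t := Finset.range (k + 1)) ?hf]
  case hf =>
    intro p hp
    simp only [Finset.mem_coe, Finset.mem_filter] at hp
    obtain ⟨-, hc, -⟩ := hp
    show p.1.card ∈ Finset.range (k + 1)
    rw [Finset.mem_range, Nat.lt_succ_iff]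
    omega
  apply Finset.sum_congr rfl
  intro a ha
  rw [Finset.mem_range, Nat.lt_succ_iff] at ha
  have hsplit : (((Finset.univ ×ˢ Finset.univ).filter fun p : Finset α × Finset β =>
          (p.1.card + p.2.card = k) ∧ p.1.image ρ = p.1 ∧ p.2.image π = p.2).filter
        fun p => p.1.card = a)
      = ((Finset.univ.filter fun u : Finset α => u.card = a ∧ u.image ρ = u) ×ˢ
          (Finset.univ.filter fun v : Finset β => v.card = k - a ∧ v.image π = v)) := by
    rw [Finset.filter_filter, ← Finset.filter_product]
    apply Finset.filter_congr
    intro p _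
    constructor
    · rintro ⟨⟨hc, h1, h2⟩, hca⟩
      exact ⟨⟨hca, h1⟩, by omega, h2⟩
    · rintro ⟨⟨h1a, h1⟩, h2a, h2⟩
      exact ⟨⟨by omega, h1, h2⟩, h1a⟩
  rw [hsplit, Finset.card_product]
  rfl

section FinPart

variable (n : ℕ) [NeZero n]

/-- the base permutation on `Fin n ⊕ Fin n`: rotation on the left, identity on the right -/
def sig0 : Equiv.Perm (Fin n ⊕ Fin n) :=
  Equiv.sumCongr (Equiv.addRight (1 : Fin n)) (1 : Equiv.Perm (Fin n))

/-- parametrization of the centralizer -/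
def Phi (c : Fin n) (π : Equiv.Perm (Fin n)) : Equiv.Perm (Fin n ⊕ Fin n) :=
  Equiv.sumCongr (Equiv.addRight c) π

lemma phi_comm (c : Fin n) (π : Equiv.Perm (Fin n)) :
    sig0 n * Phi n c π = Phi n c π * sig0 n := by
  unfold sig0 Phi
  rw [Equiv.Perm.sumCongr_mul, Equiv.Perm.sumCongr_mul, one_mul, mul_one]
  congr 1
  ext x
  simp only [Equiv.Perm.mul_apply, Equiv.coe_addRight]
  exact congrArg Fin.val (add_right_comm x c 1)

variable {n}

lemma phi_inj : Function.Injective (fun p : Fin n × Equiv.Perm (Fin n) => Phi n p.1 p.2) := by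
  rintro ⟨c, π⟩ ⟨c', π'⟩ h
  simp only [Phi] at h
  have h1 := congrArg (fun g : Equiv.Perm (Fin n ⊕ Fin n) => g (Sum.inl 0)) h
  have h2 : ∀ x : Fin n,
      (Equiv.sumCongr (Equiv.addRight c) π) (Sum.inr x)
        = (Equiv.sumCongr (Equiv.addRight c') π') (Sum.inr x) := fun x => by rw [h]
  simp only [Equiv.sumCongr_apply, Sum.map_inl, Sum.map_inr, Equiv.coe_addRight,
    Sum.inl.injEq, Sum.inr.injEq, zero_add] at h1 h2
  refine Prod.ext h1 (Equiv.ext fun x => h2 x)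

lemma centralizer_struct (hn : 2 ≤ n) (τ : Equiv.Perm (Fin n ⊕ Fin n))
    (h : sig0 n * τ = τ * sig0 n) : ∃ c π, τ = Phi n c π := by
  have hpt : ∀ x, (sig0 n) (τ x) = τ ((sig0 n) x) := fun x => by
    have := congrArg (fun g : Equiv.Perm (Fin n ⊕ Fin n) => g x) h
    simpa [Equiv.Perm.mul_apply] using this
  have hone : (1 : Fin n) ≠ 0 := by
    intro h01
    have := congrArg Fin.val h01
    rw [Fin.val_one'] at this
    rw [Nat.mod_eq_of_lt (by omega)] at this
    simp at this
  -- τ sends inr to inr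
  have hπ' : ∀ x : Fin n, ∃ y, τ (Sum.inr x) = Sum.inr y := by
    intro x
    rcases hxy : τ (Sum.inr x) with y | y
    · exfalso
      have h1 := hpt (Sum.inr x)
      rw [hxy] at h1
      simp only [sig0, Equiv.sumCongr_apply, Sum.map_inl, Sum.map_inr,
        Equiv.coe_addRight, Equiv.Perm.coe_one, id_eq] at h1
      rw [hxy] at h1
      rw [Sum.inl.injEq] at h1
      exact hone (add_eq_left.mp h1)
    · exact ⟨y, rfl⟩
  have hρ' : ∀ x : Fin n, ∃ y, τ (Sum.inl x) = Sum.inl y := by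
    intro x
    rcases hxy : τ (Sum.inl x) with y | y
    · exact ⟨y, rfl⟩
    · exfalso
      have h1 := hpt (Sum.inl x)
      rw [hxy] at h1
      simp only [sig0, Equiv.sumCongr_apply, Sum.map_inl, Sum.map_inr,
        Equiv.coe_addRight, Equiv.Perm.coe_one, id_eq] at h1
      rw [← hxy] at h1
      have := τ.injective h1
      rw [Sum.inl.injEq] at this
      exact hone (left_eq_add.mp this)
  set π : Fin n → Fin n := fun x => Sum.elim (fun _ => 0) id (τ (Sum.inr x)) with hπdef
  set ρ : Fin n → Fin n := fun x => Sum.elim id (fun _ => 0) (τ (Sum.inl x)) with hρdef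
  have hπ : ∀ x, τ (Sum.inr x) = Sum.inr (π x) := by
    intro x
    obtain ⟨y, hy⟩ := hπ' x
    rw [hy, hπdef]
    simp [hy]
  have hρ : ∀ x, τ (Sum.inl x) = Sum.inl (ρ x) := by
    intro x
    obtain ⟨y, hy⟩ := hρ' x
    rw [hy, hρdef]
    simp [hy]
  have hstep : ∀ x, ρ (x + 1) = ρ x + 1 := by
    intro x
    have h1 := hpt (Sum.inl x)
    rw [hρ x] at h1
    simp only [sig0, Equiv.sumCongr_apply, Sum.map_inl, Equiv.coe_addRight] at h1
    rw [hρ (x + 1)] at h1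
    exact (Sum.inl.injEq _ _ ▸ h1).symm
  have haffine : ∀ x : Fin n, ρ x = x + ρ 0 := by
    open Fin.NatCast in
    have key : ∀ k : ℕ, ρ (k : Fin n) = (k : Fin n) + ρ 0 := by
      intro k
      induction k with
      | zero => simp
      | succ m ih =>
          have hc : ((m + 1 : ℕ) : Fin n) = (m : Fin n) + 1 := by push_cast; ring
          rw [hc, hstep, ih, add_right_comm]
    intro x
    have := key x.val
    rwa [Fin.cast_val_eq_self] at this
  have hπinj : Function.Injective π := by
    intro a b hab
    have : τ (Sum.inr a) = τ (Sum.inr b) := by rw [hπ a, hπ b, hab]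
    simpa using τ.injective this
  refine ⟨ρ 0, Equiv.ofBijective π (Finite.injective_iff_bijective.mp hπinj), ?_⟩
  ext x
  rcases x with x | x
  · rw [hρ x, haffine x]
    simp [Phi]
  · rw [hπ x]
    simp [Phi, Equiv.ofBijective]

end FinPart

lemma cnt_permCongr {α β : Type*} [Fintype α] [DecidableEq α] [Fintype β] [DecidableEq β]
    (e : α ≃ β) (τ : Equiv.Perm α) (k : ℕ) :
    cnt k (e.permCongr τ) = cnt k τ := by
  unfold cnt
  refine (Finset.card_bij' (fun s _ => s.image e.symm) (fun t _ => t.image e)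
    ?_ ?_ ?_ ?_)
  · intro s hs
    simp only [Finset.mem_filter, Finset.mem_univ, true_and] at hs ⊢
    refine ⟨by rw [Finset.card_image_of_injective _ e.symm.injective, hs.1], ?_⟩
    have h1 : (s.image (e.symm : β → α)).image (τ : α → α)
        = (s.image (e.permCongr τ)).image (e.symm : β → α) := by
      rw [Finset.image_image, Finset.image_image]
      congr 1
      funext x
      simp
    rw [h1, hs.2]
  · intro t ht
    simp only [Finset.mem_filter, Finset.mem_univ, true_and] at ht ⊢
    refine ⟨by rw [Finset.card_image_of_injective _ e.injective, ht.1], ?_⟩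
    have h1 : (t.image (e : α → β)).image (e.permCongr τ)
        = (t.image (τ : α → α)).image (e : α → β) := by
      rw [Finset.image_image, Finset.image_image]
      congr 1
      funext x
      simp
    rw [h1, ht.2]
  · intro s _
    simp [Finset.image_image, Function.comp_def]
  · intro t _
    simp [Finset.image_image, Function.comp_def]

end ChiNN

open ChiNN in
open scoped Classical in
/-- Proposition 3.3: `χ^{(n,n)}` occurs with multiplicity 1 in `Ind_C^{S_{2n}} 1_C`:
`Σ_{τ ∈ C} χ^{(n,n)}(τ) = Σ_{τ ∈ C} (F n τ - F (n-1) τ) = n ⬝ n!`. -/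
theorem chi_nn_multiplicity_one (n : ℕ) (hn : 2 ≤ n) (σ : Equiv.Perm (Fin (2 * n)))
    (hσ : ∀ i : Fin (2 * n),
      ((σ i : ℕ) = if (i : ℕ) < n then ((i : ℕ) + 1) % n else (i : ℕ))) :
    ∑ τ : Subgroup.centralizer {σ},
      ((F n (τ : Equiv.Perm (Fin (2 * n))) : ℤ)
        - (F (n - 1) (τ : Equiv.Perm (Fin (2 * n))) : ℤ))
      = (n : ℤ) * n.factorial := by
  haveI : NeZero n := ⟨by omega⟩
  set e : (Fin n ⊕ Fin n) ≃ Fin (2 * n) :=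
    finSumFinEquiv.trans (finCongr (two_mul n).symm) with he
  -- σ corresponds to sig0
  have hcomm : ∀ x : Fin n ⊕ Fin n, σ (e x) = e (sig0 n x) := by
    rintro (i | i)
    · apply Fin.val_injective
      have hval : ((e (Sum.inl i) : Fin (2 * n)) : ℕ) = (i : ℕ) := by
        simp [he]
      rw [hσ, hval, if_pos (by omega)]
      have : sig0 n (Sum.inl i) = Sum.inl (i + 1) := by
        simp [sig0]
      rw [this]
      have hval2 : ((e (Sum.inl (i + 1)) : Fin (2 * n)) : ℕ) = ((i + 1 : Fin n) : ℕ) := by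
        simp [he]
      rw [hval2, Fin.val_add, Fin.val_one', Nat.mod_eq_of_lt (show 1 < n by omega)]
    · apply Fin.val_injective
      have hval : ((e (Sum.inr i) : Fin (2 * n)) : ℕ) = n + (i : ℕ) := by
        simp [he]; omega
      rw [hσ, hval, if_neg (by omega)]
      have : sig0 n (Sum.inr i) = Sum.inr i := by simp [sig0]
      rw [this, hval]
  have pcmul : ∀ τ₁ τ₂ : Equiv.Perm (Fin n ⊕ Fin n),
      e.permCongr (τ₁ * τ₂) = e.permCongr τ₁ * e.permCongr τ₂ := by
    intro τ₁ τ₂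
    ext x
    simp [Equiv.permCongr_apply, Equiv.Perm.mul_apply]
  have hσ0 : σ = e.permCongr (sig0 n) := by
    ext x
    rw [Equiv.permCongr_apply, ← hcomm, Equiv.apply_symm_apply]
  -- the parametrization of the centralizer
  have hmem : ∀ p : Fin n × Equiv.Perm (Fin n),
      e.permCongr (Phi n p.1 p.2) ∈ Subgroup.centralizer {σ} := by
    intro p
    rw [Subgroup.mem_centralizer_iff]
    rintro g hg
    rw [Set.mem_singleton_iff] at hg
    subst hg
    rw [hσ0, ← pcmul, ← pcmul, phi_comm]
  set Ψ : Fin n × Equiv.Perm (Fin n) → ↥(Subgroup.centralizer {σ}) :=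
    fun p => ⟨e.permCongr (Phi n p.1 p.2), hmem p⟩ with hΨ
  have hbij : Function.Bijective Ψ := by
    constructor
    · intro p q hpq
      rw [hΨ] at hpq
      simp only [Subtype.mk.injEq] at hpq
      exact phi_inj (e.permCongr.injective hpq)
    · rintro ⟨τ, hτ⟩
      rw [Subgroup.mem_centralizer_iff] at hτ
      have hτσ : σ * τ = τ * σ := hτ σ (Set.mem_singleton σ)
      set τ' : Equiv.Perm (Fin n ⊕ Fin n) := e.permCongr.symm τ with hτ'
      have hτ'e : e.permCongr τ' = τ := Equiv.apply_symm_apply _ τ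
      have hcomm' : sig0 n * τ' = τ' * sig0 n := by
        apply e.permCongr.injective
        rw [pcmul, pcmul, hτ'e, ← hσ0, hτσ]
      obtain ⟨c, π, hcπ⟩ := centralizer_struct hn τ' hcomm'
      exact ⟨(c, π), by simp only [hΨ, Subtype.mk.injEq, ← hcπ, hτ'e]⟩
  -- transfer the sum
  have hsum : ∀ k : ℕ, k ≤ n →
      (∑ τ : Subgroup.centralizer {σ}, F k (τ : Equiv.Perm (Fin (2 * n))))
        = (∑ a ∈ Finset.range (k + 1),
            ∑ c : Fin n, cnt a (Equiv.addRight c : Equiv.Perm (Fin n))) * n.factorial := by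
    intro k hk
    rw [← Fintype.sum_bijective Ψ hbij _ _ (fun p => rfl)]
    have step : ∀ p : Fin n × Equiv.Perm (Fin n),
        F k ((Ψ p : Equiv.Perm (Fin (2 * n))))
          = ∑ a ∈ Finset.range (k + 1),
              cnt a (Equiv.addRight p.1 : Equiv.Perm (Fin n)) * cnt (k - a) p.2 := by
      intro p
      show cnt k (e.permCongr (Phi n p.1 p.2)) = _
      rw [cnt_permCongr]
      exact cnt_sumCongr _ _ k
    simp_rw [step]
    rw [Finset.sum_comm, Finset.sum_mul]
    apply Finset.sum_congr rfl
    intro a ha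
    rw [Finset.mem_range, Nat.lt_succ_iff] at ha
    rw [Fintype.sum_prod_type]
    have : ∀ c : Fin n,
        (∑ π : Equiv.Perm (Fin n),
          cnt a (Equiv.addRight c : Equiv.Perm (Fin n)) * cnt (k - a) π)
        = cnt a (Equiv.addRight c : Equiv.Perm (Fin n)) * n.factorial := by
      intro c
      rw [← Finset.mul_sum]
      congr 1
      have := sum_cnt (α := Fin n) (k - a) (by simp [Fintype.card_fin]; omega)
      simpa [Fintype.card_fin] using this
    simp_rw [this]
    rw [← Finset.sum_mul]
  -- finish with integer arithmetic
  rw [Finset.sum_sub_distrib]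
  rw [← Nat.cast_sum, ← Nat.cast_sum]
  rw [hsum n le_rfl, hsum (n - 1) (by omega)]
  have hn1 : n - 1 + 1 = n := by omega
  rw [hn1]
  rw [Finset.sum_range_succ]
  have hAn : (∑ c : Fin n, cnt n (Equiv.addRight c : Equiv.Perm (Fin n))) = n := by
    have : ∀ c : Fin n, cnt n (Equiv.addRight c : Equiv.Perm (Fin n)) = 1 := by
      intro c
      have := cnt_card (α := Fin n) (Equiv.addRight c)
      simpa [Fintype.card_fin] using this
    simp_rw [this]
    simp
  rw [hAn]
  push_cast
  ring
end

section
/- (Proposition 3.4: multiplicity of χ^{(2n-2,2)} in Ind_C^{S_{2n}} 1_C.) Let n ≥ 2, let σ ∈ Equiv.Perm (Fin (2*n)) be the n-cycle with σ(i) = i+1 mod n for i < n and σ(i) = i for i ≥ n, and let C = Subgroup.centralizer {σ}. Then 2 · Σ_{τ ∈ C} (F 2 τ − F 1 τ) = n² · n! if n is even, and 2 · Σ_{τ ∈ C} (F 2 τ − F 1 τ) = n·(n−1) · n! if n is odd; equivalently, the multiplicity (1/(n·n!))·Σ_{τ∈C}(F 2 τ − F 1 τ) equals n/2 if n is even and (n−1)/2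 if n is odd. -/
set_option linter.unusedSectionVars false

open Finset Equiv

namespace Prop34

lemma shift_eq_iff {n x y : ℕ} (hx : x < n) (hy : y < n) {j : ℕ} (hj : j < n) :
    (x + j) % n = y ↔ j = (y + n - x) % n := by
  have hn : 0 < n := lt_of_le_of_lt (Nat.zero_le x) hx
  have key : (x + (y + n - x) % n) % n = y := by
    rw [Nat.add_mod_mod, show x + (y + n - x) = y + n by omega, Nat.add_mod_right,
      Nat.mod_eq_of_lt hy]
  constructor
  · intro h
    have h2 : (x + j) % n = (x + (y + n - x) % n) % n := by rw [h, key]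
    have hme : j % n = (y + n - x) % n % n := Nat.ModEq.add_left_cancel' x h2
    rwa [Nat.mod_eq_of_lt hj, Nat.mod_eq_of_lt (Nat.mod_lt _ hn)] at hme
  · intro h; rw [h, key]

def up {n : ℕ} (x : Fin n) : Fin (2 * n) := ⟨n + x, by have := x.isLt; omega⟩

def dn {n : ℕ} (i : Fin (2 * n)) : Fin n := ⟨(i : ℕ) - n, by have := i.isLt; omega⟩

@[simp] lemma up_val {n : ℕ} (x : Fin n) : (up x : ℕ) = n + x := rfl

@[simp] lemma dn_up {n : ℕ} (x : Fin n) : dn (up x) = x := by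
  apply Fin.ext; simp [up, dn]

lemma up_dn {n : ℕ} (i : Fin (2 * n)) (h : n ≤ (i : ℕ)) : up (dn i) = i := by
  apply Fin.ext; simp [up, dn]; omega

lemma up_ge {n : ℕ} (x : Fin n) : n ≤ (up x : ℕ) := by simp [up]

/-- `extPerm n π` acts as `π` on the top half `[n, 2n)` and fixes the bottom half. -/
def extPerm (n : ℕ) (π : Equiv.Perm (Fin n)) : Equiv.Perm (Fin (2 * n)) where
  toFun i := if (i : ℕ) < n then i else up (π (dn i))
  invFun i := if (i : ℕ) < n then i else up (π⁻¹ (dn i))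
  left_inv i := by
    by_cases h : (i : ℕ) < n
    · simp [h]
    · simp only [if_neg h, if_neg (not_lt.2 (up_ge _)), dn_up, Equiv.Perm.inv_def, Equiv.symm_apply_apply]
      exact up_dn i (not_lt.1 h)
  right_inv i := by
    by_cases h : (i : ℕ) < n
    · simp [h]
    · simp only [if_neg h, if_neg (not_lt.2 (up_ge _)), dn_up, Equiv.Perm.inv_def, Equiv.apply_symm_apply]
      exact up_dn i (not_lt.1 h)

lemma extPerm_apply_lt {n : ℕ} (π : Equiv.Perm (Fin n)) (i : Fin (2 * n)) (h : (i : ℕ) < n) :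
    extPerm n π i = i := if_pos h

lemma extPerm_apply_ge {n : ℕ} (π : Equiv.Perm (Fin n)) (i : Fin (2 * n)) (h : n ≤ (i : ℕ)) :
    extPerm n π i = up (π (dn i)) := if_neg (not_lt.2 h)


lemma card_perm_fixing {n : ℕ} (s : Finset (Fin n)) :
    (Finset.univ.filter (fun π : Equiv.Perm (Fin n) => ∀ x ∈ s, π x = x)).card
      = (n - s.card).factorial := by
  have hiff : ∀ (π : Equiv.Perm (Fin n)), (∀ x ∈ s, π x = x) → ∀ x : Fin n, x ∉ s ↔ π x ∉ s := by
    intro π hπ x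
    constructor
    · intro hx hc
      have : π (π x) = π x := hπ _ hc
      exact hx (by rwa [π.injective this] at hc)
    · intro hx hc
      exact hx (by rw [hπ _ hc]; exact hc)
  have e : {π : Equiv.Perm (Fin n) // ∀ x ∈ s, π x = x} ≃ Equiv.Perm {x : Fin n // x ∉ s} :=
    { toFun := fun π => π.1.subtypePerm (fun x => (hiff π.1 π.2 x).symm)
      invFun := fun ρ => ⟨Equiv.Perm.ofSubtype ρ, fun x hx =>
        Equiv.Perm.ofSubtype_apply_of_not_mem ρ (by simpa using hx)⟩
      left_inv := by
        intro π
        apply Subtype.ext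
        apply Equiv.ext
        intro x
        by_cases hx : x ∈ s
        · rw [Equiv.Perm.ofSubtype_apply_of_not_mem (p := fun z => z ∉ s) _ (by simpa using hx)]
          exact (π.2 x hx).symm
        · rw [Equiv.Perm.ofSubtype_apply_of_mem (p := fun z => z ∉ s) _ hx]
          rfl
      right_inv := by
        intro ρ
        apply Equiv.ext
        intro x
        apply Subtype.ext
        show (Equiv.Perm.ofSubtype ρ) x.1 = _
        rw [Equiv.Perm.ofSubtype_apply_of_mem (p := fun z => z ∉ s) _ x.2] }
  have h1 : Fintype.card {π : Equiv.Perm (Fin n) // ∀ x ∈ s, π x = x}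
      = Fintype.card (Equiv.Perm {x : Fin n // x ∉ s}) := Fintype.card_congr e
  rw [Fintype.card_subtype] at h1
  rw [Fintype.card_perm] at h1
  have h2 : Fintype.card {x : Fin n // x ∉ s} = n - s.card := by
    rw [Fintype.card_subtype_compl, Fintype.card_fin, Fintype.card_coe]
  rw [h2] at h1
  convert h1 using 2


lemma card_perm_fix_one {n : ℕ} (x : Fin n) :
    (Finset.univ.filter (fun π : Equiv.Perm (Fin n) => π x = x)).card
      = (n - 1).factorial := by
  have := card_perm_fixing ({x} : Finset (Fin n))
  rw [Finset.card_singleton] at this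
  rw [← this]
  congr 1
  apply Finset.filter_congr
  intro π _
  simp


lemma card_perm_fix_two {n : ℕ} (x y : Fin n) (hxy : x ≠ y) :
    (Finset.univ.filter (fun π : Equiv.Perm (Fin n) => π x = x ∧ π y = y)).card
      = (n - 2).factorial := by
  have := card_perm_fixing ({x, y} : Finset (Fin n))
  rw [Finset.card_pair hxy] at this
  rw [← this]
  congr 1
  apply Finset.filter_congr
  intro π _
  constructor
  · rintro ⟨h1, h2⟩ z hz
    rcases Finset.mem_insert.mp hz with h | h
    · rw [h]; exact h1
    · rw [Finset.mem_singleton.mp h]; exact h2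
  · intro h
    exact ⟨h x (by simp), h y (by simp)⟩


lemma card_perm_swap_two {n : ℕ} (x y : Fin n) (hxy : x ≠ y) :
    (Finset.univ.filter (fun π : Equiv.Perm (Fin n) => π x = y ∧ π y = x)).card
      = (n - 2).factorial := by
  rw [← card_perm_fix_two x y hxy]
  apply Finset.card_bij' (fun π _ => Equiv.swap x y * π) (fun π _ => Equiv.swap x y * π)
  · intro π hπ
    simp only [Finset.mem_filter, Finset.mem_univ, true_and] at hπ ⊢
    rw [Equiv.Perm.mul_apply, Equiv.Perm.mul_apply, hπ.1, hπ.2,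
      Equiv.swap_apply_right, Equiv.swap_apply_left]
    exact ⟨rfl, rfl⟩
  · intro π hπ
    simp only [Finset.mem_filter, Finset.mem_univ, true_and] at hπ ⊢
    rw [Equiv.Perm.mul_apply, Equiv.Perm.mul_apply, hπ.1, hπ.2,
      Equiv.swap_apply_left, Equiv.swap_apply_right]
    exact ⟨rfl, rfl⟩
  · intro π _; rw [← mul_assoc, Equiv.swap_mul_self, one_mul]
  · intro π _; rw [← mul_assoc, Equiv.swap_mul_self, one_mul]

lemma F_one {m : ℕ} (τ : Equiv.Perm (Fin m)) :
    F 1 τ = (Finset.univ.filter (fun a : Fin m => τ a = a)).card := by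
  rw [F]
  symm
  apply Finset.card_bij (fun a _ => ({a} : Finset (Fin m)))
  · intro a ha
    simp only [Finset.mem_filter, Finset.mem_univ, true_and] at ha ⊢
    refine ⟨Finset.card_singleton a, ?_⟩
    rw [Finset.image_singleton, ha]
  · intro a _ b _ h
    exact Finset.singleton_injective h
  · intro s hs
    simp only [Finset.mem_filter, Finset.mem_univ, true_and] at hs
    obtain ⟨a, rfl⟩ := Finset.card_eq_one.mp hs.1
    have := hs.2
    rw [Finset.image_singleton] at this
    exact ⟨a, by simp [Finset.singleton_injective this], rfl⟩

lemma invariant_pair {m : ℕ} (τ : Equiv.Perm (Fin m)) {x y : Fin m} (hxy : x ≠ y)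
    (h : ({x, y} : Finset (Fin m)).image τ = {x, y}) :
    (τ x = x ∧ τ y = y) ∨ (τ x = y ∧ τ y = x) := by
  have hx : τ x ∈ ({x, y} : Finset (Fin m)) := by
    rw [← h]; exact Finset.mem_image_of_mem τ (by simp)
  have hy : τ y ∈ ({x, y} : Finset (Fin m)) := by
    rw [← h]; exact Finset.mem_image_of_mem τ (by simp)
  simp only [Finset.mem_insert, Finset.mem_singleton] at hx hy
  rcases hx with hx | hx <;> rcases hy with hy | hy
  · exact absurd (τ.injective (hx.trans hy.symm)) hxy
  · exact Or.inl ⟨hx, hy⟩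
  · exact Or.inr ⟨hx, hy⟩
  · exact absurd (τ.injective (hx.trans hy.symm)) hxy

lemma two_mul_F_two {m : ℕ} (τ : Equiv.Perm (Fin m)) :
    2 * F 2 τ = ((Finset.univ ×ˢ Finset.univ).filter (fun p : Fin m × Fin m =>
        p.1 ≠ p.2 ∧ ((τ p.1 = p.1 ∧ τ p.2 = p.2) ∨ (τ p.1 = p.2 ∧ τ p.2 = p.1)))).card := by
  set t := (Finset.univ : Finset (Finset (Fin m))).filter (fun s => s.card = 2 ∧ s.image τ = s)
    with ht
  have H : ∀ p ∈ (Finset.univ ×ˢ Finset.univ).filter (fun p : Fin m × Fin m =>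
      p.1 ≠ p.2 ∧ ((τ p.1 = p.1 ∧ τ p.2 = p.2) ∨ (τ p.1 = p.2 ∧ τ p.2 = p.1))),
      ({p.1, p.2} : Finset (Fin m)) ∈ t := by
    rintro ⟨x, y⟩ hp
    simp only [Finset.mem_filter] at hp
    obtain ⟨-, hxy, hpred⟩ := hp
    simp only [ht, Finset.mem_filter, Finset.mem_univ, true_and]
    refine ⟨Finset.card_pair hxy, ?_⟩
    rw [Finset.image_insert, Finset.image_singleton]
    rcases hpred with ⟨h1, h2⟩ | ⟨h1, h2⟩
    · rw [h1, h2]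
    · rw [h1, h2, Finset.pair_comm]
  rw [Finset.card_eq_sum_card_fiberwise H]
  rw [F, ← ht]
  rw [Finset.sum_congr rfl (fun s hs => ?_), Finset.sum_const, smul_eq_mul, mul_comm]
  -- each fiber has cardinality 2
  simp only [ht, Finset.mem_filter, Finset.mem_univ, true_and] at hs
  obtain ⟨x, y, hxy, rfl⟩ := Finset.card_eq_two.mp hs.1
  have hpred := invariant_pair τ hxy hs.2
  have : ((Finset.univ ×ˢ Finset.univ).filter (fun p : Fin m × Fin m =>
      p.1 ≠ p.2 ∧ ((τ p.1 = p.1 ∧ τ p.2 = p.2) ∨ (τ p.1 = p.2 ∧ τ p.2 = p.1)))).filter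
      (fun p => ({p.1, p.2} : Finset (Fin m)) = {x, y}) = {(x, y), (y, x)} := by
    ext ⟨u, v⟩
    simp only [Finset.mem_filter, Finset.mem_insert, Finset.mem_singleton, Finset.mem_product,
      Finset.mem_univ, true_and, and_true, Prod.mk.injEq]
    constructor
    · rintro ⟨⟨huv, -⟩, hset⟩
      have hu : u ∈ ({x, y} : Finset (Fin m)) := by
        rw [← hset]; simp
      have hv : v ∈ ({x, y} : Finset (Fin m)) := by
        rw [← hset]; simp
      simp only [Finset.mem_insert, Finset.mem_singleton] at hu hv
      rcases hu with hu | hu <;> rcases hv with hv | hv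
      · exact absurd (hu.trans hv.symm) huv
      · exact Or.inl ⟨hu, hv⟩
      · exact Or.inr ⟨hu, hv⟩
      · exact absurd (hu.trans hv.symm) huv
    · rintro (⟨rfl, rfl⟩ | ⟨rfl, rfl⟩)
      · exact ⟨⟨hxy, hpred⟩, rfl⟩
      · refine ⟨⟨hxy.symm, ?_⟩, Finset.pair_comm u v⟩
        rcases hpred with ⟨h1, h2⟩ | ⟨h1, h2⟩
        · exact Or.inl ⟨h2, h1⟩
        · exact Or.inr ⟨h2, h1⟩
  rw [this]
  rw [Finset.card_insert_of_notMem (by simp [Prod.ext_iff]; intro h; exact absurd h hxy),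
    Finset.card_singleton]


section Sigma

variable {n : ℕ} {σ : Equiv.Perm (Fin (2 * n))}

lemma sigma_lt (hσ : ∀ i : Fin (2 * n),
      ((σ i : ℕ) = if (i : ℕ) < n then ((i : ℕ) + 1) % n else (i : ℕ)))
    (i : Fin (2 * n)) (h : (i : ℕ) < n) : (σ i : ℕ) = ((i : ℕ) + 1) % n := by
  rw [hσ, if_pos h]

lemma sigma_ge (hσ : ∀ i : Fin (2 * n),
      ((σ i : ℕ) = if (i : ℕ) < n then ((i : ℕ) + 1) % n else (i : ℕ)))
    (i : Fin (2 * n)) (h : n ≤ (i : ℕ)) : σ i = i :=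
  Fin.ext (by rw [hσ, if_neg (not_lt.2 h)])

variable (hn : 2 ≤ n)
variable (hσ : ∀ i : Fin (2 * n),
      ((σ i : ℕ) = if (i : ℕ) < n then ((i : ℕ) + 1) % n else (i : ℕ)))
include hn hσ

lemma sigma_pow_lt (k : ℕ) :
    ∀ i : Fin (2 * n), (i : ℕ) < n → (((σ ^ k) i : ℕ)) = ((i : ℕ) + k) % n := by
  induction k with
  | zero => intro i h; simp [Nat.mod_eq_of_lt h]
  | succ k ih =>
    intro i h
    rw [pow_succ, Equiv.Perm.mul_apply]
    have h1 : (σ i : ℕ) = ((i : ℕ) + 1) % n := sigma_lt hσ i h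
    have h2 : (σ i : ℕ) < n := by rw [h1]; exact Nat.mod_lt _ (by omega)
    rw [ih (σ i) h2, h1, Nat.mod_add_mod]
    congr 1
    omega

omit hn in
lemma sigma_pow_ge (k : ℕ) (i : Fin (2 * n)) (h : n ≤ (i : ℕ)) : (σ ^ k) i = i := by
  induction k with
  | zero => simp
  | succ k ih => rw [pow_succ, Equiv.Perm.mul_apply, sigma_ge hσ i h, ih]

end Sigma

def Phi {n : ℕ} (σ : Equiv.Perm (Fin (2 * n))) (d : Fin n × Equiv.Perm (Fin n)) :
    Equiv.Perm (Fin (2 * n)) := σ ^ (d.1 : ℕ) * extPerm n d.2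

section Phi

variable {n : ℕ} {σ : Equiv.Perm (Fin (2 * n))}
variable (hn : 2 ≤ n)
variable (hσ : ∀ i : Fin (2 * n),
      ((σ i : ℕ) = if (i : ℕ) < n then ((i : ℕ) + 1) % n else (i : ℕ)))
include hn hσ

lemma Phi_lt (d : Fin n × Equiv.Perm (Fin n)) (i : Fin (2 * n)) (h : (i : ℕ) < n) :
    (Phi σ d i : ℕ) = ((i : ℕ) + (d.1 : ℕ)) % n := by
  rw [Phi, Equiv.Perm.mul_apply, extPerm_apply_lt _ _ h, sigma_pow_lt hn hσ _ i h]

lemma Phi_lt_lt (d : Fin n × Equiv.Perm (Fin n)) (i : Fin (2 * n)) (h : (i : ℕ) < n) :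
    (Phi σ d i : ℕ) < n := by
  rw [Phi_lt hn hσ d i h]; exact Nat.mod_lt _ (by omega)

lemma Phi_ge (d : Fin n × Equiv.Perm (Fin n)) (i : Fin (2 * n)) (h : n ≤ (i : ℕ)) :
    Phi σ d i = up (d.2 (dn i)) := by
  rw [Phi, Equiv.Perm.mul_apply, extPerm_apply_ge _ _ h, sigma_pow_ge hσ _ _ (up_ge _)]

lemma Phi_mem (d : Fin n × Equiv.Perm (Fin n)) : Phi σ d ∈ Subgroup.centralizer {σ} := by
  rw [Subgroup.mem_centralizer_iff]
  intro g hg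
  rw [Set.mem_singleton_iff] at hg
  rw [hg]
  apply Equiv.ext
  intro i
  rw [Equiv.Perm.mul_apply, Equiv.Perm.mul_apply]
  by_cases h : (i : ℕ) < n
  · apply Fin.ext
    have hσi : (σ i : ℕ) = ((i : ℕ) + 1) % n := sigma_lt hσ i h
    have hσi' : (σ i : ℕ) < n := by rw [hσi]; exact Nat.mod_lt _ (by omega)
    rw [sigma_lt hσ _ (Phi_lt_lt hn hσ d i h), Phi_lt hn hσ d i h,
      Phi_lt hn hσ d _ hσi', hσi, Nat.mod_add_mod, Nat.mod_add_mod]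
    congr 1
    omega
  · have h' : n ≤ (i : ℕ) := not_lt.1 h
    rw [sigma_ge hσ i h', Phi_ge hn hσ d i h', sigma_ge hσ _ (up_ge _)]

lemma Phi_bijective : Function.Bijective (fun d : Fin n × Equiv.Perm (Fin n) =>
    (⟨Phi σ d, Phi_mem hn hσ d⟩ : Subgroup.centralizer {σ})) := by
  have hn0 : 0 < n := by omega
  have h2n : (0 : ℕ) < 2 * n := by omega
  constructor
  · intro d1 d2 h
    have hP : Phi σ d1 = Phi σ d2 := congrArg Subtype.val h
    have hj : d1.1 = d2.1 := by
      have h0 := congrArg (fun f : Equiv.Perm (Fin (2 * n)) => ((f ⟨0, h2n⟩ : Fin (2 * n)) : ℕ)) hP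
      rw [Phi_lt hn hσ d1 _ (by simpa using hn0), Phi_lt hn hσ d2 _ (by simpa using hn0)] at h0
      simp only [Nat.zero_add] at h0
      rw [Nat.mod_eq_of_lt d1.1.isLt, Nat.mod_eq_of_lt d2.1.isLt] at h0
      exact Fin.ext h0
    have hπ : d1.2 = d2.2 := by
      apply Equiv.ext
      intro x
      have h0 := congrArg (fun f : Equiv.Perm (Fin (2 * n)) => f (up x)) hP
      rw [Phi_ge hn hσ d1 _ (up_ge x), Phi_ge hn hσ d2 _ (up_ge x), dn_up] at h0
      have := congrArg (fun y : Fin (2 * n) => (y : ℕ)) h0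
      simp only [up_val] at this
      exact Fin.ext (by omega)
    exact Prod.ext hj hπ
  · rintro ⟨τ, hτ⟩
    have hc : σ * τ = τ * σ := (Subgroup.mem_centralizer_iff.1 hτ) σ rfl
    have hcomm : ∀ i, σ (τ i) = τ (σ i) := by
      intro i
      have := congrArg (fun f : Equiv.Perm (Fin (2 * n)) => f i) hc
      simpa [Equiv.Perm.mul_apply] using this
    have htop : ∀ i : Fin (2 * n), n ≤ (i : ℕ) → n ≤ (τ i : ℕ) := by
      intro i hi
      by_contra hlt
      push_neg at hlt
      have h1 : σ (τ i) = τ i := by rw [hcomm i, sigma_ge hσ i hi]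
      have h2 : ((τ i : ℕ) + 1) % n = (τ i : ℕ) := by
        rw [← sigma_lt hσ _ hlt, h1]
      rcases Nat.lt_or_ge ((τ i : ℕ) + 1) n with h3 | h3
      · rw [Nat.mod_eq_of_lt h3] at h2; omega
      · have h4 : (τ i : ℕ) + 1 = n := by omega
        have h5 : ((τ i : ℕ) + 1) % n = 0 := by rw [h4]; exact Nat.mod_self n
        omega
    have hbot : ∀ i : Fin (2 * n), (i : ℕ) < n → (τ i : ℕ) < n := by
      have himg : (Finset.univ.filter (fun x : Fin (2 * n) => n ≤ (x : ℕ))).image τ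
          = Finset.univ.filter (fun x : Fin (2 * n) => n ≤ (x : ℕ)) := by
        apply Finset.eq_of_subset_of_card_le
        · intro y hy
          rw [Finset.mem_image] at hy
          obtain ⟨x, hx, rfl⟩ := hy
          rw [Finset.mem_filter] at hx ⊢
          exact ⟨Finset.mem_univ _, htop x hx.2⟩
        · rw [Finset.card_image_of_injective _ τ.injective]
      intro i hi
      by_contra hge
      push_neg at hge
      have hmem : τ i ∈ Finset.univ.filter (fun x : Fin (2 * n) => n ≤ (x : ℕ)) := by
        rw [Finset.mem_filter]; exact ⟨Finset.mem_univ _, hge⟩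
      rw [← himg, Finset.mem_image] at hmem
      obtain ⟨x, hx, hxe⟩ := hmem
      have := τ.injective hxe
      subst this
      rw [Finset.mem_filter] at hx
      omega
    set jv : ℕ := (τ ⟨0, h2n⟩ : ℕ) with hjvdef
    have hjv : jv < n := hbot _ (by simpa using hn0)
    have hstep : ∀ k : ℕ, ∀ _hk : k < n, (τ ⟨k, by omega⟩ : ℕ) = (k + jv) % n := by
      intro k
      induction k with
      | zero => intro _; rw [Nat.zero_add, Nat.mod_eq_of_lt hjv]
      | succ k ih =>
        intro hk1
        have hk : k < n := by omega
        have hσk : σ ⟨k, by omega⟩ = ⟨k + 1, by omega⟩ := by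
          apply Fin.ext
          rw [sigma_lt hσ _ (by simpa using hk)]
          exact Nat.mod_eq_of_lt hk1
        rw [← hσk, ← hcomm]
        have hvlt : (τ ⟨k, by omega⟩ : ℕ) < n := by
          rw [ih hk]; exact Nat.mod_lt _ (by omega)
        rw [sigma_lt hσ _ hvlt, ih hk, Nat.mod_add_mod]
        congr 1
        omega
    set g : Fin n → Fin n := fun x => dn (τ (up x)) with hgdef
    have ginj : Function.Injective g := by
      intro x y hxy
      have hx := htop (up x) (up_ge x)
      have hy := htop (up y) (up_ge y)
      have hval : ((τ (up x) : ℕ)) - n = ((τ (up y) : ℕ)) - n := congrArg Fin.val hxy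
      have : τ (up x) = τ (up y) := Fin.ext (by omega)
      have := τ.injective this
      have := congrArg Fin.val this
      simp only [up_val] at this
      exact Fin.ext (by omega)
    set π : Equiv.Perm (Fin n) := Equiv.ofBijective g (Finite.injective_iff_bijective.mp ginj)
      with hπdef
    refine ⟨(⟨jv, hjv⟩, π), ?_⟩
    apply Subtype.ext
    apply Equiv.ext
    intro i
    by_cases h : (i : ℕ) < n
    · apply Fin.ext
      rw [Phi_lt hn hσ _ i h]
      have := hstep (i : ℕ) h
      rw [Fin.eta] at this
      exact this.symm
    · have h' : n ≤ (i : ℕ) := not_lt.1 h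
      rw [Phi_ge hn hσ _ i h']
      show up (π (dn i)) = τ i
      have hπa : π (dn i) = g (dn i) := rfl
      rw [hπa, hgdef]
      simp only
      rw [up_dn i h']
      exact up_dn _ (htop i h')

end Phi
end Prop34

namespace Prop34


lemma sum_card_swap {α β : Type*} (s : Finset α) (t : Finset β) (P : α → β → Prop)
    [∀ d, DecidablePred (P d)] [∀ b, DecidablePred (fun d => P d b)] :
    ∑ d ∈ s, (t.filter (fun b => P d b)).card = ∑ b ∈ t, (s.filter (fun d => P d b)).card := by
  simp_rw [Finset.card_filter]
  rw [Finset.sum_comm]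


lemma sum_ite_const {α : Type*} (s : Finset α) (q : α → Prop) [DecidablePred q] (K : ℕ) :
    ∑ b ∈ s, (if q b then K else 0) = (s.filter q).card * K := by
  rw [← Finset.sum_filter, Finset.sum_const, smul_eq_mul]

section Counting
variable {n : ℕ} {σ : Equiv.Perm (Fin (2 * n))}

lemma card_filter_both (p : Fin n → Prop) (q : Equiv.Perm (Fin n) → Prop)
    [DecidablePred p] [DecidablePred q]
    [DecidablePred (fun d : Fin n × Equiv.Perm (Fin n) => p d.1 ∧ q d.2)] :
    ((Finset.univ : Finset (Fin n × Equiv.Perm (Fin n))).filter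
        (fun d => p d.1 ∧ q d.2)).card
      = (Finset.univ.filter p).card * (Finset.univ.filter q).card := by
  rw [← Finset.card_product]
  congr 1
  ext d
  simp [Finset.mem_filter, Finset.mem_product]

lemma card_bot (hn : 2 ≤ n) :
    ((Finset.univ : Finset (Fin (2 * n))).filter (fun a : Fin (2 * n) => (a : ℕ) < n)).card
      = n := by
  have key : ((Finset.univ : Finset (Fin (2 * n))).filter
      (fun a : Fin (2 * n) => (a : ℕ) < n)).card = ((Finset.univ : Finset (Fin n))).card := by
    exact Finset.card_bij' (fun (a : Fin (2 * n)) (ha : a ∈ Finset.univ.filter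
        (fun a : Fin (2 * n) => (a : ℕ) < n)) => (⟨(a : ℕ), (Finset.mem_filter.mp ha).2⟩ : Fin n))
      (fun (x : Fin n) _ => (⟨(x : ℕ), by have := x.isLt; omega⟩ : Fin (2 * n)))
      (fun a ha => Finset.mem_univ _)
      (fun x hx => Finset.mem_filter.mpr ⟨Finset.mem_univ _, x.isLt⟩)
      (fun a ha => Fin.ext rfl) (fun x hx => Fin.ext rfl)
  rw [key, Finset.card_univ, Fintype.card_fin]

lemma card_top (hn : 2 ≤ n) :
    ((Finset.univ : Finset (Fin (2 * n))).filter
      (fun a : Fin (2 * n) => ¬ (a : ℕ) < n)).card = n := by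
  have h := Finset.card_filter_add_card_filter_not
    (s := (Finset.univ : Finset (Fin (2 * n)))) (p := fun a : Fin (2 * n) => (a : ℕ) < n)
  rw [card_bot hn, Finset.card_univ, Fintype.card_fin] at h
  omega

lemma card_univ_perm : (Finset.univ : Finset (Equiv.Perm (Fin n))).card = n.factorial := by
  rw [Finset.card_univ, Fintype.card_perm, Fintype.card_fin]


lemma card_j_zero (hn : 2 ≤ n) :
    (Finset.univ.filter (fun j : Fin n => (j : ℕ) = 0)).card = 1 := by
  have : (Finset.univ.filter (fun j : Fin n => (j : ℕ) = 0)) = {⟨0, by omega⟩} := by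
    ext j
    simp [Fin.ext_iff]
  rw [this, Finset.card_singleton]

variable (hn : 2 ≤ n)
variable (hσ : ∀ i : Fin (2 * n),
      ((σ i : ℕ) = if (i : ℕ) < n then ((i : ℕ) + 1) % n else (i : ℕ)))
include hn hσ

lemma phi_map_bot_iff (d : Fin n × Equiv.Perm (Fin n)) (a b : Fin (2 * n))
    (ha : (a : ℕ) < n) (hb : (b : ℕ) < n) :
    Phi σ d a = b ↔ (d.1 : ℕ) = ((b : ℕ) + n - (a : ℕ)) % n := by
  rw [Fin.ext_iff, Phi_lt hn hσ d a ha]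
  exact shift_eq_iff ha hb d.1.isLt

lemma phi_fix_bot_iff (d : Fin n × Equiv.Perm (Fin n)) (a : Fin (2 * n)) (ha : (a : ℕ) < n) :
    Phi σ d a = a ↔ (d.1 : ℕ) = 0 := by
  rw [phi_map_bot_iff hn hσ d a a ha ha, show (a : ℕ) + n - (a : ℕ) = n by omega, Nat.mod_self]

lemma phi_map_top_iff (d : Fin n × Equiv.Perm (Fin n)) (a b : Fin (2 * n))
    (ha : n ≤ (a : ℕ)) (hb : n ≤ (b : ℕ)) :
    Phi σ d a = b ↔ d.2 (dn a) = dn b := by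
  rw [Phi_ge hn hσ d a ha]
  constructor
  · intro h
    rw [← h, dn_up]
  · intro h
    rw [h, up_dn b hb]

lemma phi_fix_top_iff (d : Fin n × Equiv.Perm (Fin n)) (a : Fin (2 * n)) (ha : n ≤ (a : ℕ)) :
    Phi σ d a = a ↔ d.2 (dn a) = dn a :=
  phi_map_top_iff hn hσ d a a ha ha

lemma phi_bot_ne_top (d : Fin n × Equiv.Perm (Fin n)) (a b : Fin (2 * n))
    (ha : (a : ℕ) < n) (hb : n ≤ (b : ℕ)) : Phi σ d a ≠ b := by
  intro h
  have h1 := Phi_lt_lt hn hσ d a ha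
  rw [h] at h1
  omega

lemma phi_top_ne_bot (d : Fin n × Equiv.Perm (Fin n)) (a b : Fin (2 * n))
    (ha : n ≤ (a : ℕ)) (hb : (b : ℕ) < n) : Phi σ d a ≠ b := by
  intro h
  have h1 : n ≤ (Phi σ d a : ℕ) := by rw [Phi_ge hn hσ d a ha]; exact up_ge _
  rw [h] at h1
  omega


lemma St1_bot (a : Fin (2 * n)) (ha : (a : ℕ) < n) :
    ((Finset.univ : Finset (Fin n × Equiv.Perm (Fin n))).filter
      (fun d => Phi σ d a = a)).card = n.factorial := by
  rw [Finset.filter_congr (fun d _ => by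
    rw [phi_fix_bot_iff hn hσ d a ha, ← and_true ((d.1 : ℕ) = 0)])]
  rw [card_filter_both (fun j : Fin n => (j : ℕ) = 0) (fun _ => True),
    Finset.filter_true, card_j_zero hn, card_univ_perm, one_mul]


lemma St1_top (a : Fin (2 * n)) (ha : n ≤ (a : ℕ)) :
    ((Finset.univ : Finset (Fin n × Equiv.Perm (Fin n))).filter
      (fun d => Phi σ d a = a)).card = n * (n - 1).factorial := by
  rw [Finset.filter_congr (fun d _ => by
    rw [phi_fix_top_iff hn hσ d a ha, ← true_and (d.2 (dn a) = dn a)])]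
  rw [card_filter_both (fun _ : Fin n => True) (fun π => π (dn a) = dn a),
    Finset.filter_true, card_perm_fix_one, Finset.card_univ, Fintype.card_fin]


lemma sumF1 : ∑ d : Fin n × Equiv.Perm (Fin n), F 1 (Phi σ d) = 2 * n * n.factorial := by
  have h1 : ∑ d : Fin n × Equiv.Perm (Fin n), F 1 (Phi σ d)
      = ∑ a : Fin (2 * n), ((Finset.univ : Finset (Fin n × Equiv.Perm (Fin n))).filter
          (fun d => Phi σ d a = a)).card := by
    rw [Finset.sum_congr rfl (fun d _ => F_one (Phi σ d))]
    exact sum_card_swap Finset.univ Finset.univ (fun d a => Phi σ d a = a)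
  rw [h1, ← Finset.sum_filter_add_sum_filter_not Finset.univ (fun a : Fin (2 * n) => (a : ℕ) < n)]
  have h2 : ∑ a ∈ Finset.univ.filter (fun a : Fin (2 * n) => (a : ℕ) < n),
      ((Finset.univ : Finset (Fin n × Equiv.Perm (Fin n))).filter
        (fun d => Phi σ d a = a)).card = n * n.factorial := by
    rw [Finset.sum_congr rfl (fun a ha => St1_bot hn hσ a (Finset.mem_filter.mp ha).2),
      Finset.sum_const, smul_eq_mul, card_bot hn]
  have h3 : ∑ a ∈ Finset.univ.filter (fun a : Fin (2 * n) => ¬ (a : ℕ) < n),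
      ((Finset.univ : Finset (Fin n × Equiv.Perm (Fin n))).filter
        (fun d => Phi σ d a = a)).card = n * (n * (n - 1).factorial) := by
    rw [Finset.sum_congr rfl (fun a ha =>
        St1_top hn hσ a (not_lt.1 (Finset.mem_filter.mp ha).2)),
      Finset.sum_const, smul_eq_mul, card_top hn]
  rw [h2, h3]
  have h4 : n * (n - 1).factorial = n.factorial := Nat.mul_factorial_pred (by omega)
  rw [h4]
  ring

end Counting
end Prop34
namespace Prop34
section Counting2
variable {n : ℕ} {σ : Equiv.Perm (Fin (2 * n))}

/-- the number of `(j, π)` making `{a, b}` invariant, including the `a ≠ b` condition. -/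
def gfun {n : ℕ} (σ : Equiv.Perm (Fin (2 * n))) (a b : Fin (2 * n)) : ℕ :=
  ((Finset.univ : Finset (Fin n × Equiv.Perm (Fin n))).filter (fun d =>
    a ≠ b ∧ ((Phi σ d a = a ∧ Phi σ d b = b) ∨ (Phi σ d a = b ∧ Phi σ d b = a)))).card

lemma gfun_self (a : Fin (2 * n)) : gfun σ a a = 0 := by
  rw [gfun, Finset.filter_false_of_mem (fun d _ => by simp), Finset.card_empty]

lemma gfun_ne {a b : Fin (2 * n)} (hab : a ≠ b) :
    gfun σ a b = ((Finset.univ : Finset (Fin n × Equiv.Perm (Fin n))).filter (fun d =>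
      ((Phi σ d a = a ∧ Phi σ d b = b) ∨ (Phi σ d a = b ∧ Phi σ d b = a)))).card := by
  rw [gfun, Finset.filter_congr (fun d _ => by rw [and_iff_right hab])]

variable (hn : 2 ≤ n)
variable (hσ : ∀ i : Fin (2 * n),
      ((σ i : ℕ) = if (i : ℕ) < n then ((i : ℕ) + 1) % n else (i : ℕ)))
include hn hσ

lemma St2_bb (a b : Fin (2 * n)) (ha : (a : ℕ) < n) (hb : (b : ℕ) < n) (hab : a ≠ b) :
    ((Finset.univ : Finset (Fin n × Equiv.Perm (Fin n))).filter (fun d =>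
      (Phi σ d a = a ∧ Phi σ d b = b) ∨ (Phi σ d a = b ∧ Phi σ d b = a))).card
    = (if ((b : ℕ) + n - (a : ℕ)) % n = ((a : ℕ) + n - (b : ℕ)) % n then 2 else 1)
        * n.factorial := by
  have hval : (a : ℕ) ≠ (b : ℕ) := fun h => hab (Fin.ext h)
  set c1 := ((b : ℕ) + n - (a : ℕ)) % n with hc1
  set c2 := ((a : ℕ) + n - (b : ℕ)) % n with hc2
  have key : ∀ d : Fin n × Equiv.Perm (Fin n),
      ((Phi σ d a = a ∧ Phi σ d b = b) ∨ (Phi σ d a = b ∧ Phi σ d b = a))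
        ↔ (((d.1 : ℕ) = 0 ∨ ((d.1 : ℕ) = c1 ∧ c1 = c2)) ∧ True) := by
    intro d
    rw [phi_fix_bot_iff hn hσ d a ha, phi_fix_bot_iff hn hσ d b hb,
      phi_map_bot_iff hn hσ d a b ha hb, phi_map_bot_iff hn hσ d b a hb ha, ← hc1, ← hc2]
    constructor
    · rintro (⟨h1, -⟩ | ⟨h1, h2⟩)
      · exact ⟨Or.inl h1, trivial⟩
      · exact ⟨Or.inr ⟨h1, by omega⟩, trivial⟩
    · rintro ⟨h1 | ⟨h1, h2⟩, -⟩
      · exact Or.inl ⟨h1, h1⟩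
      · exact Or.inr ⟨h1, by omega⟩
  rw [Finset.filter_congr (fun d _ => key d),
    card_filter_both (fun j : Fin n => (j : ℕ) = 0 ∨ ((j : ℕ) = c1 ∧ c1 = c2)) (fun _ => True),
    Finset.filter_true, card_univ_perm]
  congr 1
  have hc1lt : c1 < n := Nat.mod_lt _ (by omega)
  have hc1ne : c1 ≠ 0 := by
    intro h0
    have h1 : ((a : ℕ) + c1) % n = (b : ℕ) := (shift_eq_iff ha hb hc1lt).mpr rfl
    rw [h0, Nat.add_zero, Nat.mod_eq_of_lt ha] at h1
    exact hval h1
  by_cases hc : c1 = c2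
  · rw [if_pos hc]
    have hset : Finset.univ.filter (fun j : Fin n => (j : ℕ) = 0 ∨ ((j : ℕ) = c1 ∧ c1 = c2))
        = {⟨0, by omega⟩, ⟨c1, hc1lt⟩} := by
      ext j
      simp only [Finset.mem_filter, Finset.mem_univ, true_and, Finset.mem_insert,
        Finset.mem_singleton, Fin.ext_iff]
      simp [hc]
    rw [hset, Finset.card_insert_of_notMem (by simp [Fin.ext_iff]; omega),
      Finset.card_singleton]
  · rw [if_neg hc]
    have hset : Finset.univ.filter (fun j : Fin n => (j : ℕ) = 0 ∨ ((j : ℕ) = c1 ∧ c1 = c2))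
        = {⟨0, by omega⟩} := by
      ext j
      simp only [Finset.mem_filter, Finset.mem_univ, true_and, Finset.mem_singleton, Fin.ext_iff]
      simp [hc]
    rw [hset, Finset.card_singleton]

lemma St2_bt (a b : Fin (2 * n)) (ha : (a : ℕ) < n) (hb : ¬ (b : ℕ) < n) :
    ((Finset.univ : Finset (Fin n × Equiv.Perm (Fin n))).filter (fun d =>
      (Phi σ d a = a ∧ Phi σ d b = b) ∨ (Phi σ d a = b ∧ Phi σ d b = a))).card
    = (n - 1).factorial := by
  have hb' : n ≤ (b : ℕ) := not_lt.1 hb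
  have key : ∀ d : Fin n × Equiv.Perm (Fin n),
      ((Phi σ d a = a ∧ Phi σ d b = b) ∨ (Phi σ d a = b ∧ Phi σ d b = a))
        ↔ ((d.1 : ℕ) = 0 ∧ d.2 (dn b) = dn b) := by
    intro d
    constructor
    · rintro (⟨h1, h2⟩ | ⟨h1, h2⟩)
      · exact ⟨(phi_fix_bot_iff hn hσ d a ha).mp h1, (phi_fix_top_iff hn hσ d b hb').mp h2⟩
      · exact absurd h1 (phi_bot_ne_top hn hσ d a b ha hb')
    · rintro ⟨h1, h2⟩
      exact Or.inl ⟨(phi_fix_bot_iff hn hσ d a ha).mpr h1,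
        (phi_fix_top_iff hn hσ d b hb').mpr h2⟩
  rw [Finset.filter_congr (fun d _ => key d),
    card_filter_both (fun j : Fin n => (j : ℕ) = 0) (fun π => π (dn b) = dn b),
    card_j_zero hn, card_perm_fix_one, one_mul]

lemma St2_tb (a b : Fin (2 * n)) (ha : ¬ (a : ℕ) < n) (hb : (b : ℕ) < n) :
    ((Finset.univ : Finset (Fin n × Equiv.Perm (Fin n))).filter (fun d =>
      (Phi σ d a = a ∧ Phi σ d b = b) ∨ (Phi σ d a = b ∧ Phi σ d b = a))).card
    = (n - 1).factorial := by
  have ha' : n ≤ (a : ℕ) := not_lt.1 ha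
  have key : ∀ d : Fin n × Equiv.Perm (Fin n),
      ((Phi σ d a = a ∧ Phi σ d b = b) ∨ (Phi σ d a = b ∧ Phi σ d b = a))
        ↔ ((d.1 : ℕ) = 0 ∧ d.2 (dn a) = dn a) := by
    intro d
    constructor
    · rintro (⟨h1, h2⟩ | ⟨h1, h2⟩)
      · exact ⟨(phi_fix_bot_iff hn hσ d b hb).mp h2, (phi_fix_top_iff hn hσ d a ha').mp h1⟩
      · exact absurd h1 (phi_top_ne_bot hn hσ d a b ha' hb)
    · rintro ⟨h1, h2⟩
      exact Or.inl ⟨(phi_fix_top_iff hn hσ d a ha').mpr h2,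
        (phi_fix_bot_iff hn hσ d b hb).mpr h1⟩
  rw [Finset.filter_congr (fun d _ => key d),
    card_filter_both (fun j : Fin n => (j : ℕ) = 0) (fun π => π (dn a) = dn a),
    card_j_zero hn, card_perm_fix_one, one_mul]

lemma St2_tt (a b : Fin (2 * n)) (ha : ¬ (a : ℕ) < n) (hb : ¬ (b : ℕ) < n) (hab : a ≠ b) :
    ((Finset.univ : Finset (Fin n × Equiv.Perm (Fin n))).filter (fun d =>
      (Phi σ d a = a ∧ Phi σ d b = b) ∨ (Phi σ d a = b ∧ Phi σ d b = a))).card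
    = n * ((n - 2).factorial + (n - 2).factorial) := by
  have ha' : n ≤ (a : ℕ) := not_lt.1 ha
  have hb' : n ≤ (b : ℕ) := not_lt.1 hb
  have hxy : dn a ≠ dn b := by
    intro h
    have := congrArg Fin.val h
    simp only [dn] at this
    exact hab (Fin.ext (by omega))
  have key : ∀ d : Fin n × Equiv.Perm (Fin n),
      ((Phi σ d a = a ∧ Phi σ d b = b) ∨ (Phi σ d a = b ∧ Phi σ d b = a))
        ↔ (True ∧ ((d.2 (dn a) = dn a ∧ d.2 (dn b) = dn b)
            ∨ (d.2 (dn a) = dn b ∧ d.2 (dn b) = dn a))) := by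
    intro d
    rw [phi_fix_top_iff hn hσ d a ha', phi_fix_top_iff hn hσ d b hb',
      phi_map_top_iff hn hσ d a b ha' hb', phi_map_top_iff hn hσ d b a hb' ha', true_and]
  rw [Finset.filter_congr (fun d _ => key d),
    card_filter_both (fun _ : Fin n => True)
      (fun π => (π (dn a) = dn a ∧ π (dn b) = dn b) ∨ (π (dn a) = dn b ∧ π (dn b) = dn a)),
    Finset.filter_true, Finset.card_univ, Fintype.card_fin]
  congr 1
  rw [Finset.filter_or, Finset.card_union_of_disjoint, card_perm_fix_two _ _ hxy,
    card_perm_swap_two _ _ hxy]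
  rw [Finset.disjoint_left]
  intro π h1 h2
  rw [Finset.mem_filter] at h1 h2
  exact hxy (h1.2.1.symm.trans h2.2.1)

end Counting2
end Prop34
namespace Prop34
section Counting3
variable {n : ℕ} {σ : Equiv.Perm (Fin (2 * n))}
variable (hn : 2 ≤ n)
include hn

omit hn in
lemma half_shift {k a b : ℕ} (hk : 1 ≤ k) (ha : a < 2 * k) (hb : b < 2 * k) (hne : b ≠ a)
    (h : (2 * b) % (2 * k) = (2 * a) % (2 * k)) : b = (a + k) % (2 * k) := by
  rw [Nat.mul_mod_mul_left, Nat.mul_mod_mul_left] at h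
  have h1 : b % k = a % k := by omega
  have ea := Nat.mod_add_div a k
  have eb := Nat.mod_add_div b k
  have hda : a / k < 2 := Nat.div_lt_of_lt_mul (by omega)
  have hdb : b / k < 2 := Nat.div_lt_of_lt_mul (by omega)
  have hma : a % k < k := Nat.mod_lt _ (by omega)
  obtain ⟨qa, hqa⟩ : ∃ q, a / k = q := ⟨_, rfl⟩
  obtain ⟨qb, hqb⟩ : ∃ q, b / k = q := ⟨_, rfl⟩
  rw [hqa] at ea hda
  rw [hqb] at eb hdb
  have ha0 : qa = 0 ∨ qa = 1 := by omega
  have hb0 : qb = 0 ∨ qb = 1 := by omega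
  rcases ha0 with h' | h' <;> rcases hb0 with h'' | h'' <;> rw [h'] at ea <;> rw [h''] at eb
  · omega
  · rw [Nat.mod_eq_of_lt (by omega)]
    omega
  · rw [show a + k = b + 2 * k by omega, Nat.add_mod_right, Nat.mod_eq_of_lt hb]
  · omega

lemma cond_iff (a b : Fin (2 * n)) (ha : (a : ℕ) < n) (hb : (b : ℕ) < n) :
    (((b : ℕ) + n - (a : ℕ)) % n = ((a : ℕ) + n - (b : ℕ)) % n)
      ↔ (2 * (b : ℕ)) % n = (2 * (a : ℕ)) % n := by
  have hb2 := b.isLt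
  have ha2 := a.isLt
  have e1 : ((b : ℕ) + n - (a : ℕ)) + ((a : ℕ) + (b : ℕ)) = 2 * (b : ℕ) + n := by omega
  have e2 : ((a : ℕ) + n - (b : ℕ)) + ((a : ℕ) + (b : ℕ)) = 2 * (a : ℕ) + n := by omega
  constructor
  · intro h
    have h2 : (2 * (b : ℕ) + n) % n = (2 * (a : ℕ) + n) % n := by
      rw [← e1, ← e2]
      exact Nat.ModEq.add_right _ h
    rwa [Nat.add_mod_right, Nat.add_mod_right] at h2
  · intro h
    have h2 : (((b : ℕ) + n - (a : ℕ)) + ((a : ℕ) + (b : ℕ))) % n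
        = (((a : ℕ) + n - (b : ℕ)) + ((a : ℕ) + (b : ℕ))) % n := by
      rw [e1, e2, Nat.add_mod_right, Nat.add_mod_right]
      exact h
    exact Nat.ModEq.add_right_cancel' _ h2

lemma row_even (a : Fin (2 * n)) (ha : (a : ℕ) < n) :
    ((Finset.univ.filter (fun x : Fin (2 * n) => (x : ℕ) < n)).filter
      (fun b => a ≠ b ∧ ((b : ℕ) + n - (a : ℕ)) % n = ((a : ℕ) + n - (b : ℕ)) % n)).card
    = if Even n then 1 else 0 := by
  by_cases he : Even n
  · rw [if_pos he]
    obtain ⟨k, hk⟩ := he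
    have hk1 : 1 ≤ k := by omega
    have hwlt : ((a : ℕ) + k) % n < n := Nat.mod_lt _ (by omega)
    set w : Fin (2 * n) := ⟨((a : ℕ) + k) % n, by omega⟩ with hw
    have hwval : (w : ℕ) = if (a : ℕ) < k then (a : ℕ) + k else (a : ℕ) - k := by
      rw [hw]
      simp only
      by_cases hak : (a : ℕ) < k
      · rw [if_pos hak, Nat.mod_eq_of_lt (by omega)]
      · rw [if_neg hak, show (a : ℕ) + k = ((a : ℕ) - k) + n by omega, Nat.add_mod_right,
          Nat.mod_eq_of_lt (by omega)]
    have haw : a ≠ w := by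
      intro h
      have := congrArg Fin.val h
      rw [hwval] at this
      split_ifs at this <;> omega
    have hset : ((Finset.univ.filter (fun x : Fin (2 * n) => (x : ℕ) < n)).filter
        (fun b => a ≠ b ∧ ((b : ℕ) + n - (a : ℕ)) % n = ((a : ℕ) + n - (b : ℕ)) % n)) = {w} := by
      ext b
      simp only [Finset.mem_filter, Finset.mem_univ, true_and, Finset.mem_singleton]
      constructor
      · rintro ⟨hblt, hne, hcond⟩
        have h2 := (cond_iff hn a b ha hblt).mp hcond
        have hn2k : n = 2 * k := by omega
        have h2' : (2 * (b : ℕ)) % (2 * k) = (2 * (a : ℕ)) % (2 * k) := by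
          rw [← hn2k]; exact h2
        have hneval : (b : ℕ) ≠ (a : ℕ) := fun h => hne (Fin.ext h.symm)
        have hbeq : (b : ℕ) = ((a : ℕ) + k) % (2 * k) :=
          half_shift (by omega) (by omega) (by omega) hneval h2'
        rw [← hn2k] at hbeq
        exact Fin.ext hbeq
      · intro h
        subst h
        refine ⟨hwlt, haw, (cond_iff hn a w ha hwlt).mpr ?_⟩
        rw [hwval]
        by_cases hak : (a : ℕ) < k
        · rw [if_pos hak, show 2 * ((a : ℕ) + k) = 2 * (a : ℕ) + n by omega,
            Nat.add_mod_right]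
        · rw [if_neg hak]
          conv_rhs => rw [show 2 * (a : ℕ) = 2 * ((a : ℕ) - k) + n by omega]
          rw [Nat.add_mod_right]
    rw [hset, Finset.card_singleton]
  · rw [if_neg he]
    rw [Finset.card_eq_zero, Finset.eq_empty_iff_forall_notMem]
    intro b hb
    simp only [Finset.mem_filter, Finset.mem_univ, true_and] at hb
    obtain ⟨hblt, hne, hcond⟩ := hb
    have h2 : (2 * (b : ℕ)) % n = (2 * (a : ℕ)) % n := (cond_iff hn a b ha hblt).mp hcond
    have hco : n.gcd 2 = 1 := by
      have hd := Nat.gcd_dvd_right n 2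
      rcases (Nat.Prime.eq_one_or_self_of_dvd Nat.prime_two _ hd) with h | h
      · exact h
      · exfalso
        have h2n : 2 ∣ n := h ▸ Nat.gcd_dvd_left n 2
        obtain ⟨c, hc⟩ := h2n
        exact he ⟨c, by omega⟩
    have h3 : (b : ℕ) ≡ (a : ℕ) [MOD n] := Nat.ModEq.cancel_left_of_coprime hco h2
    have h4 : (b : ℕ) % n = (a : ℕ) % n := h3
    rw [Nat.mod_eq_of_lt hblt, Nat.mod_eq_of_lt ha] at h4
    exact hne (Fin.ext h4.symm)

end Counting3
end Prop34
namespace Prop34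
section Counting4
variable {n : ℕ} {σ : Equiv.Perm (Fin (2 * n))}
variable (hn : 2 ≤ n)
variable (hσ : ∀ i : Fin (2 * n),
      ((σ i : ℕ) = if (i : ℕ) < n then ((i : ℕ) + 1) % n else (i : ℕ)))
include hn hσ

lemma row_bot (a : Fin (2 * n)) (ha : (a : ℕ) < n) :
    ∑ b : Fin (2 * n), gfun σ a b
      = ((n - 1) * n.factorial + (if Even n then n.factorial else 0))
        + n * (n - 1).factorial := by
  rw [← Finset.sum_filter_add_sum_filter_not Finset.univ (fun b : Fin (2 * n) => (b : ℕ) < n)]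
  congr 1
  · -- b in the bottom half
    have hstep : ∀ b ∈ Finset.univ.filter (fun b : Fin (2 * n) => (b : ℕ) < n),
        gfun σ a b = (if a = b then 0 else n.factorial)
          + (if a ≠ b ∧ ((b : ℕ) + n - (a : ℕ)) % n = ((a : ℕ) + n - (b : ℕ)) % n
              then n.factorial else 0) := by
      intro b hb
      have hblt := (Finset.mem_filter.mp hb).2
      by_cases hab : a = b
      · subst hab
        rw [gfun_self, if_pos rfl, if_neg (by simp), add_zero]
      · rw [gfun_ne hab, St2_bb hn hσ a b ha hblt hab, if_neg hab]
        by_cases hc : ((b : ℕ) + n - (a : ℕ)) % n = ((a : ℕ) + n - (b : ℕ)) % n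
        · rw [if_pos hc, if_pos ⟨hab, hc⟩]
          ring
        · rw [if_neg hc, if_neg (by tauto), one_mul, add_zero]
    rw [Finset.sum_congr rfl hstep, Finset.sum_add_distrib]
    congr 1
    · -- ∑ (if a = b then 0 else n!) = (n-1) * n!
      have hmem : a ∈ Finset.univ.filter (fun b : Fin (2 * n) => (b : ℕ) < n) :=
        Finset.mem_filter.mpr ⟨Finset.mem_univ _, ha⟩
      rw [← Finset.add_sum_erase _ _ hmem, if_pos rfl, zero_add,
        Finset.sum_congr rfl (fun b hb => if_neg (Ne.symm (Finset.mem_erase.mp hb).1)),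
        Finset.sum_const, smul_eq_mul, Finset.card_erase_of_mem hmem, card_bot hn]
    · rw [sum_ite_const _ _ n.factorial, row_even hn a ha]
      split_ifs <;> simp
  · -- b in the top half
    rw [Finset.sum_congr rfl (fun b hb => ?_), Finset.sum_const, smul_eq_mul, card_top hn]
    have hbge := (Finset.mem_filter.mp hb).2
    have hab : a ≠ b := fun h => hbge (h ▸ ha)
    rw [gfun_ne hab, St2_bt hn hσ a b ha hbge]

lemma row_top (a : Fin (2 * n)) (ha : ¬ (a : ℕ) < n) :
    ∑ b : Fin (2 * n), gfun σ a b
      = n * (n - 1).factorial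
        + (n - 1) * (n * ((n - 2).factorial + (n - 2).factorial)) := by
  rw [← Finset.sum_filter_add_sum_filter_not Finset.univ (fun b : Fin (2 * n) => (b : ℕ) < n)]
  congr 1
  · -- b in the bottom half
    rw [Finset.sum_congr rfl (fun b hb => ?_), Finset.sum_const, smul_eq_mul, card_bot hn]
    have hblt := (Finset.mem_filter.mp hb).2
    have hab : a ≠ b := fun h => ha (h ▸ hblt)
    rw [gfun_ne hab, St2_tb hn hσ a b ha hblt]
  · -- b in the top half
    have hmem : a ∈ Finset.univ.filter (fun b : Fin (2 * n) => ¬ (b : ℕ) < n) :=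
      Finset.mem_filter.mpr ⟨Finset.mem_univ _, ha⟩
    rw [← Finset.add_sum_erase _ _ hmem, gfun_self, zero_add,
      Finset.sum_congr rfl (fun b hb => ?_), Finset.sum_const, smul_eq_mul,
      Finset.card_erase_of_mem hmem, card_top hn]
    have hb' := Finset.mem_erase.mp hb
    have hab : a ≠ b := Ne.symm hb'.1
    have hbge := (Finset.mem_filter.mp hb'.2).2
    rw [gfun_ne hab, St2_tt hn hσ a b ha hbge hab]

lemma sum2 : ∑ d : Fin n × Equiv.Perm (Fin n), 2 * F 2 (Phi σ d)
    = n * (((n - 1) * n.factorial + (if Even n then n.factorial else 0))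
        + n * (n - 1).factorial)
      + n * (n * (n - 1).factorial
        + (n - 1) * (n * ((n - 2).factorial + (n - 2).factorial))) := by
  have h1 : ∑ d : Fin n × Equiv.Perm (Fin n), 2 * F 2 (Phi σ d)
      = ∑ p : Fin (2 * n) × Fin (2 * n), gfun σ p.1 p.2 := by
    rw [Finset.sum_congr rfl (fun d _ => two_mul_F_two (Phi σ d)),
      sum_card_swap (Finset.univ : Finset (Fin n × Equiv.Perm (Fin n)))
        ((Finset.univ ×ˢ Finset.univ) : Finset (Fin (2 * n) × Fin (2 * n)))
        (fun d p => p.1 ≠ p.2 ∧ ((Phi σ d p.1 = p.1 ∧ Phi σ d p.2 = p.2)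
          ∨ (Phi σ d p.1 = p.2 ∧ Phi σ d p.2 = p.1))),
      Finset.univ_product_univ]
    rfl
  rw [h1, Fintype.sum_prod_type,
    ← Finset.sum_filter_add_sum_filter_not Finset.univ (fun a : Fin (2 * n) => (a : ℕ) < n)]
  congr 1
  · rw [Finset.sum_congr rfl (fun a ha => row_bot hn hσ a (Finset.mem_filter.mp ha).2),
      Finset.sum_const, smul_eq_mul, card_bot hn]
  · rw [Finset.sum_congr rfl (fun a ha => row_top hn hσ a (Finset.mem_filter.mp ha).2),
      Finset.sum_const, smul_eq_mul, card_top hn]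

end Counting4
end Prop34
open scoped Classical in
/-- Proposition 3.4: the multiplicity of `χ^{(2n-2,2)}` in `Ind_C^{S_{2n}} 1_C` equals
`n/2` if `n` is even and `(n-1)/2` if `n` is odd; expressed denominator-free as
`2 ⬝ Σ_{τ ∈ C} (F 2 τ - F 1 τ) = n² ⬝ n!` (n even) resp. `n(n-1) ⬝ n!` (n odd). -/
theorem chi_2n_minus_2_2_multiplicity (n : ℕ) (hn : 2 ≤ n) (σ : Equiv.Perm (Fin (2 * n)))
    (hσ : ∀ i : Fin (2 * n),
      ((σ i : ℕ) = if (i : ℕ) < n then ((i : ℕ) + 1) % n else (i : ℕ))) :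
    (Even n →
      2 * ∑ τ : Subgroup.centralizer {σ},
        ((F 2 (τ : Equiv.Perm (Fin (2 * n))) : ℤ)
          - (F 1 (τ : Equiv.Perm (Fin (2 * n))) : ℤ))
        = (n : ℤ) ^ 2 * n.factorial) ∧
    (Odd n →
      2 * ∑ τ : Subgroup.centralizer {σ},
        ((F 2 (τ : Equiv.Perm (Fin (2 * n))) : ℤ)
          - (F 1 (τ : Equiv.Perm (Fin (2 * n))) : ℤ))
        = (n : ℤ) * ((n : ℤ) - 1) * n.factorial) := by
  have hbij := Prop34.Phi_bijective hn hσ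
  have htrans : ∑ τ : Subgroup.centralizer {σ},
        ((F 2 (τ : Equiv.Perm (Fin (2 * n))) : ℤ)
          - (F 1 (τ : Equiv.Perm (Fin (2 * n))) : ℤ))
      = ∑ d : Fin n × Equiv.Perm (Fin n),
        ((F 2 (Prop34.Phi σ d) : ℤ) - (F 1 (Prop34.Phi σ d) : ℤ)) :=
    (Fintype.sum_bijective _ hbij _ _ (fun d => rfl)).symm
  have hmain : 2 * ∑ d : Fin n × Equiv.Perm (Fin n),
        ((F 2 (Prop34.Phi σ d) : ℤ) - (F 1 (Prop34.Phi σ d) : ℤ))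
      = ((∑ d : Fin n × Equiv.Perm (Fin n), 2 * F 2 (Prop34.Phi σ d) : ℕ) : ℤ)
        - 2 * ((∑ d : Fin n × Equiv.Perm (Fin n), F 1 (Prop34.Phi σ d) : ℕ) : ℤ) := by
    push_cast
    rw [Finset.mul_sum, Finset.mul_sum, ← Finset.sum_sub_distrib]
    apply Finset.sum_congr rfl
    intro d _
    ring
  rw [Prop34.sum2 hn hσ, Prop34.sumF1 hn hσ] at hmain
  obtain ⟨m, rfl⟩ : ∃ m, n = m + 2 := ⟨n - 2, by omega⟩
  have hm1 : m + 2 - 1 = m + 1 := by omega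
  have hm2 : m + 2 - 2 = m := by omega
  rw [hm1, hm2] at hmain
  have hf2 : (((m + 2).factorial : ℕ) : ℤ) = (m + 2) * ((m + 1) * (m.factorial : ℤ)) := by
    rw [Nat.factorial_succ, Nat.factorial_succ]; push_cast; ring
  have hf1 : (((m + 1).factorial : ℕ) : ℤ) = (m + 1) * (m.factorial : ℤ) := by
    rw [Nat.factorial_succ]; push_cast; ring
  constructor
  · intro he
    rw [if_pos he] at hmain
    rw [htrans, hmain]
    push_cast [hf2, hf1]
    ring
  · intro ho
    rw [if_neg (Nat.not_even_iff_odd.mpr ho)] at hmain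
    rw [htrans, hmain]
    push_cast [hf2, hf1]
    ring
end

section
/- (Theorem 3.5: multiplicity of χ^{(2n-k,k)} in Ind_C^{S_{2n}} 1_C.) Let k ≥ 1 and n ≥ 2k. Let σ ∈ Equiv.Perm (Fin (2*n)) be the n-cycle with σ(i) = i+1 mod n for i < n and σ(i) = i for i ≥ n, and let C = Subgroup.centralizer {σ}. For 1 < h < n write d_h = gcd(n,h). Then Σ_{τ ∈ C} (F k τ − F (k−1) τ) = n! · ( C(n,k) + Σ_{1<h<n, d_h ≠ 1, (n/d_h) ∣ k} C(d_h, k·d_h/n) ), where C(a,b) denotes the binomial coefficient; equivalently, the multiplicity of χ^{(2n−k,k)} in Ind_C^{S_{2n}} 1_C equals (1/n)·( C(n,k) + Σ_{1<h<n, d_h ≠ 1, (n/d_h) ∣ k} C(d_h, k·d_h/n) ). -/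
set_option linter.unusedSectionVars false
set_option maxHeartbeats 1000000

open Finset Equiv

/-- counting invariant k-subsets, general version -/
def G {α : Type*} [Fintype α] [DecidableEq α] (k : ℕ) (g : Equiv.Perm α) : ℕ :=
  ((Finset.univ : Finset (Finset α)).filter
    (fun s => s.card = k ∧ s.image g = s)).card

lemma fimage_symm_image {α β : Type*} [DecidableEq α] [DecidableEq β]
    (e : α ≃ β) (t : Finset α) : (t.image e).image e.symm = t := by
  rw [Finset.image_image]; simp

lemma fimage_image_symm {α β : Type*} [DecidableEq α] [DecidableEq β]
    (e : α ≃ β) (t : Finset β) : (t.image e.symm).image e = t := by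
  rw [Finset.image_image]; simp

lemma image_image_perm {α β : Type*} [DecidableEq α] [DecidableEq β]
    (e : α ≃ β) (g : Equiv.Perm α) (s : Finset β) :
    (s.image (e.permCongr g)).image e.symm = (s.image e.symm).image g := by
  rw [Finset.image_image, Finset.image_image]
  apply Finset.image_congr
  intro x _
  simp [Equiv.permCongr_apply]

lemma G_permCongr {α β : Type*} [Fintype α] [DecidableEq α] [Fintype β] [DecidableEq β]
    (e : α ≃ β) (k : ℕ) (g : Equiv.Perm α) : G k (e.permCongr g) = G k g := by
  unfold G
  refine Finset.card_bij' (fun s _ => s.image e.symm) (fun t _ => t.image e) ?_ ?_ ?_ ?_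
  · intro s hs
    simp only [mem_filter, mem_univ, true_and] at hs ⊢
    obtain ⟨h1, h2⟩ := hs
    exact ⟨by rw [Finset.card_image_of_injective _ e.symm.injective, h1],
      by rw [← image_image_perm, h2]⟩
  · intro t ht
    simp only [mem_filter, mem_univ, true_and] at ht ⊢
    obtain ⟨h1, h2⟩ := ht
    refine ⟨by rw [Finset.card_image_of_injective _ e.injective, h1], ?_⟩
    apply Finset.image_injective e.symm.injective
    rw [image_image_perm, fimage_symm_image]; exact h2
  · intro s _; exact fimage_image_symm e s
  · intro t _; exact fimage_symm_image e t

section sums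
variable {α β : Type*} [Fintype α] [DecidableEq α] [Fintype β] [DecidableEq β]

lemma finset_sum_ext {u v : Finset (α ⊕ β)} :
    u = v ↔ u.toLeft = v.toLeft ∧ u.toRight = v.toRight := by
  constructor
  · rintro rfl; exact ⟨rfl, rfl⟩
  · rintro ⟨h1, h2⟩
    ext x
    cases x with
    | inl a => rw [← Finset.mem_toLeft, ← Finset.mem_toLeft, h1]
    | inr b => rw [← Finset.mem_toRight, ← Finset.mem_toRight, h2]

lemma toLeft_image_sumCongr (g : Equiv.Perm α) (h : Equiv.Perm β) (u : Finset (α ⊕ β)) :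
    (u.image (Equiv.sumCongr g h)).toLeft = u.toLeft.image g := by
  ext x
  simp only [Finset.mem_toLeft, Finset.mem_image, Sum.exists, Equiv.sumCongr_apply,
    Sum.map_inl, Sum.map_inr]
  constructor
  · rintro (⟨a, ha, hx⟩ | ⟨b, hb, hx⟩)
    · exact ⟨a, ha, by simpa using hx⟩
    · simp at hx
  · rintro ⟨a, ha, rfl⟩
    exact Or.inl ⟨a, ha, rfl⟩

lemma toRight_image_sumCongr (g : Equiv.Perm α) (h : Equiv.Perm β) (u : Finset (α ⊕ β)) :
    (u.image (Equiv.sumCongr g h)).toRight = u.toRight.image h := by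
  ext x
  simp only [Finset.mem_toRight, Finset.mem_image, Sum.exists, Equiv.sumCongr_apply,
    Sum.map_inl, Sum.map_inr]
  constructor
  · rintro (⟨a, ha, hx⟩ | ⟨b, hb, hx⟩)
    · simp at hx
    · exact ⟨b, hb, by simpa using hx⟩
  · rintro ⟨b, hb, rfl⟩
    exact Or.inr ⟨b, hb, rfl⟩

lemma G_sumCongr (g : Equiv.Perm α) (h : Equiv.Perm β) (k : ℕ) :
    G k (Equiv.sumCongr g h) = ∑ a ∈ Finset.range (k+1), G a g * G (k-a) h := by
  unfold G
  rw [Finset.card_eq_sum_card_fiberwise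
    (f := fun u : Finset (α ⊕ β) => u.toLeft.card) (t := Finset.range (k+1))
    (fun u hu => by
      simp only [mem_coe, mem_filter, mem_univ, true_and] at hu
      exact Finset.mem_range.2 (Nat.lt_succ_of_le (hu.1 ▸ Finset.card_toLeft_le)))]
  refine Finset.sum_congr rfl (fun a ha => ?_)
  rw [Finset.mem_range, Nat.lt_succ_iff] at ha
  rw [← Finset.card_product]
  refine Finset.card_bij' (fun u _ => (u.toLeft, u.toRight))
    (fun p _ => p.1.disjSum p.2) ?_ ?_ ?_ ?_
  · intro u hu
    simp only [Finset.filter_filter, mem_filter, mem_univ, true_and] at hu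
    obtain ⟨⟨hcard, hinv⟩, hleft⟩ := hu
    rw [finset_sum_ext, toLeft_image_sumCongr, toRight_image_sumCongr] at hinv
    simp only [Finset.mem_product, mem_filter, mem_univ, true_and]
    refine ⟨⟨hleft, hinv.1⟩, ?_, hinv.2⟩
    have := Finset.card_toLeft_add_card_toRight (u := u)
    omega
  · intro p hp
    simp only [Finset.mem_product, mem_filter, mem_univ, true_and] at hp
    obtain ⟨⟨hc1, hi1⟩, hc2, hi2⟩ := hp
    simp only [Finset.filter_filter, mem_filter, mem_univ, true_and]
    refine ⟨⟨?_, ?_⟩, by simp [hc1]⟩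
    · rw [Finset.card_disjSum, hc1, hc2]; omega
    · rw [finset_sum_ext, toLeft_image_sumCongr, toRight_image_sumCongr]
      simp [hi1, hi2]
  · intro u _; exact Finset.toLeft_disjSum_toRight
  · intro p _; simp
end sums

section burnside
variable {α : Type*} [Fintype α] [DecidableEq α]

lemma stab_card (s : Finset α) :
    (Finset.univ.filter fun π : Equiv.Perm α => s.image π = s).card
      = (s.card).factorial * (Fintype.card α - s.card).factorial := by
  have hcard : (Finset.univ : Finset (Equiv.Perm {x // x ∈ s} × Equiv.Perm {x // ¬ x ∈ s})).card
      = (s.card).factorial * (Fintype.card α - s.card).factorial := by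
    rw [Finset.card_univ, Fintype.card_prod, Fintype.card_perm, Fintype.card_perm,
      Fintype.card_subtype_compl]
    congr 2 <;> rw [Fintype.card_coe]
  rw [← hcard]
  refine Finset.card_bij' (fun π hπ => ?_) (fun p _ => p.1.subtypeCongr p.2) ?_ ?_ ?_ ?_
  · -- construct the pair
    simp only [mem_filter, mem_univ, true_and] at hπ
    have h1 : ∀ x : α, x ∈ s ↔ π x ∈ s := by
      intro x
      constructor
      · intro hx; rw [← hπ]; exact Finset.mem_image_of_mem _ hx
      · intro hx
        rw [← hπ] at hx
        obtain ⟨y, hy, hyx⟩ := Finset.mem_image.1 hx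
        rwa [← π.injective hyx]
    have h2 : ∀ x : α, ¬ x ∈ s ↔ ¬ π x ∈ s := fun x => not_congr (h1 x)
    exact (π.subtypePerm (fun x => (h1 x).symm), π.subtypePerm (fun x => (h2 x).symm))
  · intro π hπ; exact Finset.mem_univ _
  · intro p _
    simp only [mem_filter, mem_univ, true_and]
    apply Finset.eq_of_subset_of_card_le
    · intro x hx
      obtain ⟨y, hy, rfl⟩ := Finset.mem_image.1 hx
      rw [Equiv.Perm.subtypeCongr.left_apply _ _ hy]
      exact (p.1 ⟨y, hy⟩).2
    · rw [Finset.card_image_of_injective _ (Equiv.injective _)]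
  · intro π hπ
    simp only [mem_filter, mem_univ, true_and] at hπ
    ext x
    by_cases hx : x ∈ s
    · rw [Equiv.Perm.subtypeCongr.left_apply _ _ hx]; rfl
    · rw [Equiv.Perm.subtypeCongr.right_apply _ _ hx]; rfl
  · intro p _
    ext x
    · rw [Equiv.Perm.subtypePerm_apply]
      simp only []
      rw [Equiv.Perm.subtypeCongr.left_apply _ _ x.2]
    · rw [Equiv.Perm.subtypePerm_apply]
      simp only []
      rw [Equiv.Perm.subtypeCongr.right_apply _ _ x.2]

lemma G_eq_powersetCard (b : ℕ) (π : Equiv.Perm α) :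
    G b π = ((Finset.univ.powersetCard b).filter (fun s : Finset α => s.image π = s)).card := by
  rw [G, Finset.powersetCard_eq_filter, Finset.powerset_univ, Finset.filter_filter]

lemma sum_G_perm (b : ℕ) (hb : b ≤ Fintype.card α) :
    (∑ π : Equiv.Perm α, G b π) = (Fintype.card α).factorial := by
  have : ∀ π : Equiv.Perm α, G b π
      = ∑ s ∈ Finset.univ.powersetCard b, if s.image π = s then 1 else 0 := by
    intro π; rw [G_eq_powersetCard, Finset.card_filter]
  simp_rw [this]
  rw [Finset.sum_comm]
  have step : ∀ s ∈ Finset.univ.powersetCard b,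
      (∑ π : Equiv.Perm α, if s.image π = s then 1 else 0)
        = b.factorial * (Fintype.card α - b).factorial := by
    intro s hs
    have hcb : s.card = b := (Finset.mem_powersetCard_univ.1 hs)
    rw [← Finset.card_filter]
    rw [stab_card s, hcb]
  rw [Finset.sum_congr rfl step, Finset.sum_const, smul_eq_mul,
    Finset.card_powersetCard, Finset.card_univ]
  rw [← Nat.choose_mul_factorial_mul_factorial hb, mul_assoc]
end burnside

section rot
variable {n : ℕ} [NeZero n]

/-- invariance of a finset under adding `c` -/
def Invc (c : ZMod n) (s : Finset (ZMod n)) : Prop := ∀ x ∈ s, x + c ∈ s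

lemma image_addRight_eq_iff (c : ZMod n) (s : Finset (ZMod n)) :
    s.image (Equiv.addRight c) = s ↔ Invc c s := by
  constructor
  · intro h x hx
    have := Finset.mem_image_of_mem (Equiv.addRight c) hx
    rw [h] at this
    simpa using this
  · intro h
    apply Finset.eq_of_subset_of_card_le
    · intro y hy
      obtain ⟨x, hx, rfl⟩ := Finset.mem_image.1 hy
      simpa using h x hx
    · rw [Finset.card_image_of_injective _ (Equiv.injective _)]

lemma Invc_nsmul {c : ZMod n} {s : Finset (ZMod n)} (h : Invc c s) (m : ℕ) :
    Invc (m • c) s := by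
  induction m with
  | zero => intro x hx; simpa using hx
  | succ m ih =>
    intro x hx
    have := h _ (ih x hx)
    rwa [succ_nsmul, ← add_assoc]

lemma Invc_iff_gcd (j : ZMod n) (s : Finset (ZMod n)) :
    Invc j s ↔ Invc ((Nat.gcd n j.val : ℕ) : ZMod n) s := by
  constructor
  · intro h
    have key : ∃ m : ℕ, (m • j : ZMod n) = ((Nat.gcd n j.val : ℕ) : ZMod n) := by
      have hb := Nat.gcd_eq_gcd_ab n j.val
      have : ((Nat.gcd n j.val : ℤ) : ZMod n) = ((j.val : ℤ) : ZMod n) * ((Nat.gcdB n j.val : ℤ) : ZMod n) := by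
        rw [hb]
        push_cast
        rw [ZMod.natCast_self]
        ring
      refine ⟨(((Nat.gcdB n j.val : ℤ) : ZMod n)).val, ?_⟩
      rw [nsmul_eq_mul, ZMod.natCast_rightInverse _]
      push_cast at this
      rw [show ((j.val : ℕ) : ZMod n) = j from ZMod.natCast_rightInverse j] at this
      rw [mul_comm]; exact this.symm
    obtain ⟨m, hm⟩ := key
    rw [← hm]
    exact Invc_nsmul h m
  · intro h
    have key : ((j.val / Nat.gcd n j.val) • ((Nat.gcd n j.val : ℕ) : ZMod n) : ZMod n) = j := by
      rw [nsmul_eq_mul]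
      norm_cast
      rw [Nat.div_mul_cancel (Nat.gcd_dvd_right n j.val)]
      exact ZMod.natCast_rightInverse j
    rw [← key]
    exact Invc_nsmul h _
end rot

section rot2
variable {n : ℕ} [NeZero n]

/-- reduction mod d -/
def qm (d : ℕ) [NeZero d] (x : ZMod n) : Fin d :=
  ⟨x.val % d, Nat.mod_lt _ (Nat.pos_of_ne_zero (NeZero.ne d))⟩

lemma qm_add (d : ℕ) [NeZero d] (hd : d ∣ n) (x : ZMod n) :
    qm d (x + (d : ZMod n)) = qm d x := by
  have hn0 : 0 < n := Nat.pos_of_ne_zero (NeZero.ne n)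
  have hd0 : 0 < d := Nat.pos_of_ne_zero (NeZero.ne d)
  apply Fin.ext
  show (x + (d : ZMod n)).val % d = x.val % d
  rw [ZMod.val_add, ZMod.val_natCast, Nat.mod_mod_of_dvd _ hd]
  have hdn : d % n % d = 0 := by
    rcases Nat.lt_or_ge d n with h | h
    · rw [Nat.mod_eq_of_lt h, Nat.mod_self]
    · have : d = n := Nat.le_antisymm (Nat.le_of_dvd hn0 hd) h
      rw [this, Nat.mod_self, Nat.zero_mod]
  rw [Nat.add_mod, hdn, Nat.add_zero]
  try rw [Nat.mod_mod_of_dvd _ (dvd_refl d)]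

lemma card_fiber (d : ℕ) [NeZero d] (hd : d ∣ n) (r : Fin d) :
    (Finset.univ.filter fun x : ZMod n => qm d x = r).card = n / d := by
  have hn0 : 0 < n := Nat.pos_of_ne_zero (NeZero.ne n)
  have hd0 : 0 < d := Nat.pos_of_ne_zero (NeZero.ne d)
  have hmul : n / d * d = n := Nat.div_mul_cancel hd
  rw [← Finset.card_range (n / d)]
  refine Finset.card_bij' (fun x _ => x.val / d) (fun c _ => (((r : ℕ) + c * d : ℕ) : ZMod n))
    ?_ ?_ ?_ ?_
  · intro x hx
    exact Finset.mem_range.2 (Nat.div_lt_div_of_lt_of_dvd hd (ZMod.val_lt x))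
  · intro c hc
    rw [Finset.mem_range] at hc
    have hlt : (r : ℕ) + c * d < n := by
      have h1 : (c + 1) * d ≤ (n / d) * d := Nat.mul_le_mul_right d hc
      have h2 : (c + 1) * d = c * d + d := by ring
      have h3 : (r : ℕ) < d := r.2
      omega
    simp only [mem_filter, mem_univ, true_and]
    apply Fin.ext
    show (((r : ℕ) + c * d : ℕ) : ZMod n).val % d = (r : ℕ)
    rw [ZMod.val_cast_of_lt hlt, Nat.add_mul_mod_self_right, Nat.mod_eq_of_lt r.2]
  · intro x hx
    simp only [mem_filter, mem_univ, true_and] at hx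
    have hr : (r : ℕ) = x.val % d := by rw [← hx]; rfl
    have : (r : ℕ) + x.val / d * d = x.val := by
      rw [hr]; rw [Nat.mod_add_div' x.val d]
    show (((r : ℕ) + x.val / d * d : ℕ) : ZMod n) = x
    rw [this]
    exact ZMod.natCast_rightInverse x
  · intro c hc
    rw [Finset.mem_range] at hc
    have hlt : (r : ℕ) + c * d < n := by
      have h1 : (c + 1) * d ≤ (n / d) * d := Nat.mul_le_mul_right d hc
      have h2 : (c + 1) * d = c * d + d := by ring
      have h3 : (r : ℕ) < d := r.2
      omega
    show (((r : ℕ) + c * d : ℕ) : ZMod n).val / d = c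
    rw [ZMod.val_cast_of_lt hlt, Nat.add_mul_div_right _ _ hd0, Nat.div_eq_of_lt r.2, Nat.zero_add]

lemma invc_iff_qm (d : ℕ) [NeZero d] (hd : d ∣ n) (s : Finset (ZMod n)) :
    Invc ((d : ℕ) : ZMod n) s ↔ ∀ x y : ZMod n, qm d x = qm d y → x ∈ s → y ∈ s := by
  have hd0 : 0 < d := Nat.pos_of_ne_zero (NeZero.ne d)
  constructor
  · intro h x y hxy hx
    have hmod : x.val % d = y.val % d := congrArg Fin.val hxy
    have hle : x.val ≤ y.val + n := by
      have := ZMod.val_lt x; omega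
    have hdvd : d ∣ (y.val + n - x.val) := by
      have h1 : x.val ≡ y.val + n [MOD d] := by
        have hn' : n % d = 0 := Nat.eq_zero_of_dvd_of_lt hd |> fun _ => by
          obtain ⟨c, rfl⟩ := hd; simp [Nat.mul_mod_right]
        unfold Nat.ModEq
        rw [Nat.add_mod, hn', Nat.add_zero, hmod]
        try rw [Nat.mod_mod_of_dvd _ (dvd_refl d)]
      exact (Nat.modEq_iff_dvd' hle).1 h1
    set m := (y.val + n - x.val) / d with hm
    have hmd : m * d = y.val + n - x.val := Nat.div_mul_cancel hdvd
    have hcast : ((m * d : ℕ) : ZMod n) = y - x := by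
      rw [hmd, Nat.cast_sub hle]
      push_cast
      rw [ZMod.natCast_self, ZMod.natCast_rightInverse x, ZMod.natCast_rightInverse y]
      ring
    have := Invc_nsmul h m x hx
    rw [nsmul_eq_mul] at this
    have heq : x + (m : ZMod n) * ((d : ℕ) : ZMod n) = y := by
      rw [← Nat.cast_mul, hcast]; ring
    rwa [heq] at this
  · intro h x hx
    exact h x (x + (d : ZMod n)) ((qm_add d hd x).symm) hx

lemma card_filter_qm (d : ℕ) [NeZero d] (hd : d ∣ n) (t : Finset (Fin d)) :
    (Finset.univ.filter fun x : ZMod n => qm d x ∈ t).card = t.card * (n / d) := by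
  rw [Finset.card_eq_sum_card_fiberwise (f := qm d) (t := t)
    (s := Finset.univ.filter fun x : ZMod n => qm d x ∈ t)
    (fun x hx => (Finset.mem_filter.1 hx).2)]
  rw [Finset.sum_congr rfl (fun r hr => ?_), Finset.sum_const, smul_eq_mul]
  rw [Finset.filter_filter]
  rw [Finset.filter_congr (fun x _ =>
    (show (qm d x ∈ t ∧ qm d x = r) ↔ qm d x = r from ⟨fun h => h.2, fun h => ⟨h ▸ hr, h⟩⟩))]
  exact card_fiber d hd r

end rot2

section rot3
variable {n : ℕ} [NeZero n]

lemma eq_filter_of_qm (d : ℕ) [NeZero d] {s : Finset (ZMod n)}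
    (hq : ∀ x y : ZMod n, qm d x = qm d y → x ∈ s → y ∈ s) :
    s = Finset.univ.filter (fun x => qm d x ∈ s.image (qm d)) := by
  ext x
  simp only [Finset.mem_filter, Finset.mem_univ, true_and, Finset.mem_image]
  constructor
  · intro hx; exact ⟨x, hx, rfl⟩
  · rintro ⟨y, hy, hyx⟩; exact hq y x hyx hy

lemma card_of_qm (d : ℕ) [NeZero d] (hd : d ∣ n) {s : Finset (ZMod n)}
    (hq : ∀ x y : ZMod n, qm d x = qm d y → x ∈ s → y ∈ s) :
    s.card = (s.image (qm d)).card * (n / d) := by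
  conv_lhs => rw [eq_filter_of_qm d hq]
  exact card_filter_qm d hd _

lemma qm_surj (d : ℕ) [NeZero d] (hd : d ∣ n) (r : Fin d) :
    qm d (((r : ℕ) : ZMod n)) = r := by
  have hn0 : 0 < n := Nat.pos_of_ne_zero (NeZero.ne n)
  have hlt : (r : ℕ) < n := lt_of_lt_of_le r.2 (Nat.le_of_dvd hn0 hd)
  apply Fin.ext
  show (((r : ℕ) : ZMod n)).val % d = (r : ℕ)
  rw [ZMod.val_cast_of_lt hlt, Nat.mod_eq_of_lt r.2]

lemma G_addRight (k : ℕ) (j : ZMod n) :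
    G k (Equiv.addRight j) =
      if (n / Nat.gcd n j.val) ∣ k then (Nat.gcd n j.val).choose (k * Nat.gcd n j.val / n)
      else 0 := by
  set d := Nat.gcd n j.val with hdd
  have hn0 : 0 < n := Nat.pos_of_ne_zero (NeZero.ne n)
  have hd : d ∣ n := Nat.gcd_dvd_left n j.val
  have hd0 : 0 < d := Nat.gcd_pos_of_pos_left _ hn0
  haveI : NeZero d := ⟨hd0.ne'⟩
  have hm0 : 0 < n / d := Nat.div_pos (Nat.le_of_dvd hn0 hd) hd0
  have hkd : k * d / n = k / (n / d) := by
    obtain ⟨m, hm⟩ := hd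
    rw [hm, Nat.mul_div_cancel_left m hd0, mul_comm k d, Nat.mul_div_mul_left _ _ hd0]
  have hpred : ∀ s : Finset (ZMod n), (s.image (Equiv.addRight j) = s)
      ↔ (∀ x y : ZMod n, qm d x = qm d y → x ∈ s → y ∈ s) := fun s =>
    (image_addRight_eq_iff j s).trans ((Invc_iff_gcd j s).trans (invc_iff_qm d hd s))
  rw [G, Finset.filter_congr (fun s _ => and_congr_right (fun _ => hpred s))]
  by_cases hdvd : (n / d) ∣ k
  · rw [if_pos hdvd, hkd]
    have hpc : ((Finset.univ : Finset (Fin d)).powersetCard (k / (n / d))).card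
        = d.choose (k / (n / d)) := by
      rw [Finset.card_powersetCard, Finset.card_univ, Fintype.card_fin]
    rw [← hpc]
    refine Finset.card_bij' (fun s _ => s.image (qm d))
      (fun t _ => Finset.univ.filter (fun x => qm d x ∈ t)) ?_ ?_ ?_ ?_
    · intro s hs
      simp only [Finset.mem_filter, Finset.mem_univ, true_and] at hs
      obtain ⟨hcard, hq⟩ := hs
      rw [Finset.mem_powersetCard_univ]
      have := card_of_qm d hd hq
      rw [hcard] at this
      show (Finset.image (qm d) s).card = k / (n / d)
      exact (Nat.div_eq_of_eq_mul_left hm0 this).symm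
    · intro t ht
      rw [Finset.mem_powersetCard_univ] at ht
      simp only [Finset.mem_filter, Finset.mem_univ, true_and]
      constructor
      · rw [card_filter_qm d hd t, ht, Nat.div_mul_cancel hdvd]
      · intro x y hxy hx
        rwa [← hxy]

    · intro s hs
      simp only [Finset.mem_filter, Finset.mem_univ, true_and] at hs
      exact (eq_filter_of_qm d hs.2).symm
    · intro t _
      ext r
      simp only [Finset.mem_image, Finset.mem_filter, Finset.mem_univ, true_and]
      constructor
      · rintro ⟨x, hx, rfl⟩; exact hx
      · intro hr
        exact ⟨((r : ℕ) : ZMod n), by rw [qm_surj d hd r]; exact hr, qm_surj d hd r⟩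
  · rw [if_neg hdvd]
    rw [Finset.card_eq_zero, Finset.eq_empty_iff_forall_notMem]
    intro s hs
    simp only [Finset.mem_filter, Finset.mem_univ, true_and] at hs
    obtain ⟨hcard, hq⟩ := hs
    apply hdvd
    rw [← hcard, card_of_qm d hd hq]
    exact Dvd.intro_left _ rfl

end rot3

section glue

lemma G_subtypeCongr {ε : Type*} [Fintype ε] [DecidableEq ε] {p : ε → Prop} [DecidablePred p]
    (ep : Equiv.Perm {a // p a}) (en : Equiv.Perm {a // ¬ p a}) (k : ℕ) :
    G k (ep.subtypeCongr en) = ∑ a ∈ Finset.range (k+1), G a ep * G (k-a) en := by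
  have h : ep.subtypeCongr en = (Equiv.sumCompl p).permCongr (Equiv.sumCongr ep en) := rfl
  rw [h, G_permCongr, G_sumCongr]

def botEquiv (n : ℕ) [NeZero n] : {i : Fin (2*n) // (i : ℕ) < n} ≃ ZMod n where
  toFun x := ((x.1 : ℕ) : ZMod n)
  invFun r := ⟨⟨r.val, by have := ZMod.val_lt r; omega⟩, by simpa using ZMod.val_lt r⟩
  left_inv x := by
    apply Subtype.ext; apply Fin.ext
    simp [ZMod.val_cast_of_lt x.2]
  right_inv r := by simpa using ZMod.natCast_rightInverse r

def topEquiv (n : ℕ) : {i : Fin (2*n) // ¬ ((i : ℕ) < n)} ≃ Fin n where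
  toFun x := ⟨(x.1 : ℕ) - n, by have h2 := x.1.2; have := x.2; omega⟩
  invFun r := ⟨⟨n + r.1, by have := r.2; omega⟩, by simp⟩
  left_inv x := by
    apply Subtype.ext; apply Fin.ext
    have := x.2; simp; omega
  right_inv r := by apply Fin.ext; simp

def Phi (n : ℕ) [NeZero n] (j : ZMod n) (π : Equiv.Perm (Fin n)) : Equiv.Perm (Fin (2*n)) :=
  Equiv.Perm.subtypeCongr
    (((botEquiv n).symm).permCongr (Equiv.addRight j))
    (((topEquiv n).symm).permCongr π)

lemma Phi_apply_bot {n : ℕ} [NeZero n] (j : ZMod n) (π : Equiv.Perm (Fin n))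
    {i : Fin (2*n)} (h : (i : ℕ) < n) :
    Phi n j π i = ((botEquiv n).symm ((botEquiv n) ⟨i, h⟩ + j) : {x : Fin (2*n) // (x : ℕ) < n}).1 := by
  rw [Phi]
  refine Eq.trans (Equiv.Perm.subtypeCongr.left_apply
    (p := fun x : Fin (2*n) => (x : ℕ) < n) _ _ h) ?_
  simp [Equiv.permCongr_apply]

lemma Phi_val_bot {n : ℕ} [NeZero n] (j : ZMod n) (π : Equiv.Perm (Fin n))
    {i : Fin (2*n)} (h : (i : ℕ) < n) :
    ((Phi n j π i : Fin (2*n)) : ℕ) = (((i : ℕ) : ZMod n) + j).val := by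
  rw [Phi_apply_bot j π h]
  rfl

lemma Phi_apply_top {n : ℕ} [NeZero n] (j : ZMod n) (π : Equiv.Perm (Fin n))
    {i : Fin (2*n)} (h : ¬ (i : ℕ) < n) :
    Phi n j π i = ((topEquiv n).symm (π ((topEquiv n) ⟨i, h⟩)) : {x : Fin (2*n) // ¬ (x : ℕ) < n}).1 := by
  rw [Phi]
  refine Eq.trans (Equiv.Perm.subtypeCongr.right_apply
    (p := fun x : Fin (2*n) => (x : ℕ) < n) _ _ h) ?_
  simp [Equiv.permCongr_apply]

lemma Phi_mul {n : ℕ} [NeZero n] (j j' : ZMod n) (π π' : Equiv.Perm (Fin n)) :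
    Phi n j π * Phi n j' π' = Phi n (j' + j) (π * π') := by
  apply Equiv.ext
  intro i
  by_cases h : (i : ℕ) < n
  · have h2 : ((Phi n j' π' i : Fin (2*n)) : ℕ) < n := by
      rw [Phi_val_bot j' π' h]; exact ZMod.val_lt _
    show Phi n j π (Phi n j' π' i) = _
    apply Fin.ext
    rw [Phi_val_bot j π h2, Phi_val_bot (j' + j) (π * π') h, Phi_val_bot j' π' h]
    congr 1
    rw [ZMod.natCast_rightInverse]
    ring
  · have h2 : ¬ ((Phi n j' π' i : Fin (2*n)) : ℕ) < n := by
      rw [Phi_apply_top j' π' h]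
      exact ((topEquiv n).symm _).2
    show Phi n j π (Phi n j' π' i) = _
    rw [Phi_apply_top j π h2, Phi_apply_top (j' + j) (π * π') h]
    congr 2
    have ht : (topEquiv n) ⟨Phi n j' π' i, h2⟩ = π' ((topEquiv n) ⟨i, h⟩) := by
      have hsub : (⟨Phi n j' π' i, h2⟩ : {x : Fin (2*n) // ¬ (x : ℕ) < n})
          = (topEquiv n).symm (π' ((topEquiv n) ⟨i, h⟩)) :=
        Subtype.ext (Phi_apply_top j' π' h)
      rw [hsub]
      simp
    rw [ht]
    rfl

lemma Phi_injective {n : ℕ} [NeZero n] :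
    Function.Injective (fun p : ZMod n × Equiv.Perm (Fin n) => Phi n p.1 p.2) := by
  rintro ⟨j, π⟩ ⟨j', π'⟩ h
  simp only at h
  have h2 := Equiv.Perm.subtypeCongrHom_injective (fun i : Fin (2*n) => (i : ℕ) < n)
    (show Equiv.Perm.subtypeCongrHom _ (((botEquiv n).symm).permCongr (Equiv.addRight j),
        ((topEquiv n).symm).permCongr π) = Equiv.Perm.subtypeCongrHom _
        (((botEquiv n).symm).permCongr (Equiv.addRight j'), ((topEquiv n).symm).permCongr π')
      from h)
  rw [Prod.mk.injEq] at h2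
  obtain ⟨hb, ht⟩ := h2
  have hj : j = j' := by
    have := ((botEquiv n).symm.permCongr).injective hb
    have h0 := congrArg (fun e : Equiv.Perm (ZMod n) => e 0) this
    simpa using h0
  have hπ : π = π' := ((topEquiv n).symm.permCongr).injective ht
  rw [hj, hπ]

end glue

open scoped Classical in
/-- Theorem 3.5: for `n ≥ 2k`, the multiplicity of `χ^{(2n-k,k)}` in `Ind_C^{S_{2n}} 1_C`
is `(1/n)(C(n,k) + Σ_{1<h<n, d_h≠1, (n/d_h)∣k} C(d_h, k⬝d_h/n))`, expressed
denominator-free as `Σ_{τ ∈ C} (F k τ - F (k-1) τ) = n! ⬝ (C(n,k) + Σ ...)`. -/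
theorem chi_2n_minus_k_k_multiplicity (n k : ℕ) (hk : 1 ≤ k) (hn : 2 * k ≤ n)
    (σ : Equiv.Perm (Fin (2 * n)))
    (hσ : ∀ i : Fin (2 * n),
      ((σ i : ℕ) = if (i : ℕ) < n then ((i : ℕ) + 1) % n else (i : ℕ))) :
    ∑ τ : Subgroup.centralizer {σ},
      ((F k (τ : Equiv.Perm (Fin (2 * n))) : ℤ)
        - (F (k - 1) (τ : Equiv.Perm (Fin (2 * n))) : ℤ))
      = (n.factorial : ℤ) *
        ((n.choose k : ℤ) +
          ∑ h ∈ (Finset.Ico 2 n).filter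
            (fun h => Nat.gcd n h ≠ 1 ∧ (n / Nat.gcd n h) ∣ k),
            ((Nat.gcd n h).choose (k * Nat.gcd n h / n) : ℤ)) := by
  haveI hnz : NeZero n := ⟨by omega⟩
  haveI : Fact (1 < n) := ⟨by omega⟩
  have hn0 : 0 < n := by omega
  have hkn : k ≤ n := by omega
  -- σ = Phi n 1 1
  have hσeq : σ = Phi n (1 : ZMod n) 1 := by
    apply Equiv.ext; intro i
    by_cases h : (i : ℕ) < n
    · apply Fin.ext
      rw [hσ i, if_pos h, Phi_val_bot 1 1 h, ZMod.val_add, ZMod.val_cast_of_lt h, ZMod.val_one]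
    · have hPhi : Phi n (1 : ZMod n) 1 i = i := by
        rw [Phi_apply_top 1 1 h]
        rw [Equiv.Perm.one_apply, Equiv.symm_apply_apply]
      rw [hPhi]
      apply Fin.ext
      rw [hσ i, if_neg h]
  -- membership
  have hmem : ∀ (j : ZMod n) (π : Equiv.Perm (Fin n)),
      Phi n j π ∈ Subgroup.centralizer {σ} := by
    intro j π
    rw [Subgroup.mem_centralizer_iff]
    rintro b hb
    rw [Set.mem_singleton_iff] at hb; subst hb
    rw [hσeq, Phi_mul, Phi_mul, one_mul, mul_one, add_comm]
  -- surjectivity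
  have hsurj : ∀ τ : Equiv.Perm (Fin (2*n)), τ ∈ Subgroup.centralizer {σ} →
      ∃ p : ZMod n × Equiv.Perm (Fin n), Phi n p.1 p.2 = τ := by
    intro τ hτ
    rw [Subgroup.mem_centralizer_iff] at hτ
    have hcomm : ∀ x, τ (σ x) = σ (τ x) := by
      intro x
      have h1 := hτ σ (Set.mem_singleton σ)
      have h2 := congrArg (fun e : Equiv.Perm (Fin (2*n)) => e x) h1
      simpa [Equiv.Perm.mul_apply] using h2.symm
    have hσtop : ∀ i : Fin (2*n), ¬((i:ℕ) < n) → σ i = i :=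
      fun i h => Fin.ext (by rw [hσ i, if_neg h])
    have hσne : ∀ i : Fin (2*n), ((i:ℕ) < n) → σ i ≠ i := by
      intro i h hcon
      have h1 : ((σ i : Fin (2*n)) : ℕ) = (i : ℕ) := congrArg Fin.val hcon
      rw [hσ i, if_pos h] at h1
      rcases Nat.lt_or_ge ((i:ℕ)+1) n with h2 | h2
      · rw [Nat.mod_eq_of_lt h2] at h1; omega
      · have h3 : (i:ℕ)+1 = n := by omega
        rw [h3, Nat.mod_self] at h1; omega
    have hτbot : ∀ i : Fin (2*n), ((i:ℕ) < n) → ((τ i : Fin (2*n)) : ℕ) < n := by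
      intro i h
      by_contra hc
      have h1 : σ (τ i) = τ i := hσtop _ hc
      rw [← hcomm i] at h1
      exact hσne i h (τ.injective h1)
    have hτtop : ∀ i : Fin (2*n), ¬((i:ℕ) < n) → ¬((τ i : Fin (2*n)) : ℕ) < n := by
      intro i h hc
      have h1 : τ (σ i) = τ i := by rw [hσtop i h]
      rw [hcomm i] at h1
      exact hσne (τ i) hc h1
    have hz : ((⟨0, by omega⟩ : Fin (2*n)) : ℕ) < n := hn0
    set j : ZMod n := (botEquiv n) ⟨τ ⟨0, by omega⟩, hτbot _ hz⟩ with hj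
    have hσbot' : ∀ r : ZMod n,
        σ (((botEquiv n).symm r : {x : Fin (2*n) // (x : ℕ) < n}) : Fin (2*n))
          = ((botEquiv n).symm (r + 1) : {x : Fin (2*n) // (x : ℕ) < n}).1 := by
      intro r
      rw [hσeq, Phi_apply_bot 1 1 ((botEquiv n).symm r).2]
      congr 2
      rw [show (⟨(((botEquiv n).symm r : {x : Fin (2*n) // (x : ℕ) < n}) : Fin (2*n)),
          ((botEquiv n).symm r).2⟩ : {x : Fin (2*n) // (x : ℕ) < n}) = (botEquiv n).symm r from
        Subtype.ext rfl]
      rw [Equiv.apply_symm_apply]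
    have hbot : ∀ v : ℕ, ∀ hv : v < n,
        τ ⟨v, by omega⟩ = ((botEquiv n).symm (((v : ℕ) : ZMod n) + j)
          : {x : Fin (2*n) // (x : ℕ) < n}).1 := by
      intro v
      induction v with
      | zero =>
        intro hv
        have h0 : (((0 : ℕ) : ZMod n) + j) = j := by push_cast; ring
        rw [h0, hj, Equiv.symm_apply_apply]
      | succ v ih =>
        intro hv
        have hv' : v < n := by omega
        have hstep : σ ⟨v, by omega⟩ = ⟨v+1, by omega⟩ := by
          apply Fin.ext
          rw [hσ ⟨v, by omega⟩, if_pos (show ((⟨v, by omega⟩ : Fin (2*n)) : ℕ) < n from hv')]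
          exact Nat.mod_eq_of_lt hv
        have h1 : τ ⟨v+1, by omega⟩ = σ (τ ⟨v, by omega⟩) := by
          rw [← hstep, hcomm]
        rw [h1, ih hv', hσbot']
        congr 2
        push_cast
        ring
    have hiff : ∀ x : Fin (2*n), ¬((x:ℕ) < n) ↔ ¬((τ x : Fin (2*n)) : ℕ) < n := by
      intro x
      constructor
      · exact hτtop x
      · intro h hc
        exact h (hτbot x hc)
    set ρ := τ.subtypePerm (p := fun x : Fin (2*n) => ¬((x:ℕ) < n)) (fun x => (hiff x).symm) with hρ
    refine ⟨(j, (topEquiv n).permCongr ρ), ?_⟩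
    apply Equiv.ext; intro i
    by_cases h : (i:ℕ) < n
    · rw [Phi_apply_bot _ _ h]
      have hi : (⟨(i : ℕ), by omega⟩ : Fin (2*n)) = i := Fin.ext rfl
      have := hbot (i : ℕ) h
      rw [hi] at this
      show ((botEquiv n).symm (((i : ℕ) : ZMod n) + j) : {x : Fin (2*n) // (x : ℕ) < n}).1 = τ i
      exact this.symm
    · rw [Phi_apply_top _ _ h]
      have h2 : ((topEquiv n).permCongr ρ) ((topEquiv n) ⟨i, h⟩)
          = (topEquiv n) (ρ ⟨i, h⟩) := by
        rw [Equiv.permCongr_apply, Equiv.symm_apply_apply]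
      rw [h2, Equiv.symm_apply_apply]
      rfl
  -- the bijection
  set f : ZMod n × Equiv.Perm (Fin n) → Subgroup.centralizer {σ} :=
    fun p => ⟨Phi n p.1 p.2, hmem p.1 p.2⟩ with hf
  have hfbij : Function.Bijective f := by
    constructor
    · intro p q hpq
      exact Phi_injective (congrArg Subtype.val hpq)
    · rintro ⟨τ, hτ⟩
      obtain ⟨p, hp⟩ := hsurj τ hτ
      exact ⟨p, Subtype.ext hp⟩
  rw [← Fintype.sum_bijective f hfbij
    (fun p : ZMod n × Equiv.Perm (Fin n) =>
      ((F k (Phi n p.1 p.2) : ℤ) - (F (k-1) (Phi n p.1 p.2) : ℤ)))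
    _ (fun p => rfl)]
  -- F to G
  have hFG : ∀ (k' : ℕ) (τ' : Equiv.Perm (Fin (2*n))), F k' τ' = G k' τ' := fun _ _ => rfl
  have hΦG : ∀ (j : ZMod n) (π : Equiv.Perm (Fin n)) (k' : ℕ),
      G k' (Phi n j π) = ∑ a ∈ Finset.range (k'+1),
        G a (Equiv.addRight j) * G (k'-a) π := by
    intro j π k'
    rw [Phi, G_subtypeCongr]
    refine Finset.sum_congr rfl (fun a _ => ?_)
    rw [G_permCongr, G_permCongr]
  have hsum_perm : ∀ b : ℕ, b ≤ n → (∑ π : Equiv.Perm (Fin n), G b π) = n.factorial := by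
    intro b hb
    rw [sum_G_perm b (by simpa using hb)]
    simp
  have hA : ∀ (j : ZMod n) (k' : ℕ), k' ≤ n →
      (∑ π : Equiv.Perm (Fin n), G k' (Phi n j π))
        = (∑ a ∈ Finset.range (k'+1), G a (Equiv.addRight j)) * n.factorial := by
    intro j k' hk'
    have h1 : ∀ π : Equiv.Perm (Fin n), G k' (Phi n j π)
        = ∑ a ∈ Finset.range (k'+1), G a (Equiv.addRight j) * G (k'-a) π :=
      fun π => hΦG j π k'
    rw [Finset.sum_congr rfl (fun π _ => h1 π), Finset.sum_comm, Finset.sum_mul]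
    refine Finset.sum_congr rfl (fun a ha => ?_)
    rw [← Finset.mul_sum, hsum_perm (k'-a) (by omega)]
  have hkm1 : k - 1 + 1 = k := by omega
  have step1 : ∑ p : ZMod n × Equiv.Perm (Fin n),
      ((F k (Phi n p.1 p.2) : ℤ) - (F (k-1) (Phi n p.1 p.2) : ℤ))
      = ∑ j : ZMod n, ((G k (Equiv.addRight j) : ℤ) * (n.factorial : ℤ)) := by
    rw [Fintype.sum_prod_type]
    refine Finset.sum_congr rfl (fun j _ => ?_)
    simp only [hFG]
    rw [Finset.sum_sub_distrib, ← Nat.cast_sum, ← Nat.cast_sum]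
    have h1 := hA j k hkn
    have h2 := hA j (k-1) (by omega)
    rw [hkm1] at h2
    rw [Finset.sum_range_succ] at h1
    rw [h1, h2]
    push_cast
    ring
  rw [step1]
  -- the number-theoretic sum
  have key : (∑ j : ZMod n, G k (Equiv.addRight j))
      = n.choose k + ∑ h ∈ (Finset.Ico 2 n).filter
          (fun h => Nat.gcd n h ≠ 1 ∧ (n / Nat.gcd n h) ∣ k),
          (Nat.gcd n h).choose (k * Nat.gcd n h / n) := by
    have hnk : ¬ (n ∣ k) := by
      intro hd
      have := Nat.le_of_dvd (by omega) hd
      omega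
    have h1 : (∑ j : ZMod n, G k (Equiv.addRight j))
        = ∑ i ∈ Finset.range n, (if (n / Nat.gcd n i) ∣ k then
            (Nat.gcd n i).choose (k * Nat.gcd n i / n) else 0) := by
      rw [Finset.sum_congr rfl (fun j _ => G_addRight k j)]
      refine Finset.sum_bij' (fun (j : ZMod n) _ => j.val)
        (fun i _ => ((i : ℕ) : ZMod n)) ?_ ?_ ?_ ?_ ?_
      · intro j _; exact Finset.mem_range.2 (ZMod.val_lt j)
      · intro i _; exact Finset.mem_univ _
      · intro j _; exact ZMod.natCast_rightInverse j
      · intro i hi; exact ZMod.val_cast_of_lt (Finset.mem_range.1 hi)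
      · intro j _; rfl
    rw [h1, Finset.range_eq_Ico, Finset.sum_eq_sum_Ico_succ_bot hn0,
      Finset.sum_eq_sum_Ico_succ_bot (show (1:ℕ) < n by omega)]
    have ht0 : (if (n / Nat.gcd n 0) ∣ k then (Nat.gcd n 0).choose (k * Nat.gcd n 0 / n) else 0)
        = n.choose k := by
      rw [Nat.gcd_zero_right, Nat.div_self hn0, if_pos (one_dvd k), Nat.mul_div_cancel _ hn0]
    have ht1 : (if (n / Nat.gcd n 1) ∣ k then (Nat.gcd n 1).choose (k * Nat.gcd n 1 / n) else 0)
        = 0 := by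
      rw [Nat.gcd_one_right, Nat.div_one, if_neg hnk]
    rw [ht0, ht1, zero_add]
    congr 1
    have hcong : ∀ i ∈ Finset.Ico 2 n,
        (if (n / Nat.gcd n i) ∣ k then (Nat.gcd n i).choose (k * Nat.gcd n i / n) else 0)
          = (if (Nat.gcd n i ≠ 1 ∧ (n / Nat.gcd n i) ∣ k) then
              (Nat.gcd n i).choose (k * Nat.gcd n i / n) else 0) := by
      intro i _
      by_cases hgi : Nat.gcd n i = 1
      · have hd1 : ¬ (n / Nat.gcd n i ∣ k) := by rw [hgi, Nat.div_one]; exact hnk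
        rw [if_neg hd1, if_neg (fun hc => hd1 hc.2)]
      · by_cases hdvd : (n / Nat.gcd n i) ∣ k
        · rw [if_pos hdvd, if_pos ⟨hgi, hdvd⟩]
        · rw [if_neg hdvd, if_neg (fun hc => hdvd hc.2)]
    rw [Finset.sum_congr rfl hcong, ← Finset.sum_filter]
  rw [← Finset.sum_mul, ← Nat.cast_sum, key]
  push_cast
  ring
end

section
/- (Branching-rule computation, equations (4), (8), (13): ⟨χ^{(n)}, χ^{(2n-k,k)}↓_{S_n}⟩ = C(n,k).) Let k ≥ 0 and n ≥ 2k, n ≥ 1. Let P be the subgroup of Equiv.Perm (Fin (2*n)) consisting of all permutations π with π(i) = i for every i < n. Then Σ_{π ∈ P} (F k π − F (k−1) π) = n! · C(n,k), where for k = 0 the term F (k−1) π is interpreted as 0 and the k = 0 identity reads Σ_{π∈P} F 0 π = n!. -/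
set_option linter.unusedVariables false

open Finset Equiv

lemma image_perm_eq_iff {α : Type*} [DecidableEq α] (σ : Equiv.Perm α) (s : Finset α) :
    s.image σ = s ↔ ∀ x, σ x ∈ s ↔ x ∈ s := by
  constructor
  · intro h x
    constructor
    · intro hx
      obtain ⟨y, hy, hyx⟩ := Finset.mem_image.1 (h ▸ hx)
      exact σ.injective hyx ▸ hy
    · intro hx
      exact h ▸ Finset.mem_image_of_mem _ hx
  · intro h
    ext y
    simp only [Finset.mem_image]
    constructor
    · rintro ⟨x, hx, rfl⟩; exact (h x).2 hx
    · intro hy; exact ⟨σ.symm y, (h _).1 (by simpa using hy), by simp⟩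

lemma stab_card_s7 {n : ℕ} (B : Finset (Fin n)) :
    (Finset.univ.filter fun σ : Equiv.Perm (Fin n) => B.image σ = B).card
      = B.card.factorial * (n - B.card).factorial := by
  have key := DomMulAct.stabilizer_card (f := fun x : Fin n => decide (x ∈ B))
  rw [← Fintype.card_subtype]
  have : ∀ σ : Equiv.Perm (Fin n),
      (B.image σ = B) ↔ ((fun x : Fin n => decide (x ∈ B)) ∘ σ = fun x => decide (x ∈ B)) := by
    intro σ
    rw [image_perm_eq_iff, funext_iff]
    simp [decide_eq_decide]
  rw [Fintype.card_congr (Equiv.subtypeEquivRight this), key, Fintype.prod_bool]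
  have h1 : Fintype.card {a : Fin n // decide (a ∈ B) = true} = B.card := by
    simp [Fintype.card_subtype]
  have h2 : Fintype.card {a : Fin n // decide (a ∈ B) = false} = n - B.card := by
    rw [Fintype.card_subtype]
    have : Finset.univ.filter (fun a : Fin n => decide (a ∈ B) = false) = Bᶜ := by
      ext a; simp
    rw [this, Finset.card_compl, Fintype.card_fin]
  rw [h1, h2]

lemma sum_stab {n : ℕ} (j : ℕ) (hj : j ≤ n) :
    ∑ σ : Equiv.Perm (Fin n),
      (Finset.univ.filter fun B : Finset (Fin n) => B.card = j ∧ B.image σ = B).card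
      = n.factorial := by
  have : ∀ σ : Equiv.Perm (Fin n),
      (Finset.univ.filter fun B : Finset (Fin n) => B.card = j ∧ B.image σ = B).card
      = ∑ B ∈ Finset.univ.filter (fun B : Finset (Fin n) => B.card = j),
          if B.image σ = B then 1 else 0 := by
    intro σ
    rw [Finset.sum_filter]
    rw [Finset.card_filter]
    congr 1; ext B
    by_cases h1 : B.card = j <;> by_cases h2 : B.image σ = B <;> simp [h1, h2]
  simp_rw [this]
  rw [Finset.sum_comm]
  have : ∀ B : Finset (Fin n), B ∈ Finset.univ.filter (fun B : Finset (Fin n) => B.card = j) →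
      (∑ σ : Equiv.Perm (Fin n), if B.image σ = B then 1 else 0)
        = j.factorial * (n - j).factorial := by
    intro B hB
    rw [Finset.mem_filter] at hB
    rw [← Finset.card_filter, stab_card_s7, hB.2]
  rw [Finset.sum_congr rfl this, Finset.sum_const, smul_eq_mul]
  have hcard : (Finset.univ.filter (fun B : Finset (Fin n) => B.card = j)).card = n.choose j := by
    have : Finset.univ.filter (fun B : Finset (Fin n) => B.card = j)
        = Finset.univ.powersetCard j := by
      rw [Finset.powersetCard_eq_filter]
      simp
    rw [this, Finset.card_powersetCard, Finset.card_univ, Fintype.card_fin]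
  rw [hcard, ← mul_assoc, Nat.choose_mul_factorial_mul_factorial hj]

open Finset Equiv

def up (n : ℕ) : Fin n ↪ Fin (2 * n) :=
  ⟨fun a => ⟨n + a.val, by omega⟩, by
    intro a b h
    simp only [Fin.mk.injEq] at h
    exact Fin.ext (by omega)⟩

lemma up_val {n : ℕ} (a : Fin n) : (up n a : ℕ) = n + a := rfl

def Efin (n : ℕ) : Fin (2 * n) ≃ Fin n ⊕ Fin n :=
  (finCongr (two_mul n)).trans finSumFinEquiv.symm

lemma Efin_low {n : ℕ} (i : Fin (2 * n)) (h : (i : ℕ) < n) :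
    Efin n i = Sum.inl ⟨i, h⟩ := by
  have h1 : finCongr (two_mul n) i = Fin.castAdd n ⟨i, h⟩ := by
    apply Fin.ext; simp
  show finSumFinEquiv.symm (finCongr (two_mul n) i) = _
  rw [h1, finSumFinEquiv_symm_apply_castAdd]

lemma Efin_high {n : ℕ} (a : Fin n) : Efin n (up n a) = Sum.inr a := by
  have h1 : finCongr (two_mul n) (up n a) = Fin.natAdd n a := by
    apply Fin.ext; rfl
  show finSumFinEquiv.symm (finCongr (two_mul n) (up n a)) = _
  rw [h1, finSumFinEquiv_symm_apply_natAdd]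

def eperm {n : ℕ} (σ : Equiv.Perm (Fin n)) : Equiv.Perm (Fin (2 * n)) :=
  (Efin n).symm.permCongr (Equiv.sumCongr (Equiv.refl (Fin n)) σ)

lemma eperm_def {n : ℕ} (σ : Equiv.Perm (Fin n)) (x : Fin (2 * n)) :
    eperm σ x = (Efin n).symm (Equiv.sumCongr (Equiv.refl (Fin n)) σ (Efin n x)) := rfl

lemma eperm_low {n : ℕ} (σ : Equiv.Perm (Fin n)) (i : Fin (2 * n)) (h : (i : ℕ) < n) :
    eperm σ i = i := by
  rw [eperm_def, Efin_low i h]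
  simp only [Equiv.sumCongr_apply, Sum.map_inl, Equiv.refl_apply]
  rw [← Efin_low i h, Equiv.symm_apply_apply]

lemma eperm_high {n : ℕ} (σ : Equiv.Perm (Fin n)) (a : Fin n) :
    eperm σ (up n a) = up n (σ a) := by
  rw [eperm_def, Efin_high]
  simp only [Equiv.sumCongr_apply, Sum.map_inr]
  rw [← Efin_high (σ a), Equiv.symm_apply_apply]

lemma up_eq_self {n : ℕ} (x : Fin (2 * n)) (h : ¬ (x : ℕ) < n) :
    up n ⟨(x : ℕ) - n, by omega⟩ = x := by
  apply Fin.ext; simp only [up_val]; omega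

lemma eperm_mem {n : ℕ} (σ : Equiv.Perm (Fin n)) :
    eperm σ ∈ (Finset.univ : Finset (Equiv.Perm (Fin (2 * n)))).filter
      (fun π => ∀ i : Fin (2 * n), (i : ℕ) < n → π i = i) := by
  simp only [Finset.mem_filter, Finset.mem_univ, true_and]
  exact fun i hi => eperm_low σ i hi

lemma eperm_surj {n : ℕ} (π : Equiv.Perm (Fin (2 * n)))
    (hπ : ∀ i : Fin (2 * n), (i : ℕ) < n → π i = i) :
    ∃ σ : Equiv.Perm (Fin n), eperm σ = π := by
  have hfix' : ∀ i : Fin (2 * n), (i : ℕ) < n → π.symm i = i := by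
    intro i hi
    conv_lhs => rw [← hπ i hi]
    exact π.symm_apply_apply i
  have hhigh : ∀ x : Fin (2 * n), ¬ (x : ℕ) < n → ¬ ((π x : ℕ) < n) := by
    intro x hx hcon
    have h1 := hfix' (π x) hcon
    rw [π.symm_apply_apply] at h1
    rw [h1] at hx
    exact hx hcon
  have hhigh' : ∀ x : Fin (2 * n), ¬ (x : ℕ) < n → ¬ ((π.symm x : ℕ) < n) := by
    intro x hx hcon
    have h1 := hπ (π.symm x) hcon
    rw [π.apply_symm_apply] at h1
    rw [h1] at hx
    exact hx hcon
  have hub : ∀ a : Fin n, ¬ ((up n a : ℕ) < n) := by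
    intro a; simp [up_val]
  refine ⟨⟨fun a => ⟨(π (up n a) : ℕ) - n, ?_⟩, fun a => ⟨(π.symm (up n a) : ℕ) - n, ?_⟩,
      ?_, ?_⟩, ?_⟩
  · have := hhigh _ (hub a)
    have := (π (up n a)).isLt
    omega
  · have := hhigh' _ (hub a)
    have := (π.symm (up n a)).isLt
    omega
  · intro a
    apply Fin.ext
    simp only
    have h2 := hhigh _ (hub a)
    rw [up_eq_self _ h2, π.symm_apply_apply]
    simp [up_val]
  · intro a
    apply Fin.ext
    simp only
    have h2 := hhigh' _ (hub a)
    rw [up_eq_self _ h2, π.apply_symm_apply]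
    simp [up_val]
  · ext x
    by_cases hx : (x : ℕ) < n
    · rw [eperm_low _ x hx, hπ x hx]
    · have hxy : up n ⟨(x : ℕ) - n, by omega⟩ = x := up_eq_self x hx
      conv_lhs => rw [← hxy]
      conv_rhs => rw [← hxy]
      rw [eperm_high]
      simp only [Equiv.coe_fn_mk]
      exact congrArg Fin.val (up_eq_self _ (hhigh (up n ⟨(x : ℕ) - n, by omega⟩) (by rw [hxy]; exact hx)))

lemma eperm_inj {n : ℕ} : Function.Injective (eperm (n := n)) := by
  intro σ τ h
  ext a
  have h1 := congrArg (fun π : Equiv.Perm (Fin (2*n)) => π (up n a)) h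
  simp only [eperm_high] at h1
  exact congrArg Fin.val ((up n).injective h1)

def dn {n : ℕ} (hn : 0 < n) (x : Fin (2 * n)) : Fin n :=
  ⟨(x : ℕ) - n, by have := x.isLt; omega⟩

lemma dn_up {n : ℕ} (hn : 0 < n) (a : Fin n) : dn hn (up n a) = a := by
  apply Fin.ext; simp [dn, up_val]

lemma up_dn {n : ℕ} (hn : 0 < n) (x : Fin (2 * n)) (h : ¬ (x : ℕ) < n) :
    up n (dn hn x) = x := up_eq_self x h

lemma up_not_lo {n : ℕ} (a : Fin n) : ¬ ((up n a : ℕ) < n) := by simp [up_val]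

lemma mem_image_dn {n : ℕ} (hn : 0 < n) (s : Finset (Fin (2 * n))) (a : Fin n) :
    a ∈ (s.filter (fun x : Fin (2 * n) => ¬ (x : ℕ) < n)).image (dn hn) ↔ up n a ∈ s := by
  simp only [Finset.mem_image, Finset.mem_filter]
  constructor
  · rintro ⟨x, ⟨hxs, hx⟩, rfl⟩
    rwa [up_dn hn x hx]
  · intro h
    exact ⟨up n a, ⟨h, up_not_lo a⟩, dn_up hn a⟩

lemma F_eperm {n : ℕ} (hn : 0 < n) (k : ℕ) (σ : Equiv.Perm (Fin n)) :
    F k (eperm σ) = ((Finset.univ : Finset (Finset (Fin (2 * n)) × Finset (Fin n))).filter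
      (fun p => (∀ x : Fin (2 * n), x ∈ p.1 → (x : ℕ) < n) ∧ p.1.card + p.2.card = k ∧ p.2.image σ = p.2)).card := by
  unfold F
  apply Finset.card_nbij'
    (i := fun s => (s.filter (fun x : Fin (2 * n) => (x : ℕ) < n), (s.filter (fun x : Fin (2 * n) => ¬ (x : ℕ) < n)).image (dn hn)))
    (j := fun p => p.1 ∪ p.2.map (up n))
  · -- i maps into target
    intro s hs
    rw [Finset.mem_coe, Finset.mem_filter] at hs
    obtain ⟨-, hcard, hinv⟩ := hs
    simp only [Finset.mem_coe, Finset.mem_filter, Finset.mem_univ, true_and]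
    refine ⟨fun x hx => hx.2, ?_, ?_⟩
    · rw [Finset.card_image_of_injOn, Finset.card_filter_add_card_filter_not, hcard]
      intro x hx y hy hxy
      rw [Finset.coe_filter] at hx hy
      have := congrArg (up n) hxy
      rwa [up_dn hn x hx.2, up_dn hn y hy.2] at this
    · rw [image_perm_eq_iff] at hinv ⊢
      intro a
      rw [mem_image_dn, mem_image_dn, ← eperm_high σ a]
      exact hinv (up n a)
  · -- j maps back
    intro p hp
    rw [Finset.mem_coe, Finset.mem_filter] at hp
    obtain ⟨-, hlo, hcard, hinv⟩ := hp
    have hdisj : Disjoint p.1 (p.2.map (up n)) := by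
      rw [Finset.disjoint_left]
      intro x hx hx2
      obtain ⟨a, -, rfl⟩ := Finset.mem_map.1 hx2
      exact up_not_lo a (hlo _ hx)
    have hmem : ∀ b : Fin n, up n b ∈ p.1 ∪ p.2.map (up n) ↔ b ∈ p.2 := by
      intro b
      rw [Finset.mem_union]
      constructor
      · rintro (h | h)
        · exact absurd (hlo _ h) (up_not_lo b)
        · obtain ⟨a, ha, hab⟩ := Finset.mem_map.1 h
          rwa [← (up n).injective hab]
      · intro h; exact Or.inr (Finset.mem_map_of_mem _ h)
    simp only [Finset.mem_coe, Finset.mem_filter, Finset.mem_univ, true_and]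
    constructor
    · rw [Finset.card_union_of_disjoint hdisj, Finset.card_map, hcard]
    · rw [image_perm_eq_iff]
      intro x
      by_cases hx : (x : ℕ) < n
      · rw [eperm_low σ x hx]
      · rw [← up_dn hn x hx, eperm_high]
        rw [hmem, hmem]
        rw [image_perm_eq_iff] at hinv
        exact hinv (dn hn x)
  · -- left inverse
    intro s hs
    simp only
    have h2 : ((s.filter (fun x : Fin (2 * n) => ¬ (x : ℕ) < n)).image (dn hn)).map (up n)
        = s.filter (fun x : Fin (2 * n) => ¬ (x : ℕ) < n) := by
      ext x
      rw [Finset.mem_map]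
      constructor
      · rintro ⟨a, ha, rfl⟩
        rw [mem_image_dn] at ha
        rw [Finset.mem_filter]
        exact ⟨ha, up_not_lo a⟩
      · intro hx
        rw [Finset.mem_filter] at hx
        exact ⟨dn hn x, (mem_image_dn hn s _).2 (by rw [up_dn hn x hx.2]; exact hx.1), up_dn hn x hx.2⟩
    rw [h2, Finset.filter_union_filter_not_eq]
  · -- right inverse
    intro p hp
    rw [Finset.mem_coe, Finset.mem_filter] at hp
    obtain ⟨-, hlo, -, -⟩ := hp
    have e1 : (p.1 ∪ p.2.map (up n)).filter (fun x : Fin (2 * n) => (x : ℕ) < n) = p.1 := by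
      rw [Finset.filter_union, Finset.filter_eq_self.2 hlo,
        Finset.filter_eq_empty_iff.2 (fun x hx => ?_), Finset.union_empty]
      obtain ⟨a, -, rfl⟩ := Finset.mem_map.1 hx
      exact up_not_lo a
    have e2 : ((p.1 ∪ p.2.map (up n)).filter (fun x : Fin (2 * n) => ¬ (x : ℕ) < n)).image (dn hn) = p.2 := by
      rw [Finset.filter_union, Finset.filter_eq_empty_iff.2 (fun x hx h => h (hlo x hx)),
        Finset.empty_union]
      have : (p.2.map (up n)).filter (fun x : Fin (2 * n) => ¬ (x : ℕ) < n) = p.2.map (up n) := by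
        apply Finset.filter_eq_self.2
        intro x hx
        obtain ⟨a, -, rfl⟩ := Finset.mem_map.1 hx
        exact up_not_lo a
      rw [this, Finset.map_eq_image, Finset.image_image]
      rw [show (dn hn) ∘ (up n) = id from funext (fun a => dn_up hn a), Finset.image_id]
    exact Prod.ext e1 e2

lemma lo_card {n : ℕ} :
    ((Finset.univ : Finset (Fin (2 * n))).filter (fun x : Fin (2 * n) => (x : ℕ) < n)).card
      = n := by
  have h : ((Finset.univ : Finset (Fin (2 * n))).filter
      (fun x : Fin (2 * n) => (x : ℕ) < n)).card = (Finset.univ : Finset (Fin n)).card := by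
    apply Finset.card_bij (i := fun (x : Fin (2 * n)) (hx : x ∈ _) =>
    (⟨(x : ℕ), (Finset.mem_filter.1 hx).2⟩ : Fin n))
    · intro a ha; exact Finset.mem_univ _
    · intro a ha b hb h
      have := congrArg Fin.val h
      simp only at this
      exact Fin.ext this
    · intro b _
      exact ⟨⟨(b : ℕ), by omega⟩, Finset.mem_filter.2 ⟨Finset.mem_univ _, b.isLt⟩, rfl⟩
  rw [h, Finset.card_univ, Fintype.card_fin]

lemma main_count {n : ℕ} (hn : 0 < n) (k : ℕ) (hk : k ≤ n) :
    ∑ π ∈ (Finset.univ : Finset (Equiv.Perm (Fin (2 * n)))).filter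
        (fun π => ∀ i : Fin (2 * n), (i : ℕ) < n → π i = i), F k π
    = n.factorial * ((Finset.univ : Finset (Finset (Fin (2 * n)))).filter
        (fun A => (∀ x : Fin (2 * n), x ∈ A → (x : ℕ) < n) ∧ A.card ≤ k)).card := by
  have hA : ∑ π ∈ (Finset.univ : Finset (Equiv.Perm (Fin (2 * n)))).filter
        (fun π => ∀ i : Fin (2 * n), (i : ℕ) < n → π i = i), F k π
      = ∑ σ : Equiv.Perm (Fin n), F k (eperm σ) := by
    symm
    apply Finset.sum_nbij (i := eperm)
    · intro σ _; exact eperm_mem σ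
    · intro σ _ τ _ h; exact eperm_inj h
    · intro π hπ
      simp only [Finset.coe_filter, Set.mem_setOf_eq, Finset.mem_univ, true_and] at hπ
      obtain ⟨σ, rfl⟩ := eperm_surj π hπ
      exact ⟨σ, by simp⟩
    · intro σ _; rfl
  rw [hA]
  simp_rw [F_eperm hn k]
  have hB : ∀ σ : Equiv.Perm (Fin n),
      ((Finset.univ : Finset (Finset (Fin (2 * n)) × Finset (Fin n))).filter
        (fun p => (∀ x : Fin (2 * n), x ∈ p.1 → (x : ℕ) < n) ∧ p.1.card + p.2.card = k
          ∧ p.2.image σ = p.2)).card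
      = ∑ A : Finset (Fin (2 * n)), ∑ B : Finset (Fin n),
          if ((∀ x : Fin (2 * n), x ∈ A → (x : ℕ) < n) ∧ A.card + B.card = k
            ∧ B.image σ = B) then 1 else 0 := by
    intro σ
    rw [Finset.card_filter, Fintype.sum_prod_type]
  simp_rw [hB]
  rw [Finset.sum_comm]
  have inner : ∀ A : Finset (Fin (2 * n)),
      (∑ σ : Equiv.Perm (Fin n), ∑ B : Finset (Fin n),
        if ((∀ x : Fin (2 * n), x ∈ A → (x : ℕ) < n) ∧ A.card + B.card = k
          ∧ B.image σ = B) then 1 else 0)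
      = if ((∀ x : Fin (2 * n), x ∈ A → (x : ℕ) < n) ∧ A.card ≤ k)
          then n.factorial else 0 := by
    intro A
    by_cases hA1 : (∀ x : Fin (2 * n), x ∈ A → (x : ℕ) < n)
    · by_cases hA2 : A.card ≤ k
      · rw [if_pos ⟨hA1, hA2⟩]
        have hiff : ∀ (σ : Equiv.Perm (Fin n)) (B : Finset (Fin n)),
            ((∀ x : Fin (2 * n), x ∈ A → (x : ℕ) < n) ∧ A.card + B.card = k
              ∧ B.image σ = B) ↔ (B.card = k - A.card ∧ B.image σ = B) := by
          intro σ B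
          constructor
          · rintro ⟨-, h1, h2⟩; exact ⟨by omega, h2⟩
          · rintro ⟨h1, h2⟩; exact ⟨hA1, by omega, h2⟩
        simp_rw [hiff]
        have : ∀ σ : Equiv.Perm (Fin n),
            (∑ B : Finset (Fin n), if (B.card = k - A.card ∧ B.image σ = B) then 1 else 0)
            = (Finset.univ.filter fun B : Finset (Fin n) =>
                B.card = k - A.card ∧ B.image σ = B).card := by
          intro σ; rw [Finset.card_filter]
        simp_rw [this]
        exact sum_stab (k - A.card) (by omega)
      · rw [if_neg (by tauto)]
        apply Finset.sum_eq_zero; intro σ _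
        apply Finset.sum_eq_zero; intro B _
        rw [if_neg]; rintro ⟨-, h1, -⟩; omega
    · rw [if_neg (by tauto)]
      apply Finset.sum_eq_zero; intro σ _
      apply Finset.sum_eq_zero; intro B _
      rw [if_neg]; rintro ⟨h, -⟩; exact hA1 h
  rw [Finset.sum_congr rfl (fun A _ => inner A), ← Finset.sum_filter, Finset.sum_const,
    smul_eq_mul, mul_comm]

lemma cardA_zero {n : ℕ} :
    ((Finset.univ : Finset (Finset (Fin (2 * n)))).filter
      (fun A => (∀ x : Fin (2 * n), x ∈ A → (x : ℕ) < n) ∧ A.card ≤ 0)).card = 1 := by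
  have : (Finset.univ : Finset (Finset (Fin (2 * n)))).filter
      (fun A => (∀ x : Fin (2 * n), x ∈ A → (x : ℕ) < n) ∧ A.card ≤ 0) = {∅} := by
    ext A
    simp only [Finset.mem_filter, Finset.mem_univ, true_and, Finset.mem_singleton,
      Nat.le_zero, Finset.card_eq_zero]
    constructor
    · rintro ⟨-, h⟩; exact h
    · rintro rfl
      exact ⟨fun x hx => absurd hx (Finset.notMem_empty x), rfl⟩
  rw [this, Finset.card_singleton]

lemma cardA_step {n : ℕ} (k : ℕ) (hk : 0 < k) :
    ((Finset.univ : Finset (Finset (Fin (2 * n)))).filter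
      (fun A => (∀ x : Fin (2 * n), x ∈ A → (x : ℕ) < n) ∧ A.card ≤ k)).card
    = ((Finset.univ : Finset (Finset (Fin (2 * n)))).filter
      (fun A => (∀ x : Fin (2 * n), x ∈ A → (x : ℕ) < n) ∧ A.card ≤ k - 1)).card
      + n.choose k := by
  have hsplit : (Finset.univ : Finset (Finset (Fin (2 * n)))).filter
      (fun A => (∀ x : Fin (2 * n), x ∈ A → (x : ℕ) < n) ∧ A.card ≤ k)
      = ((Finset.univ : Finset (Finset (Fin (2 * n)))).filter
        (fun A => (∀ x : Fin (2 * n), x ∈ A → (x : ℕ) < n) ∧ A.card ≤ k - 1))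
        ∪ ((Finset.univ : Finset (Finset (Fin (2 * n)))).filter
        (fun A => (∀ x : Fin (2 * n), x ∈ A → (x : ℕ) < n) ∧ A.card = k)) := by
    ext A
    simp only [Finset.mem_filter, Finset.mem_union, Finset.mem_univ, true_and]
    constructor
    · rintro ⟨h1, h2⟩
      by_cases h : A.card = k
      · exact Or.inr ⟨h1, h⟩
      · exact Or.inl ⟨h1, by omega⟩
    · rintro (⟨h1, h2⟩ | ⟨h1, h2⟩) <;> exact ⟨h1, by omega⟩
  have hdisj : Disjoint
      ((Finset.univ : Finset (Finset (Fin (2 * n)))).filter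
        (fun A => (∀ x : Fin (2 * n), x ∈ A → (x : ℕ) < n) ∧ A.card ≤ k - 1))
      ((Finset.univ : Finset (Finset (Fin (2 * n)))).filter
        (fun A => (∀ x : Fin (2 * n), x ∈ A → (x : ℕ) < n) ∧ A.card = k)) := by
    rw [Finset.disjoint_left]
    intro A h1 h2
    rw [Finset.mem_filter] at h1 h2
    omega
  have hcount : ((Finset.univ : Finset (Finset (Fin (2 * n)))).filter
      (fun A => (∀ x : Fin (2 * n), x ∈ A → (x : ℕ) < n) ∧ A.card = k)).card = n.choose k := by
    have : (Finset.univ : Finset (Finset (Fin (2 * n)))).filter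
        (fun A => (∀ x : Fin (2 * n), x ∈ A → (x : ℕ) < n) ∧ A.card = k)
        = Finset.powersetCard k ((Finset.univ : Finset (Fin (2 * n))).filter
            (fun x : Fin (2 * n) => (x : ℕ) < n)) := by
      ext A
      simp only [Finset.mem_filter, Finset.mem_univ, true_and, Finset.mem_powersetCard]
      constructor
      · rintro ⟨h1, h2⟩
        exact ⟨fun x hx => Finset.mem_filter.2 ⟨Finset.mem_univ _, h1 x hx⟩, h2⟩
      · rintro ⟨h1, h2⟩
        exact ⟨fun x hx => (Finset.mem_filter.1 (h1 hx)).2, h2⟩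
    rw [this, Finset.card_powersetCard, lo_card]
  rw [hsplit, Finset.card_union_of_disjoint hdisj, hcount]

/-- Equations (4), (8), (13): `⟨χ^{(n)}, χ^{(2n-k,k)}↓_{S_n}⟩ = C(n,k)` for `n ≥ 2k`,
expressed as `Σ_{π ∈ P} (F k π - F (k-1) π) = n! ⬝ C(n,k)` where `P ≅ S_n` is the
subgroup of permutations fixing all points `i < n` (with `F (k-1) π` read as `0`
when `k = 0`). -/
theorem branching_binomial (n k : ℕ) (hn : 1 ≤ n) (hk : 2 * k ≤ n) :
    ∑ π ∈ (Finset.univ : Finset (Equiv.Perm (Fin (2 * n)))).filter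
        (fun π => ∀ i : Fin (2 * n), (i : ℕ) < n → π i = i),
      ((F k π : ℤ) - (if k = 0 then 0 else (F (k - 1) π : ℤ)))
      = (n.factorial : ℤ) * (n.choose k : ℤ) := by
  by_cases hk0 : k = 0
  · subst hk0
    simp only [↓reduceIte, sub_zero]
    rw [← Nat.cast_sum, main_count (by omega) 0 (by omega), cardA_zero]
    simp
  · simp only [if_neg hk0]
    rw [Finset.sum_sub_distrib, ← Nat.cast_sum, ← Nat.cast_sum,
      main_count (by omega) k (by omega), main_count (by omega) (k - 1) (by omega),
      cardA_step k (by omega)]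
    push_cast
    ring
end

section
/- (Equation (5): Σ_{λ⊢n} χ^{(n,n)}_{(n,λ)}|K_λ| = n!.) Let n ≥ 2. Let σ ∈ Equiv.Perm (Fin (2*n)) be the n-cycle with σ(i) = i+1 mod n for i < n and σ(i) = i for i ≥ n, and let P be the subgroup of Equiv.Perm (Fin (2*n)) consisting of all permutations π with π(i) = i for every i < n. Then Σ_{π ∈ P} (F n (σ*π) − F (n−1) (σ*π)) = n!. -/
open Finset Equiv

namespace Eq5Aux

/-- Number of permutations fixing all points satisfying `p`. -/
lemma card_perm_fixing {α : Type*} [Fintype α] [DecidableEq α] (p : α → Prop) [DecidablePred p] :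
    ((Finset.univ : Finset (Perm α)).filter (fun π => ∀ x, p x → π x = x)).card
      = (Fintype.card {x // ¬ p x}).factorial := by
  have h1 : ((Finset.univ : Finset (Perm α)).filter (fun π => ∀ x, p x → π x = x)).card
      = Fintype.card {π : Perm α // ∀ x, p x → π x = x} := (Fintype.card_subtype _).symm
  rw [h1, ← Fintype.card_perm]
  refine Fintype.card_congr ?_
  refine ((Equiv.Perm.subtypeEquivSubtypePerm (fun x => ¬ p x)).trans
    (Equiv.subtypeEquivRight ?_)).symm
  intro f
  constructor
  · intro h x hx; exact h x (not_not_intro hx)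
  · intro h x hx; exact h x (not_not.mp hx)

lemma cardL (n : ℕ) :
    ((Finset.univ : Finset (Fin (2*n))).filter (fun i : Fin (2*n) => (i : ℕ) < n)).card = n := by
  have h : (Finset.univ : Finset (Fin (2*n))).filter (fun i : Fin (2*n) => (i : ℕ) < n)
      = Finset.univ.map (Fin.castLEEmb (by omega : n ≤ 2*n)) := by
    ext x
    simp only [Finset.mem_filter, Finset.mem_univ, true_and, Finset.mem_map,
      Fin.castLEEmb_apply]
    constructor
    · intro hx
      exact ⟨⟨(x : ℕ), hx⟩, by ext; simp [Fin.castLE]⟩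
    · rintro ⟨i, -, rfl⟩
      simpa using i.isLt
  rw [h, Finset.card_map, Finset.card_univ, Fintype.card_fin]

lemma cardU (n : ℕ) :
    ((Finset.univ : Finset (Fin (2*n))).filter (fun i : Fin (2*n) => ¬ (i : ℕ) < n)).card = n := by
  have h := Finset.card_filter_add_card_filter_not
    (s := (Finset.univ : Finset (Fin (2*n)))) (p := fun i => (i : ℕ) < n)
  rw [cardL n, Finset.card_univ, Fintype.card_fin] at h
  omega

section Tau

variable {n : ℕ} {τ : Perm (Fin (2*n))}

/-- If `s` is invariant then `τ` maps `s` into `s`. -/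
lemma mem_of_invariant {s : Finset (Fin (2*n))} (hs : s.image τ = s)
    {x : Fin (2*n)} (hx : x ∈ s) : τ x ∈ s := by
  rw [← hs]; exact Finset.mem_image_of_mem _ hx

/-- image ⊆ s plus injectivity gives invariance. -/
lemma invariant_of_maps {s : Finset (Fin (2*n))} (h : ∀ x ∈ s, τ x ∈ s) :
    s.image τ = s := by
  apply Finset.eq_of_subset_of_card_le
  · intro y hy
    obtain ⟨x, hx, rfl⟩ := Finset.mem_image.mp hy
    exact h x hx
  · rw [Finset.card_image_of_injective _ τ.injective]

/-- The orbit of any lower point under `τ` covers all lower points. -/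
lemma lower_subset_of_invariant (hn : 2 ≤ n)
    (h1 : ∀ i : Fin (2*n), (i : ℕ) < n → ((τ i : ℕ)) = ((i : ℕ) + 1) % n)
    {s : Finset (Fin (2*n))} (hs : s.image τ = s)
    {a : Fin (2*n)} (ha : a ∈ s) (han : (a : ℕ) < n) :
    ∀ j : Fin (2*n), (j : ℕ) < n → j ∈ s := by
  have key : ∀ m : ℕ, ∃ x ∈ s, (x : ℕ) = ((a : ℕ) + m) % n := by
    intro m
    induction m with
    | zero => exact ⟨a, ha, by simp [Nat.mod_eq_of_lt han]⟩
    | succ m ih =>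
      obtain ⟨x, hxs, hxv⟩ := ih
      have hxn : (x : ℕ) < n := by rw [hxv]; exact Nat.mod_lt _ (by omega)
      refine ⟨τ x, mem_of_invariant hs hxs, ?_⟩
      rw [h1 x hxn, hxv]
      conv_rhs => rw [← Nat.add_assoc, Nat.add_mod ((a : ℕ) + m) 1 n,
        Nat.mod_eq_of_lt (show 1 < n by omega)]
  intro j hj
  obtain ⟨x, hxs, hxv⟩ := key ((j : ℕ) + n - (a : ℕ))
  have : (x : ℕ) = (j : ℕ) := by
    rw [hxv]
    have : (a : ℕ) + ((j : ℕ) + n - (a : ℕ)) = (j : ℕ) + n := by omega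
    rw [this, Nat.add_mod_right, Nat.mod_eq_of_lt hj]
  have hx : x = j := Fin.ext this
  rwa [hx] at hxs

variable (hn : 2 ≤ n)
  (h1 : ∀ i : Fin (2*n), (i : ℕ) < n → ((τ i : ℕ)) = ((i : ℕ) + 1) % n)
  (h2 : ∀ i : Fin (2*n), n ≤ (i : ℕ) → n ≤ ((τ i : ℕ)))

include hn h1

/-- τ maps lower points to lower points. -/
lemma tau_lower {i : Fin (2*n)} (hi : (i : ℕ) < n) : ((τ i : ℕ)) < n := by
  rw [h1 i hi]; exact Nat.mod_lt _ (by omega)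

/-- no lower fixed points. -/
lemma tau_no_lower_fix {i : Fin (2*n)} (hi : (i : ℕ) < n) : τ i ≠ i := by
  intro h
  have hv : ((i : ℕ) + 1) % n = (i : ℕ) := by rw [← h1 i hi, h]
  have hc : (i : ℕ) + 1 = n ∨ (i : ℕ) + 1 < n := by omega
  rcases hc with h' | h'
  · rw [h', Nat.mod_self] at hv; omega
  · rw [Nat.mod_eq_of_lt h'] at hv; omega

include h2

lemma L_invariant :
    ((Finset.univ : Finset (Fin (2*n))).filter (fun i : Fin (2*n) => (i : ℕ) < n)).image τ
      = (Finset.univ : Finset (Fin (2*n))).filter (fun i : Fin (2*n) => (i : ℕ) < n) := by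
  apply invariant_of_maps
  intro x hx
  simp only [Finset.mem_filter, Finset.mem_univ, true_and] at hx ⊢
  exact tau_lower hn h1 hx

lemma U_invariant :
    ((Finset.univ : Finset (Fin (2*n))).filter (fun i : Fin (2*n) => ¬ (i : ℕ) < n)).image τ
      = (Finset.univ : Finset (Fin (2*n))).filter (fun i : Fin (2*n) => ¬ (i : ℕ) < n) := by
  apply invariant_of_maps
  intro x hx
  simp only [Finset.mem_filter, Finset.mem_univ, true_and, not_lt] at hx ⊢
  exact h2 x hx

/-- An invariant set containing no lower point must be disjoint from lower;
    here: invariant `s` has lower part `∅` or all of `L`. -/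
lemma lower_dichotomy {s : Finset (Fin (2*n))} (hs : s.image τ = s) :
    (∀ x ∈ s, ¬ (x : ℕ) < n) ∨
    (∀ j : Fin (2*n), (j : ℕ) < n → j ∈ s) := by
  by_cases h : ∃ a ∈ s, (a : ℕ) < n
  · obtain ⟨a, ha, han⟩ := h
    exact Or.inr (lower_subset_of_invariant hn h1 hs ha han)
  · push_neg at h
    exact Or.inl fun x hx => not_lt.mpr (h x hx)

lemma F_n_eq_two : F n τ = 2 := by
  classical
  set L : Finset (Fin (2*n)) :=
    (Finset.univ : Finset (Fin (2*n))).filter (fun i : Fin (2*n) => (i : ℕ) < n) with hL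
  set U : Finset (Fin (2*n)) :=
    (Finset.univ : Finset (Fin (2*n))).filter (fun i : Fin (2*n) => ¬ (i : ℕ) < n) with hU
  have hLc : L.card = n := cardL n
  have hUc : U.card = n := cardU n
  have hset : (Finset.univ : Finset (Finset (Fin (2*n)))).filter
      (fun s => s.card = n ∧ s.image τ = s) = {L, U} := by
    ext s
    simp only [Finset.mem_filter, Finset.mem_univ, true_and, Finset.mem_insert,
      Finset.mem_singleton]
    constructor
    · rintro ⟨hcard, hinv⟩
      rcases lower_dichotomy hn h1 h2 hinv with h | h
      · right
        apply Finset.eq_of_subset_of_card_le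
        · intro x hx
          simp only [hU, Finset.mem_filter, Finset.mem_univ, true_and]
          exact h x hx
        · omega
      · left
        symm
        apply Finset.eq_of_subset_of_card_le
        · intro x hx
          simp only [hL, Finset.mem_filter, Finset.mem_univ, true_and] at hx
          exact h x hx
        · omega
    · rintro (rfl | rfl)
      · exact ⟨hLc, L_invariant hn h1 h2⟩
      · exact ⟨hUc, U_invariant hn h1 h2⟩
  have hne : L ≠ U := by
    intro h
    have h0 : (⟨0, by omega⟩ : Fin (2*n)) ∈ L := by
      simp only [hL, Finset.mem_filter, Finset.mem_univ, true_and]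
      simpa using (by omega : 0 < n)
    have h0' : (⟨0, by omega⟩ : Fin (2*n)) ∈ U := (Finset.ext_iff.mp h ⟨0, by omega⟩).mp h0
    simp only [hU, Finset.mem_filter, Finset.mem_univ, true_and] at h0'
    exact h0' (by simpa using (by omega : 0 < n))
  rw [F, hset, Finset.card_pair hne]

lemma F_pred_eq_fix : F (n - 1) τ =
    ((Finset.univ : Finset (Fin (2*n))).filter (fun i => τ i = i)).card := by
  classical
  set U : Finset (Fin (2*n)) :=
    (Finset.univ : Finset (Fin (2*n))).filter (fun i : Fin (2*n) => ¬ (i : ℕ) < n) with hU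
  have hUc : U.card = n := cardU n
  have hfixU : ∀ x : Fin (2*n), τ x = x → x ∈ U := by
    intro x hx
    simp only [hU, Finset.mem_filter, Finset.mem_univ, true_and]
    intro hlt
    exact tau_no_lower_fix hn h1 hlt hx
  have hset : (Finset.univ : Finset (Finset (Fin (2*n)))).filter
      (fun s => s.card = n - 1 ∧ s.image τ = s)
      = ((Finset.univ : Finset (Fin (2*n))).filter (fun i => τ i = i)).image
          (fun x => U \ {x}) := by
    ext s
    simp only [Finset.mem_filter, Finset.mem_univ, true_and, Finset.mem_image]
    constructor
    · rintro ⟨hcard, hinv⟩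
      have hsub : s ⊆ U := by
        intro x hx
        simp only [hU, Finset.mem_filter, Finset.mem_univ, true_and]
        rcases lower_dichotomy hn h1 h2 hinv with h | h
        · exact h x hx
        · exfalso
          have hLs : ((Finset.univ : Finset (Fin (2*n))).filter
              (fun i : Fin (2*n) => (i : ℕ) < n)) ⊆ s := by
            intro j hj
            simp only [Finset.mem_filter, Finset.mem_univ, true_and] at hj
            exact h j hj
          have := Finset.card_le_card hLs
          rw [cardL n, hcard] at this
          omega
      have hDcard : (U \ s).card = 1 := by
        rw [Finset.card_sdiff_of_subset hsub, hUc, hcard]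
        omega
      obtain ⟨x, hx⟩ := Finset.card_eq_one.mp hDcard
      have hDinv : (U \ s).image τ = U \ s := by
        apply invariant_of_maps
        intro y hy
        rw [Finset.mem_sdiff] at hy ⊢
        obtain ⟨hyU, hys⟩ := hy
        constructor
        · simp only [hU, Finset.mem_filter, Finset.mem_univ, true_and, not_lt] at hyU ⊢
          exact h2 y hyU
        · intro hc
          rw [← hinv] at hc
          obtain ⟨z, hz, hze⟩ := Finset.mem_image.mp hc
          exact hys (τ.injective hze ▸ hz)
      have hfix : τ x = x := by
        have : τ x ∈ U \ s := by
          rw [← hDinv]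
          exact Finset.mem_image_of_mem _ (hx ▸ Finset.mem_singleton_self x)
        rw [hx, Finset.mem_singleton] at this
        exact this
      refine ⟨x, hfix, ?_⟩
      rw [← hx, Finset.sdiff_sdiff_eq_self hsub]
    · rintro ⟨x, hfix, rfl⟩
      have hxU : x ∈ U := hfixU x hfix
      constructor
      · rw [Finset.card_sdiff_of_subset (Finset.singleton_subset_iff.mpr hxU),
          Finset.card_singleton, hUc]
      · apply invariant_of_maps
        intro y hy
        rw [Finset.mem_sdiff, Finset.mem_singleton] at hy ⊢
        obtain ⟨hyU, hyx⟩ := hy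
        constructor
        · simp only [hU, Finset.mem_filter, Finset.mem_univ, true_and, not_lt] at hyU ⊢
          exact h2 y hyU
        · intro hc
          exact hyx (τ.injective (by rw [hc, hfix]))
  rw [F, hset]
  apply Finset.card_image_of_injOn
  intro x hx y hy hxy
  simp only [Finset.mem_coe, Finset.mem_filter, Finset.mem_univ, true_and] at hx hy
  have hxU : x ∈ U := hfixU x hx
  by_contra hne
  have hxy' : U \ {x} = U \ {y} := hxy
  have : x ∈ U \ {y} := Finset.mem_sdiff.mpr ⟨hxU, by simpa using hne⟩
  rw [← hxy', Finset.mem_sdiff, Finset.mem_singleton] at this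
  exact this.2 rfl

end Tau

end Eq5Aux

/-- Equation (5): `Σ_{λ⊢n} χ^{(n,n)}_{(n,λ)}|K_λ| = n!`, expressed as
`Σ_{π ∈ P} (F n (σπ) - F (n-1) (σπ)) = n!` where `P ≅ S_n` fixes all points `i < n`. -/
theorem eq5 (n : ℕ) (hn : 2 ≤ n) (σ : Equiv.Perm (Fin (2 * n)))
    (hσ : ∀ i : Fin (2 * n),
      ((σ i : ℕ) = if (i : ℕ) < n then ((i : ℕ) + 1) % n else (i : ℕ))) :
    ∑ π ∈ (Finset.univ : Finset (Equiv.Perm (Fin (2 * n)))).filter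
        (fun π => ∀ i : Fin (2 * n), (i : ℕ) < n → π i = i),
      ((F n (σ * π) : ℤ) - (F (n - 1) (σ * π) : ℤ)) = (n.factorial : ℤ) := by
  classical
  have hupfix : ∀ π : Equiv.Perm (Fin (2*n)), (∀ i : Fin (2 * n), (i : ℕ) < n → π i = i) →
      ∀ i : Fin (2*n), n ≤ (i : ℕ) → n ≤ ((π i : ℕ)) := by
    intro π hπ i hi
    by_contra hc
    push_neg at hc
    have h3 : π (π i) = π i := hπ _ hc
    have h4 : π i = i := π.injective h3
    rw [h4] at hc
    omega
  have h1π : ∀ π : Equiv.Perm (Fin (2*n)), (∀ i : Fin (2 * n), (i : ℕ) < n → π i = i) →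
      ∀ i : Fin (2*n), (i : ℕ) < n → (((σ * π) i : ℕ)) = ((i : ℕ) + 1) % n := by
    intro π hπ i hi
    have : (σ * π) i = σ i := by rw [Equiv.Perm.mul_apply, hπ i hi]
    rw [this, hσ i, if_pos hi]
  have hτπ : ∀ π : Equiv.Perm (Fin (2*n)), (∀ i : Fin (2 * n), (i : ℕ) < n → π i = i) →
      ∀ i : Fin (2*n), ¬ (i : ℕ) < n → (σ * π) i = π i := by
    intro π hπ i hi
    apply Fin.ext
    rw [Equiv.Perm.mul_apply, hσ (π i),
      if_neg (not_lt.mpr (hupfix π hπ i (not_lt.mp hi)))]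
  have h2π : ∀ π : Equiv.Perm (Fin (2*n)), (∀ i : Fin (2 * n), (i : ℕ) < n → π i = i) →
      ∀ i : Fin (2*n), n ≤ (i : ℕ) → n ≤ (((σ * π) i : ℕ)) := by
    intro π hπ i hi
    rw [hτπ π hπ i (not_lt.mpr hi)]
    exact hupfix π hπ i hi
  have hsummand : ∀ π ∈ (Finset.univ : Finset (Equiv.Perm (Fin (2 * n)))).filter
        (fun π => ∀ i : Fin (2 * n), (i : ℕ) < n → π i = i),
      ((F n (σ * π) : ℤ) - (F (n - 1) (σ * π) : ℤ))
        = 2 - (((Finset.univ : Finset (Fin (2*n))).filter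
            (fun i : Fin (2*n) => ¬ (i : ℕ) < n ∧ π i = i)).card : ℤ) := by
    intro π hπ'
    rw [Finset.mem_filter] at hπ'
    have hπ := hπ'.2
    rw [Eq5Aux.F_n_eq_two hn (h1π π hπ) (h2π π hπ),
      Eq5Aux.F_pred_eq_fix hn (h1π π hπ) (h2π π hπ)]
    have hfe : (Finset.univ : Finset (Fin (2*n))).filter (fun i => (σ * π) i = i)
        = (Finset.univ : Finset (Fin (2*n))).filter
            (fun i : Fin (2*n) => ¬ (i : ℕ) < n ∧ π i = i) := by
      ext i
      simp only [Finset.mem_filter, Finset.mem_univ, true_and]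
      constructor
      · intro hfix
        have hnl : ¬ (i : ℕ) < n := fun hlt =>
          Eq5Aux.tau_no_lower_fix hn (h1π π hπ) hlt hfix
        refine ⟨hnl, ?_⟩
        rw [← hτπ π hπ i hnl]
        exact hfix
      · rintro ⟨hnl, hfix⟩
        rw [hτπ π hπ i hnl]
        exact hfix
    rw [hfe]
    push_cast
    ring
  rw [Finset.sum_congr rfl hsummand, Finset.sum_sub_distrib, Finset.sum_const]
  have hPfcard : ((Finset.univ : Finset (Equiv.Perm (Fin (2 * n)))).filter
      (fun π => ∀ i : Fin (2 * n), (i : ℕ) < n → π i = i)).card = n.factorial := by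
    have h := Eq5Aux.card_perm_fixing (fun x : Fin (2*n) => (x : ℕ) < n)
    have hcc : Fintype.card {x : Fin (2*n) // ¬ (x : ℕ) < n} = n := by
      rw [Fintype.card_subtype]; exact Eq5Aux.cardU n
    rw [hcc] at h
    refine Eq.trans ?_ h
    congr 1
    ext π
    simp only [Finset.mem_filter, Finset.mem_univ, true_and]
  have hcount : ∀ i : Fin (2*n), ¬ (i : ℕ) < n →
      (((Finset.univ : Finset (Equiv.Perm (Fin (2 * n)))).filter
        (fun π => ∀ i : Fin (2 * n), (i : ℕ) < n → π i = i)).filter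
          (fun π => ¬ (i : ℕ) < n ∧ π i = i)).card = (n - 1).factorial := by
    intro i hi
    have heq : ((Finset.univ : Finset (Equiv.Perm (Fin (2 * n)))).filter
        (fun π => ∀ i : Fin (2 * n), (i : ℕ) < n → π i = i)).filter
          (fun π => ¬ (i : ℕ) < n ∧ π i = i)
        = (Finset.univ : Finset (Equiv.Perm (Fin (2 * n)))).filter
            (fun π => ∀ x : Fin (2*n), ((x : ℕ) < n ∨ x = i) → π x = x) := by
      rw [Finset.filter_filter]
      apply Finset.filter_congr
      intro π _
      constructor
      · rintro ⟨hfixlow, -, hfixi⟩ x hx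
        rcases hx with hx | rfl
        · exact hfixlow x hx
        · exact hfixi
      · intro h
        exact ⟨fun x hx => h x (Or.inl hx), hi, h i (Or.inr rfl)⟩
    rw [heq]
    have h := Eq5Aux.card_perm_fixing (fun x : Fin (2*n) => (x : ℕ) < n ∨ x = i)
    have hcc : Fintype.card {x : Fin (2*n) // ¬ ((x : ℕ) < n ∨ x = i)} = n - 1 := by
      rw [Fintype.card_subtype]
      have hfe : (Finset.univ : Finset (Fin (2*n))).filter
          (fun x : Fin (2*n) => ¬ ((x : ℕ) < n ∨ x = i))
          = ((Finset.univ : Finset (Fin (2*n))).filter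
              (fun x : Fin (2*n) => ¬ (x : ℕ) < n)).erase i := by
        ext x
        simp only [Finset.mem_filter, Finset.mem_univ, true_and, Finset.mem_erase, not_or]
        tauto
      rw [hfe, Finset.card_erase_of_mem (by simp only [Finset.mem_filter, Finset.mem_univ, true_and]; exact hi), Eq5Aux.cardU n]
    rw [hcc] at h
    refine Eq.trans ?_ h
    congr 1
    ext π
    simp only [Finset.mem_filter, Finset.mem_univ, true_and]
  have hS : ∑ π ∈ (Finset.univ : Finset (Equiv.Perm (Fin (2 * n)))).filter
        (fun π => ∀ i : Fin (2 * n), (i : ℕ) < n → π i = i),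
      ((Finset.univ : Finset (Fin (2*n))).filter
        (fun i : Fin (2*n) => ¬ (i : ℕ) < n ∧ π i = i)).card = n.factorial := by
    have hswap : ∑ π ∈ (Finset.univ : Finset (Equiv.Perm (Fin (2 * n)))).filter
          (fun π => ∀ i : Fin (2 * n), (i : ℕ) < n → π i = i),
        ((Finset.univ : Finset (Fin (2*n))).filter
          (fun i : Fin (2*n) => ¬ (i : ℕ) < n ∧ π i = i)).card
        = ∑ i : Fin (2*n),
            (((Finset.univ : Finset (Equiv.Perm (Fin (2 * n)))).filter
              (fun π => ∀ i : Fin (2 * n), (i : ℕ) < n → π i = i)).filter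
                (fun π => ¬ (i : ℕ) < n ∧ π i = i)).card := by
      simp_rw [Finset.card_filter]
      rw [Finset.sum_comm]
    rw [hswap]
    rw [← Finset.sum_filter_add_sum_filter_not Finset.univ
      (fun i : Fin (2*n) => ¬ (i : ℕ) < n)]
    have hz : ∑ i ∈ Finset.univ.filter (fun i : Fin (2*n) => ¬ ¬ (i : ℕ) < n),
        (((Finset.univ : Finset (Equiv.Perm (Fin (2 * n)))).filter
          (fun π => ∀ i : Fin (2 * n), (i : ℕ) < n → π i = i)).filter
            (fun π => ¬ (i : ℕ) < n ∧ π i = i)).card = 0 := by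
      apply Finset.sum_eq_zero
      intro i hi
      rw [Finset.mem_filter, not_not] at hi
      rw [Finset.card_eq_zero]
      apply Finset.filter_false_of_mem
      intro π _
      tauto
    rw [hz, add_zero]
    rw [Finset.sum_congr rfl (fun i hi => hcount i (Finset.mem_filter.mp hi).2),
      Finset.sum_const, Eq5Aux.cardU n, smul_eq_mul]
    exact Nat.mul_factorial_pred (by omega)
  rw [hPfcard, ← Nat.cast_sum, hS]
  push_cast
  ring
end
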